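/- arXiv:2312.10500 — 5 statements merged into one kernel-verified Lean document; each statement's English description precedes it below -/
import Mathlib

section
/- Let α̂ ∈ ℝ^n and A = S_n·α̂ be its orbit under coordinate permutations. Let β̂₁,…,β̂_m ∈ ℝ^n lie in the interior of conv(A ∪ {0}) and lie in pairwise distinct S_n-orbits, and set B_i = S_n·β̂_i. Let f(x) = c·Σ_{α∈A} exp(⟨α,x⟩) − Σ_{i=1}^m d_i·Σ_{β∈B_i} exp(⟨β,x⟩) + w with c > 0, d_i > 0 for all i, and w ∈ ℝ. Then f* = f^SAGE, where f* = inf_{x∈ℝ^n} f(x) and f^SAGE = sup{λ ∈ ℝ : f − λ ∈ C_SAGE(T)} with T = A ∪ B₁ ∪ … ∪ B_m ∪ {0}. -/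
open Finset

noncomputable def dotp {n : ℕ} (a x : Fin n → ℝ) : ℝ := ∑ i, a i * x i

noncomputable def monom {n : ℕ} (α : Fin n → ℕ) (x : Fin n → ℝ) : ℝ := ∏ i, x i ^ α i

/-- The AGE cone `C_AGE(A, β)`: nonnegative signomials supported on `A ∪ {β}` whose
coefficients on `A` are nonnegative (only the `β`-term may be negative). -/
def IsAGE {n : ℕ} (A : Finset (Fin n → ℝ)) (β : Fin n → ℝ) (f : (Fin n → ℝ) → ℝ) : Prop :=
  ∃ c : (Fin n → ℝ) → ℝ, (∀ α ∈ A, 0 ≤ c α) ∧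
    (∀ x, f x = (∑ α ∈ A, c α * Real.exp (dotp α x)) + c β * Real.exp (dotp β x)) ∧
    (∀ x, 0 ≤ f x)

/-- The SAGE cone `C_SAGE(T) = Σ_{β ∈ T} C_AGE(T \ {β}, β)`. -/
def IsSAGE {n : ℕ} (T : Finset (Fin n → ℝ)) (f : (Fin n → ℝ) → ℝ) : Prop :=
  ∃ g : (Fin n → ℝ) → ((Fin n → ℝ) → ℝ),
    (∀ β ∈ T, IsAGE (T.erase β) β (g β)) ∧ (∀ x, f x = ∑ β ∈ T, g β x)

/-- `f^SAGE = sup {l : f - l ∈ C_SAGE(T ∪ {0})}`, as an extended real number. -/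
noncomputable def sageBound {n : ℕ} (T : Finset (Fin n → ℝ)) (f : (Fin n → ℝ) → ℝ) : EReal :=
  sSup ((fun l : ℝ => (l : EReal)) '' {l : ℝ | IsSAGE (insert 0 T) (fun x => f x - l)})

/-- `f* = inf_{x ∈ ℝⁿ} f(x)`, as an extended real number. -/
noncomputable def infStar {n : ℕ} (f : (Fin n → ℝ) → ℝ) : EReal := ⨅ x, (f x : EReal)

/-- The AG cone `C_AG(A, β)` of nonnegative polynomials with nonnegative coefficients
on `A`, vanishing coefficients on non-even points of `A`, and possibly negative
coefficient on `β`. -/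
def IsAG {n : ℕ} (A : Finset (Fin n → ℕ)) (β : Fin n → ℕ) (f : (Fin n → ℝ) → ℝ) : Prop :=
  ∃ c : (Fin n → ℕ) → ℝ, (∀ α ∈ A, 0 ≤ c α) ∧
    (∀ γ ∈ A, (¬ ∀ i, Even (γ i)) → c γ = 0) ∧
    (∀ x, f x = (∑ α ∈ A, c α * monom α x) + c β * monom β x) ∧
    (∀ x, 0 ≤ f x)

/-- The SONC cone `C_SONC(T) = Σ_{β ∈ T} C_AG(T \ {β}, β)`. -/
def IsSONC {n : ℕ} (T : Finset (Fin n → ℕ)) (f : (Fin n → ℝ) → ℝ) : Prop :=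
  ∃ g : (Fin n → ℕ) → ((Fin n → ℝ) → ℝ),
    (∀ β ∈ T, IsAG (T.erase β) β (g β)) ∧ (∀ x, f x = ∑ β ∈ T, g β x)

/-- `f^SONC = sup {l : f - l ∈ C_SONC(T ∪ {0})}`, as an extended real number. -/
noncomputable def soncBound {n : ℕ} (T : Finset (Fin n → ℕ)) (f : (Fin n → ℝ) → ℝ) : EReal :=
  sSup ((fun l : ℝ => (l : EReal)) '' {l : ℝ | IsSONC (insert 0 T) (fun x => f x - l)})

/-- Action of a permutation on a real vector: `(σ·x) i = x (σ⁻¹ i)`. -/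
def permAct {n : ℕ} (σ : Equiv.Perm (Fin n)) (x : Fin n → ℝ) : Fin n → ℝ := fun i => x (σ⁻¹ i)

/-- Action of a permutation on an exponent vector. -/
def permActN {m : ℕ} (σ : Equiv.Perm (Fin m)) (x : Fin m → ℕ) : Fin m → ℕ := fun i => x (σ⁻¹ i)

/-- The orbit of a vector under the symmetric group, as a finite set. -/
noncomputable def orbitF {n : ℕ} (v : Fin n → ℝ) : Finset (Fin n → ℝ) :=
  Finset.univ.image (fun σ : Equiv.Perm (Fin n) => permAct σ v)

/-- The monomial mean `m_α^{(m)}(x) = (1/m!) Σ_{σ ∈ S_m} x^{σ(α)}`. -/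
noncomputable def mmean {m : ℕ} (α : Fin m → ℕ) (x : Fin m → ℝ) : ℝ :=
  (1/(m.factorial : ℝ)) * ∑ σ : Equiv.Perm (Fin m), monom (permActN σ α) x

section prelim
variable {n : ℕ}

lemma permAct_mul (σ τ : Equiv.Perm (Fin n)) (x : Fin n → ℝ) :
    permAct σ (permAct τ x) = permAct (σ * τ) x := by
  funext i; simp [permAct, Equiv.Perm.mul_apply]

lemma permAct_one (x : Fin n → ℝ) : permAct 1 x = x := by funext i; simp [permAct]

lemma mem_orbitF {v β : Fin n → ℝ} : β ∈ orbitF v ↔ ∃ σ, permAct σ v = β := by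
  simp [orbitF]

lemma self_mem_orbitF (v : Fin n → ℝ) : v ∈ orbitF v :=
  mem_orbitF.2 ⟨1, permAct_one v⟩

lemma permAct_mem_orbitF {v β : Fin n → ℝ} (h : β ∈ orbitF v) (τ : Equiv.Perm (Fin n)) :
    permAct τ β ∈ orbitF v := by
  obtain ⟨σ, rfl⟩ := mem_orbitF.1 h
  exact mem_orbitF.2 ⟨τ * σ, (permAct_mul τ σ v).symm⟩

lemma orbitF_eq_of_mem {v β : Fin n → ℝ} (h : β ∈ orbitF v) : orbitF β = orbitF v := by
  obtain ⟨σ, rfl⟩ := mem_orbitF.1 h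
  apply Finset.Subset.antisymm
  · intro γ hγ
    obtain ⟨τ, rfl⟩ := mem_orbitF.1 hγ
    rw [permAct_mul]; exact mem_orbitF.2 ⟨_, rfl⟩
  · intro γ hγ
    obtain ⟨τ, rfl⟩ := mem_orbitF.1 hγ
    refine mem_orbitF.2 ⟨τ * σ⁻¹, ?_⟩
    rw [permAct_mul, mul_assoc, inv_mul_cancel, mul_one]

lemma sum_coords_permAct (σ : Equiv.Perm (Fin n)) (v : Fin n → ℝ) :
    ∑ j, permAct σ v j = ∑ j, v j :=
  Fintype.sum_equiv σ⁻¹ _ _ (fun j => rfl)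

lemma sum_coords_of_mem_orbitF {v β : Fin n → ℝ} (h : β ∈ orbitF v) :
    ∑ j, β j = ∑ j, v j := by
  obtain ⟨σ, rfl⟩ := mem_orbitF.1 h; exact sum_coords_permAct σ v

lemma dotp_const (a : Fin n → ℝ) (r : ℝ) : dotp a (fun _ => r) = (∑ j, a j) * r := by
  simp [dotp, Finset.sum_mul]

lemma dotp_sum_left {s : Finset (Fin n → ℝ)} (cw : (Fin n → ℝ) → ℝ) (x : Fin n → ℝ) :
    dotp (∑ γ ∈ s, cw γ • γ) x = ∑ γ ∈ s, cw γ * dotp γ x := by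
  simp only [dotp, Finset.sum_apply, Pi.smul_apply, smul_eq_mul, Finset.mul_sum]
  rw [Finset.sum_comm]
  exact Finset.sum_congr rfl fun γ _ => by rw [Finset.sum_mul]; exact Finset.sum_congr rfl fun i _ => by ring

/-- reindexing a sum over an orbit by the action of `τ`. -/
lemma sum_orbit_reindex {M : Type*} [AddCommMonoid M] {v : Fin n → ℝ}
    (τ : Equiv.Perm (Fin n)) (F : (Fin n → ℝ) → M) :
    ∑ α ∈ orbitF v, F (permAct τ α) = ∑ α ∈ orbitF v, F α := by
  apply Finset.sum_nbij' (i := fun α => permAct τ α) (j := fun α => permAct τ⁻¹ α)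
  · intro a ha; exact permAct_mem_orbitF ha τ
  · intro a ha; exact permAct_mem_orbitF ha τ⁻¹
  · intro a _; rw [permAct_mul, inv_mul_cancel, permAct_one]
  · intro a _; rw [permAct_mul, mul_inv_cancel, permAct_one]
  · intro a _; rfl

noncomputable def Nst {n : ℕ} (v : Fin n → ℝ) : ℕ :=
  (Finset.univ.filter fun σ : Equiv.Perm (Fin n) => permAct σ v = v).card

lemma fiber_card {v β : Fin n → ℝ} (hβ : β ∈ orbitF v) :
    (Finset.univ.filter fun σ : Equiv.Perm (Fin n) => permAct σ v = β).card = Nst v := by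
  obtain ⟨τ, rfl⟩ := mem_orbitF.1 hβ
  apply Finset.card_nbij' (i := fun σ => τ⁻¹ * σ) (j := fun σ => τ * σ)
  · intro σ hσ
    simp only [Finset.mem_coe, Finset.mem_filter, Finset.mem_univ, true_and] at hσ ⊢
    rw [← permAct_mul, hσ, permAct_mul, inv_mul_cancel, permAct_one]
  · intro σ hσ
    simp only [Finset.mem_coe, Finset.mem_filter, Finset.mem_univ, true_and] at hσ ⊢
    rw [← permAct_mul, hσ]
  · intro a _; simp [← mul_assoc]
  · intro a _; simp [← mul_assoc]

lemma Nst_pos (v : Fin n → ℝ) : 0 < Nst v := by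
  apply Finset.card_pos.2
  exact ⟨1, by simp [Finset.mem_filter, permAct_one]⟩

lemma orbit_stab (v : Fin n → ℝ) :
    (orbitF v).card * Nst v = (Finset.univ : Finset (Equiv.Perm (Fin n))).card := by
  rw [Finset.card_eq_sum_card_fiberwise
    (f := fun σ : Equiv.Perm (Fin n) => permAct σ v) (t := orbitF v)
    (fun σ _ => mem_orbitF.2 ⟨σ, rfl⟩)]
  rw [Finset.sum_congr rfl (fun β hβ => fiber_card hβ), Finset.sum_const, smul_eq_mul]

lemma Nst_eq_of_mem {v α : Fin n → ℝ} (h : α ∈ orbitF v) : Nst α = Nst v := by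
  have h1 := orbit_stab α
  rw [orbitF_eq_of_mem h, ← orbit_stab v] at h1
  have hpos : 0 < (orbitF v).card := Finset.card_pos.2 ⟨v, self_mem_orbitF v⟩
  exact Nat.eq_of_mul_eq_mul_left hpos h1

end prelim

section theta
variable {n : ℕ}

lemma permAct_sum_smul {s : Finset (Fin n → ℝ)} (θ : (Fin n → ℝ) → ℝ)
    (σ : Equiv.Perm (Fin n)) :
    ∑ α ∈ s, θ α • permAct σ α = permAct σ (∑ α ∈ s, θ α • α) := by
  funext j
  simp [permAct, Finset.sum_apply]

lemma permAct_inv_permAct (σ : Equiv.Perm (Fin n)) (α : Fin n → ℝ) :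
    permAct σ⁻¹ (permAct σ α) = α := by
  rw [permAct_mul, inv_mul_cancel, permAct_one]

/-- symmetrized weights for `β` in the orbit of `v`, built from weights `θ` for `v`. -/
noncomputable def Theta {n : ℕ} (θ : (Fin n → ℝ) → ℝ) (v β α : Fin n → ℝ) : ℝ :=
  (Nst v : ℝ)⁻¹ *
    ∑ σ ∈ Finset.univ.filter (fun σ : Equiv.Perm (Fin n) => permAct σ v = β),
      θ (permAct σ⁻¹ α)

variable {θ : (Fin n → ℝ) → ℝ} {ah v β : Fin n → ℝ}

lemma Theta_nonneg (hθ : ∀ γ ∈ orbitF ah, 0 ≤ θ γ) {β α : Fin n → ℝ} (hα : α ∈ orbitF ah) :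
    0 ≤ Theta θ v β α := by
  apply mul_nonneg (by positivity)
  apply Finset.sum_nonneg
  intro σ _
  exact hθ _ (permAct_mem_orbitF hα σ⁻¹)

lemma Theta_sum (hβ : β ∈ orbitF v) :
    ∑ α ∈ orbitF ah, Theta θ v β α = ∑ γ ∈ orbitF ah, θ γ := by
  unfold Theta
  rw [← Finset.mul_sum, Finset.sum_comm]
  have h1 : ∀ σ ∈ Finset.univ.filter (fun σ : Equiv.Perm (Fin n) => permAct σ v = β),
      ∑ α ∈ orbitF ah, θ (permAct σ⁻¹ α) = ∑ γ ∈ orbitF ah, θ γ := by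
    intro σ _; exact sum_orbit_reindex σ⁻¹ θ
  rw [Finset.sum_congr rfl h1, Finset.sum_const, fiber_card hβ, nsmul_eq_mul, ← mul_assoc,
    inv_mul_cancel₀ (by exact_mod_cast (Nst_pos v).ne'), one_mul]

lemma Theta_bar (hβ : β ∈ orbitF v) (hbar : ∑ γ ∈ orbitF ah, θ γ • γ = v) :
    ∑ α ∈ orbitF ah, Theta θ v β α • α = β := by
  have key : ∀ σ ∈ Finset.univ.filter (fun σ : Equiv.Perm (Fin n) => permAct σ v = β),
      ∑ α ∈ orbitF ah, θ (permAct σ⁻¹ α) • α = β := by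
    intro σ hσ
    simp only [Finset.mem_filter, Finset.mem_univ, true_and] at hσ
    have h2 := sum_orbit_reindex (v := ah) σ (fun α => θ (permAct σ⁻¹ α) • α)
    simp only [permAct_inv_permAct] at h2
    rw [← h2, permAct_sum_smul, hbar, hσ]
  calc ∑ α ∈ orbitF ah, Theta θ v β α • α
      = (Nst v : ℝ)⁻¹ • ∑ σ ∈ Finset.univ.filter
          (fun σ : Equiv.Perm (Fin n) => permAct σ v = β),
          ∑ α ∈ orbitF ah, θ (permAct σ⁻¹ α) • α := by
        rw [Finset.smul_sum]
        rw [Finset.sum_congr rfl (fun σ _ => Finset.smul_sum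
          (r := (Nst v : ℝ)⁻¹) (s := orbitF ah) (f := fun α => θ (permAct σ⁻¹ α) • α))]
        rw [Finset.sum_comm]
        apply Finset.sum_congr rfl; intro α _
        unfold Theta
        rw [Finset.mul_sum, Finset.sum_smul]
        apply Finset.sum_congr rfl; intro σ _
        rw [smul_smul]
    _ = β := by
        rw [Finset.sum_congr rfl key, Finset.sum_const, fiber_card hβ,
          ← Nat.cast_smul_eq_nsmul ℝ, smul_smul,
          inv_mul_cancel₀ (by exact_mod_cast (Nst_pos v).ne'), one_smul]

lemma Theta_colsum {α : Fin n → ℝ} (hα : α ∈ orbitF ah) :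
    ∑ β ∈ orbitF v, Theta θ v β α
      = (Nst ah : ℝ) / (Nst v : ℝ) * ∑ γ ∈ orbitF ah, θ γ := by
  unfold Theta
  rw [← Finset.mul_sum,
    Finset.sum_fiberwise_of_maps_to (g := fun σ : Equiv.Perm (Fin n) => permAct σ v)
      (fun σ _ => mem_orbitF.2 ⟨σ, rfl⟩) (fun σ => θ (permAct σ⁻¹ α))]
  have h1 : ∑ σ : Equiv.Perm (Fin n), θ (permAct σ⁻¹ α)
      = ∑ σ : Equiv.Perm (Fin n), θ (permAct σ α) :=
    Fintype.sum_equiv (Equiv.inv (Equiv.Perm (Fin n))) _ _ (fun σ => rfl)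
  rw [h1, ← Finset.sum_fiberwise_of_maps_to (g := fun σ : Equiv.Perm (Fin n) => permAct σ α)
      (t := orbitF α) (fun σ _ => mem_orbitF.2 ⟨σ, rfl⟩) (fun σ => θ (permAct σ α))]
  have h2 : ∀ α' ∈ orbitF α,
      ∑ σ ∈ Finset.univ.filter (fun σ : Equiv.Perm (Fin n) => permAct σ α = α'),
        θ (permAct σ α) = (Nst ah : ℝ) * θ α' := by
    intro α' hα'
    rw [Finset.sum_congr rfl (fun σ hσ => by
      simp only [Finset.mem_filter, Finset.mem_univ, true_and] at hσ; rw [hσ]),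
      Finset.sum_const, fiber_card hα', Nst_eq_of_mem hα, nsmul_eq_mul]
  rw [Finset.sum_congr rfl h2, ← Finset.mul_sum, orbitF_eq_of_mem hα]
  ring

end theta

section geom
variable {n : ℕ}

lemma add_const_mem_of_interior {K : Set (Fin n → ℝ)} {x : Fin n → ℝ}
    (hx : x ∈ interior K) : ∃ ε > 0, ∀ r : ℝ, |r| ≤ ε → (fun j => x j + r) ∈ K := by
  obtain ⟨ε, hε, hball⟩ := Metric.mem_nhds_iff.1 (mem_interior_iff_mem_nhds.1 hx)
  refine ⟨ε/2, by positivity, fun r hr => ?_⟩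
  apply hball
  rw [Metric.mem_ball]
  have h1 : dist (fun j => x j + r) x ≤ ε/2 := by
    apply dist_pi_le_iff (by positivity) |>.2
    intro i
    rw [Real.dist_eq]
    simpa using hr
  linarith

lemma sum_lt_of_interior {K : Set (Fin n → ℝ)} {x : Fin n → ℝ} (hn : n ≠ 0)
    (hx : x ∈ interior K) {b : ℝ} (hK : ∀ z ∈ K, ∑ j, z j ≤ b) : ∑ j, x j < b := by
  obtain ⟨ε, hε, hmem⟩ := add_const_mem_of_interior hx
  have h1 := hK _ (hmem ε (by rw [abs_of_pos hε]))
  have h2 : ∑ j : Fin n, (x j + ε) = (∑ j, x j) + n * ε := by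
    rw [Finset.sum_add_distrib, Finset.sum_const, Finset.card_univ, Fintype.card_fin,
      nsmul_eq_mul]
  rw [h2] at h1
  have hn' : (1:ℝ) ≤ n := by exact_mod_cast Nat.one_le_iff_ne_zero.2 hn
  nlinarith

lemma lt_sum_of_interior {K : Set (Fin n → ℝ)} {x : Fin n → ℝ} (hn : n ≠ 0)
    (hx : x ∈ interior K) {b : ℝ} (hK : ∀ z ∈ K, b ≤ ∑ j, z j) : b < ∑ j, x j := by
  obtain ⟨ε, hε, hmem⟩ := add_const_mem_of_interior hx
  have h1 := hK _ (hmem (-ε) (by rw [abs_neg, abs_of_pos hε]))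
  have h2 : ∑ j : Fin n, (x j + -ε) = (∑ j, x j) - n * ε := by
    rw [Finset.sum_add_distrib, Finset.sum_const, Finset.card_univ, Fintype.card_fin,
      nsmul_eq_mul]
    ring
  rw [h2] at h1
  have hn' : (1:ℝ) ≤ n := by exact_mod_cast Nat.one_le_iff_ne_zero.2 hn
  nlinarith

lemma convex_sum_le (b : ℝ) : Convex ℝ {z : Fin n → ℝ | ∑ j, z j ≤ b} := by
  apply convex_halfSpace_le
  exact ⟨fun y z => by simp [Finset.sum_add_distrib], fun r z => by simp [Finset.mul_sum]⟩

lemma convex_le_sum (b : ℝ) : Convex ℝ {z : Fin n → ℝ | b ≤ ∑ j, z j} := by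
  apply convex_halfSpace_ge
  exact ⟨fun y z => by simp [Finset.sum_add_distrib], fun r z => by simp [Finset.mul_sum]⟩

lemma jensen_exp {ι : Type*} {J : Finset ι} (ω ζ : ι → ℝ) (h0 : ∀ γ ∈ J, 0 ≤ ω γ)
    (h1 : ∑ γ ∈ J, ω γ = 1) :
    Real.exp (∑ γ ∈ J, ω γ * ζ γ) ≤ ∑ γ ∈ J, ω γ * Real.exp (ζ γ) := by
  have := convexOn_exp.map_sum_le h0 h1 (fun _ _ => Set.mem_univ _) (p := ζ)
  simpa [smul_eq_mul] using this

/-- the core AM/GM bound for a single shifted AGE piece. -/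
lemma age_core {A : Finset (Fin n → ℝ)} (h0A : (0 : Fin n → ℝ) ∉ A)
    {Θf : (Fin n → ℝ) → ℝ} (hpos : ∀ α ∈ A, 0 ≤ Θf α) {t : ℝ} (q : ℝ)
    (hsum : ∑ α ∈ A, Θf α = t) (ht1 : t ≤ 1)
    {β : Fin n → ℝ} (hbar : ∑ α ∈ A, Θf α • α = β) (x : Fin n → ℝ) :
    Real.exp (dotp β x)
      ≤ (∑ α ∈ A, Θf α * (Real.exp (t * q - q) * Real.exp (dotp α x)))
        + (1 - t) * Real.exp (t * q) := by
  classical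
  set ω : (Fin n → ℝ) → ℝ := fun γ => if γ = 0 then 1 - t else Θf γ with hω
  set ζ : (Fin n → ℝ) → ℝ := fun γ => if γ = 0 then t * q else dotp γ x + (t * q - q) with hζ
  have hω0 : ω 0 = 1 - t := by simp [hω]
  have hζ0 : ζ 0 = t * q := by simp [hζ]
  have hne : ∀ γ ∈ A, γ ≠ 0 := fun γ hγ h => h0A (h ▸ hγ)
  have hωA : ∀ γ ∈ A, ω γ = Θf γ := fun γ hγ => by
    simp only [hω]; exact if_neg (hne γ hγ)
  have hζA : ∀ γ ∈ A, ζ γ = dotp γ x + (t * q - q) := fun γ hγ => by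
    simp only [hζ]; exact if_neg (hne γ hγ)
  have h0 : ∀ γ ∈ insert 0 A, 0 ≤ ω γ := by
    intro γ hγ
    rcases Finset.mem_insert.1 hγ with rfl | hγ
    · rw [hω0]; linarith
    · rw [hωA γ hγ]; exact hpos γ hγ
  have h1 : ∑ γ ∈ insert 0 A, ω γ = 1 := by
    rw [Finset.sum_insert h0A, hω0, Finset.sum_congr rfl hωA, hsum]; ring
  have hj := jensen_exp ω ζ h0 h1
  have hdot : ∑ α ∈ A, Θf α * dotp α x = dotp β x := by
    rw [← hbar, dotp_sum_left]
  have hLHS : ∑ γ ∈ insert 0 A, ω γ * ζ γ = dotp β x := by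
    rw [Finset.sum_insert h0A, hω0, hζ0,
      Finset.sum_congr rfl (fun γ hγ => by rw [hωA γ hγ, hζA γ hγ])]
    have e1 : ∑ γ ∈ A, Θf γ * (dotp γ x + (t * q - q))
        = (∑ γ ∈ A, Θf γ * dotp γ x) + (∑ γ ∈ A, Θf γ) * (t * q - q) := by
      rw [Finset.sum_mul, ← Finset.sum_add_distrib]
      exact Finset.sum_congr rfl (fun γ _ => by ring)
    rw [e1, hdot, hsum]
    ring
  have hRHS : ∑ γ ∈ insert 0 A, ω γ * Real.exp (ζ γ)
      = (∑ α ∈ A, Θf α * (Real.exp (t * q - q) * Real.exp (dotp α x)))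
        + (1 - t) * Real.exp (t * q) := by
    rw [Finset.sum_insert h0A, hω0, hζ0,
      Finset.sum_congr rfl (fun γ hγ => by
        rw [hωA γ hγ, hζA γ hγ, Real.exp_add, mul_comm (Real.exp (dotp γ x)), ← mul_assoc])]
    rw [Finset.sum_congr rfl (fun γ _ => (mul_assoc _ _ _))]
    ring
  rw [hLHS, hRHS] at hj
  exact hj

end geom

section crit

lemma exists_crit {m : ℕ} (hm : 0 < m) (C : ℝ) (hC : 0 < C) (D t : Fin m → ℝ)
    (hD : ∀ i, 0 < D i) (ht0 : ∀ i, 0 < t i) (ht1 : ∀ i, t i < 1) :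
    ∃ q : ℝ, C * Real.exp q = ∑ i, D i * t i * Real.exp (t i * q) := by
  haveI : Nonempty (Fin m) := ⟨⟨0, hm⟩⟩
  set g : ℝ → ℝ := fun q => C * Real.exp q - ∑ i, D i * t i * Real.exp (t i * q) with hg
  have hcont : Continuous g := by
    apply Continuous.sub
    · exact continuous_const.mul Real.continuous_exp
    · apply continuous_finset_sum
      intro i _
      exact continuous_const.mul ((Real.continuous_exp).comp (continuous_const.mul continuous_id))
  obtain ⟨i₀⟩ := ‹Nonempty (Fin m)›
  have hD0 := hD i₀
  have ht00 := ht0 i₀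
  have ht10 := ht1 i₀
  have hQ0 : 0 < D i₀ * t i₀ / C := by positivity
  -- negative point
  set a : ℝ := min ((Real.log (D i₀ * t i₀ / C) - 1) / (1 - t i₀)) 0 with ha
  have hga : g a < 0 := by
    have h1 : (1 - t i₀) * a ≤ Real.log (D i₀ * t i₀ / C) - 1 := by
      have hle : a ≤ (Real.log (D i₀ * t i₀ / C) - 1) / (1 - t i₀) := min_le_left _ _
      have h10 : (0:ℝ) < 1 - t i₀ := by linarith
      calc (1 - t i₀) * a ≤ (1 - t i₀) * ((Real.log (D i₀ * t i₀ / C) - 1) / (1 - t i₀)) :=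
            mul_le_mul_of_nonneg_left hle (le_of_lt h10)
        _ = Real.log (D i₀ * t i₀ / C) - 1 := by field_simp
    have h2 : Real.exp ((1 - t i₀) * a) < D i₀ * t i₀ / C := by
      have he1 : Real.exp (-1 : ℝ) < 1 := by rw [Real.exp_lt_one_iff]; norm_num
      calc Real.exp ((1 - t i₀) * a) ≤ Real.exp (Real.log (D i₀ * t i₀ / C) - 1) :=
            Real.exp_le_exp.2 h1
        _ = (D i₀ * t i₀ / C) * Real.exp (-1 : ℝ) := by
            rw [Real.exp_sub, Real.exp_log hQ0]
            rw [Real.exp_neg]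
            field_simp
        _ < D i₀ * t i₀ / C := by nlinarith
    have h3 : C * Real.exp a < D i₀ * t i₀ * Real.exp (t i₀ * a) := by
      have hsplit : Real.exp a = Real.exp (t i₀ * a) * Real.exp ((1 - t i₀) * a) := by
        rw [← Real.exp_add]; ring_nf
      have h2' : C * Real.exp ((1 - t i₀) * a) < D i₀ * t i₀ := by
        have := mul_lt_mul_of_pos_left h2 hC
        have hcan : C * (D i₀ * t i₀ / C) = D i₀ * t i₀ := by field_simp
        linarith [this, hcan ▸ this]
      calc C * Real.exp a
          = (C * Real.exp ((1 - t i₀) * a)) * Real.exp (t i₀ * a) := by rw [hsplit]; ring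
        _ < D i₀ * t i₀ * Real.exp (t i₀ * a) :=
            mul_lt_mul_of_pos_right h2' (Real.exp_pos _)
    have h4 : D i₀ * t i₀ * Real.exp (t i₀ * a) ≤ ∑ i, D i * t i * Real.exp (t i * a) := by
      apply Finset.single_le_sum (f := fun i => D i * t i * Real.exp (t i * a))
        (fun i _ => by have := hD i; have := ht0 i; positivity) (Finset.mem_univ i₀)
    simp only [hg]
    linarith
  -- positive point
  set tmax : ℝ := Finset.univ.sup' Finset.univ_nonempty t with htmax
  have htm1 : tmax < 1 := by
    rw [htmax, Finset.sup'_lt_iff]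
    intro i _; exact ht1 i
  have htmle : ∀ i, t i ≤ tmax := fun i => Finset.le_sup' t (Finset.mem_univ i)
  set S : ℝ := ∑ i, D i * t i with hS
  have hSpos : 0 < S := by
    rw [hS]
    apply Finset.sum_pos (fun i _ => by have := hD i; have := ht0 i; positivity)
      Finset.univ_nonempty
  have hSC : 0 < S / C := by positivity
  set b : ℝ := max ((Real.log (S / C) + 1) / (1 - tmax)) 0 with hb
  have hgb : 0 < g b := by
    have hb0 : 0 ≤ b := le_max_right _ _
    have h10 : (0:ℝ) < 1 - tmax := by linarith
    have h1 : Real.log (S / C) + 1 ≤ (1 - tmax) * b := by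
      have hle : (Real.log (S / C) + 1) / (1 - tmax) ≤ b := le_max_left _ _
      calc Real.log (S / C) + 1
          = (1 - tmax) * ((Real.log (S / C) + 1) / (1 - tmax)) := by field_simp
        _ ≤ (1 - tmax) * b := mul_le_mul_of_nonneg_left hle (le_of_lt h10)
    have h2 : S / C < Real.exp ((1 - tmax) * b) := by
      have he1 : (1:ℝ) < Real.exp 1 := by
        have := Real.add_one_le_exp (1:ℝ); linarith
      calc S / C < (S / C) * Real.exp 1 := by nlinarith
        _ = Real.exp (Real.log (S / C) + 1) := by
            rw [Real.exp_add, Real.exp_log hSC]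
        _ ≤ Real.exp ((1 - tmax) * b) := Real.exp_le_exp.2 h1
    have h3 : ∑ i, D i * t i * Real.exp (t i * b) ≤ S * Real.exp (tmax * b) := by
      rw [hS, Finset.sum_mul]
      apply Finset.sum_le_sum
      intro i _
      apply mul_le_mul_of_nonneg_left _ (by have := hD i; have := ht0 i; positivity)
      exact Real.exp_le_exp.2 (mul_le_mul_of_nonneg_right (htmle i) hb0)
    have h4 : S * Real.exp (tmax * b) < C * Real.exp b := by
      have hsplit : Real.exp b = Real.exp (tmax * b) * Real.exp ((1 - tmax) * b) := by
        rw [← Real.exp_add]; ring_nf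
      have h2' : S < C * Real.exp ((1 - tmax) * b) := by
        have := mul_lt_mul_of_pos_left h2 hC
        have hcan : C * (S / C) = S := by field_simp
        linarith [this, hcan ▸ this]
      calc S * Real.exp (tmax * b) < (C * Real.exp ((1 - tmax) * b)) * Real.exp (tmax * b) :=
            mul_lt_mul_of_pos_right h2' (Real.exp_pos _)
        _ = C * Real.exp b := by rw [hsplit]; ring
    simp only [hg]
    linarith
  have hab : a ≤ b := le_trans (min_le_right _ _) (le_max_right _ _)
  have h0mem : (0:ℝ) ∈ Set.Icc (g a) (g b) := ⟨le_of_lt hga, le_of_lt hgb⟩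
  obtain ⟨q, _, hq⟩ := intermediate_value_Icc hab hcont.continuousOn h0mem
  refine ⟨q, ?_⟩
  have : C * Real.exp q - ∑ i, D i * t i * Real.exp (t i * q) = 0 := hq
  linarith

end crit

section keylemma

/-- generic: a nonnegative signomial whose only possibly-negative coefficient is the
constant term is SAGE. -/
lemma sage_of_nonneg_coeffs {n : ℕ} (T : Finset (Fin n → ℝ)) (F : (Fin n → ℝ) → ℝ)
    (cc : (Fin n → ℝ) → ℝ) (hcc : ∀ γ ∈ T, γ ≠ 0 → 0 ≤ cc γ) (K : ℝ)
    (hrep : ∀ x, F x = (∑ γ ∈ T, cc γ * Real.exp (dotp γ x)) + K)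
    (hnn : ∀ x, 0 ≤ F x) : IsSAGE (insert 0 T) F := by
  classical
  have hdotp0 : ∀ x, dotp (0 : Fin n → ℝ) x = 0 := fun x => by simp [dotp]
  set gfun : (Fin n → ℝ) → (Fin n → ℝ) → ℝ := fun β x => if β = 0 then F x else 0 with hgfun
  have hg0 : ∀ x, gfun 0 x = F x := fun x => by simp [hgfun]
  have hgne : ∀ β, β ≠ 0 → ∀ x, gfun β x = 0 := fun β hβ x => by simp [hgfun, hβ]
  set cf : (Fin n → ℝ) → ℝ :=
    fun γ => if γ = 0 then K + (if (0:Fin n → ℝ) ∈ T then cc 0 else 0) else cc γ with hcf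
  have hcf0 : cf 0 = K + (if (0:Fin n → ℝ) ∈ T then cc 0 else 0) := by simp [hcf]
  have hcfne : ∀ γ, γ ≠ 0 → cf γ = cc γ := fun γ hγ => by simp [hcf, hγ]
  refine ⟨gfun, ?_, ?_⟩
  · intro β hβ
    by_cases hβ0 : β = 0
    · subst hβ0
      refine ⟨cf, ?_, ?_, fun x => by rw [hg0]; exact hnn x⟩
      · intro γ hγ
        have hγ0 : γ ≠ 0 := Finset.ne_of_mem_erase hγ
        rw [hcfne γ hγ0]
        exact hcc γ (Finset.mem_of_mem_erase (by rwa [Finset.erase_insert_eq_erase] at hγ)) hγ0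
      · intro x
        rw [hg0, hcf0, hdotp0, Real.exp_zero, mul_one, Finset.erase_insert_eq_erase]
        have he : ∀ γ ∈ T.erase 0, cf γ * Real.exp (dotp γ x) = cc γ * Real.exp (dotp γ x) :=
          fun γ hγ => by rw [hcfne γ (Finset.ne_of_mem_erase hγ)]
        rw [Finset.sum_congr rfl he, hrep]
        by_cases h0T : (0:Fin n → ℝ) ∈ T
        · rw [if_pos h0T]
          have := Finset.sum_erase_add T (fun γ => cc γ * Real.exp (dotp γ x)) h0T
          simp only [hdotp0, Real.exp_zero, mul_one] at this
          linarith
        · rw [if_neg h0T, Finset.erase_eq_of_notMem h0T]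
          ring
    · refine ⟨fun _ => 0, fun _ _ => le_refl 0, fun x => ?_, fun x => ?_⟩
      · rw [hgne β hβ0 x]; simp
      · rw [hgne β hβ0 x]
  · intro x
    rw [Finset.sum_eq_single_of_mem (0 : Fin n → ℝ) (Finset.mem_insert_self _ _)
      (fun β _ hβ0 => hgne β hβ0 x), hg0]

set_option maxHeartbeats 1000000 in
lemma key {n m : ℕ} (ah : Fin n → ℝ) (bh : Fin m → (Fin n → ℝ))
    (hint : ∀ i, bh i ∈ interior (convexHull ℝ
      ((↑(orbitF ah) : Set (Fin n → ℝ)) ∪ {0})))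
    (hdist : ∀ i j, i ≠ j → bh i ∉ orbitF (bh j))
    (c : ℝ) (hc : 0 < c) (d : Fin m → ℝ) (hd : ∀ i, 0 < d i) (w : ℝ)
    (f : (Fin n → ℝ) → ℝ)
    (hf : ∀ x, f x = c * (∑ α ∈ orbitF ah, Real.exp (dotp α x))
      - (∑ i, d i * ∑ β ∈ orbitF (bh i), Real.exp (dotp β x)) + w)
    (l : ℝ) (hl : ∀ x, l < f x) :
    IsSAGE (insert 0 (orbitF ah ∪ Finset.univ.biUnion (fun i => orbitF (bh i))))
      (fun x => f x - l) := by
  classical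
  rcases Nat.eq_zero_or_pos m with hm | hm
  · -- no negative terms
    subst hm
    have hT' : orbitF ah ∪ Finset.univ.biUnion (fun i => orbitF (bh i)) = orbitF ah := by
      simp
    rw [hT']
    refine sage_of_nonneg_coeffs (orbitF ah) _ (fun γ => if γ ∈ orbitF ah then c else 0)
      (fun γ _ _ => by positivity) (w - l) (fun x => ?_) (fun x => by linarith [hl x])
    rw [hf x]
    have hz : (∑ i : Fin 0, d i * ∑ β ∈ orbitF (bh i), Real.exp (dotp β x)) = 0 := by simp
    have hr : ∑ γ ∈ orbitF ah, (if γ ∈ orbitF ah then c else 0) * Real.exp (dotp γ x)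
        = c * ∑ γ ∈ orbitF ah, Real.exp (dotp γ x) := by
      rw [Finset.mul_sum]
      exact Finset.sum_congr rfl fun γ hγ => by rw [if_pos hγ]
    rw [hz, hr]
    ring
  rcases Nat.eq_zero_or_pos n with hn | hn
  · -- n = 0 : everything is constant
    subst hn
    have hx0 : ∀ x : Fin 0 → ℝ, x = 0 := fun x => funext fun i => i.elim0
    refine sage_of_nonneg_coeffs _ _ (fun _ => 0) (fun _ _ _ => le_refl 0) (f 0 - l)
      (fun x => ?_) (fun x => by linarith [hl x])
    rw [hx0 x]
    simp
  -- main case : m ≥ 1, n ≥ 1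
  have hn0 : n ≠ 0 := hn.ne'
  have hint' : ∀ i, bh i ∈ interior (convexHull ℝ
      (↑(insert (0:Fin n → ℝ) (orbitF ah)) : Set (Fin n → ℝ))) := by
    intro i
    have hseteq : ((↑(orbitF ah) : Set (Fin n → ℝ)) ∪ {0})
        = (↑(insert (0:Fin n → ℝ) (orbitF ah)) : Set (Fin n → ℝ)) := by
      rw [Finset.coe_insert]
      ext z; simp [or_comm]
    rw [← hseteq]
    exact hint i
  set s := ∑ j, ah j with hs_def
  have hup : ∀ z ∈ convexHull ℝ (↑(insert (0:Fin n → ℝ) (orbitF ah)) : Set (Fin n → ℝ)),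
      ∑ j, z j ≤ max s 0 := by
    intro z hz
    refine convexHull_min ?_ (convex_sum_le (max s 0)) hz
    intro y hy
    simp only [Finset.coe_insert, Set.mem_insert_iff, Finset.mem_coe] at hy
    rcases hy with rfl | hy
    · simp only [Set.mem_setOf_eq, Pi.zero_apply, Finset.sum_const_zero]
      exact le_max_right s 0
    · rw [Set.mem_setOf_eq, sum_coords_of_mem_orbitF hy]
      exact le_max_left s 0
  have hlo : ∀ z ∈ convexHull ℝ (↑(insert (0:Fin n → ℝ) (orbitF ah)) : Set (Fin n → ℝ)),
      min s 0 ≤ ∑ j, z j := by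
    intro z hz
    refine convexHull_min ?_ (convex_le_sum (min s 0)) hz
    intro y hy
    simp only [Finset.coe_insert, Set.mem_insert_iff, Finset.mem_coe] at hy
    rcases hy with rfl | hy
    · simp only [Set.mem_setOf_eq, Pi.zero_apply, Finset.sum_const_zero]
      exact min_le_right s 0
    · rw [Set.mem_setOf_eq, sum_coords_of_mem_orbitF hy]
      exact min_le_left s 0
  set i₁ : Fin m := ⟨0, hm⟩ with hi₁
  have hs : s ≠ 0 := by
    intro hs0
    have h1 := sum_lt_of_interior hn0 (hint' i₁) hup
    have h2 := lt_sum_of_interior hn0 (hint' i₁) hlo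
    rw [hs0] at h1 h2
    simp only [max_self, min_self] at h1 h2
    linarith
  have hmem : ∀ i, bh i ∈ convexHull ℝ (↑(insert (0:Fin n → ℝ) (orbitF ah)) : Set (Fin n → ℝ)) :=
    fun i => interior_subset (hint' i)
  have hw' := fun i => Finset.mem_convexHull'.1 (hmem i)
  choose θf hθ0 hθ1 hθbar using hw'
  have h0A : (0 : Fin n → ℝ) ∉ orbitF ah := by
    intro h
    have h1 := sum_coords_of_mem_orbitF h
    simp only [Pi.zero_apply, Finset.sum_const_zero] at h1
    exact hs h1.symm
  set t : Fin m → ℝ := fun i => ∑ γ ∈ orbitF ah, θf i γ with ht_def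
  have ht_eq : ∀ i, t i = ∑ γ ∈ orbitF ah, θf i γ := fun i => rfl
  have hθA : ∀ i, θf i 0 + t i = 1 := by
    intro i; have h1 := hθ1 i; rwa [Finset.sum_insert h0A] at h1
  have ht_le1 : ∀ i, t i ≤ 1 := by
    intro i
    have h0 := hθ0 i 0 (Finset.mem_insert_self _ _)
    linarith [hθA i]
  have hθnnA : ∀ i, ∀ γ ∈ orbitF ah, 0 ≤ θf i γ :=
    fun i γ hγ => hθ0 i γ (Finset.mem_insert_of_mem hγ)
  have ht_ge0 : ∀ i, 0 ≤ t i := fun i =>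
    Finset.sum_nonneg fun γ hγ => hθnnA i γ hγ
  have hbarA : ∀ i, ∑ γ ∈ orbitF ah, θf i γ • γ = bh i := by
    intro i; have h1 := hθbar i
    rwa [Finset.sum_insert h0A, smul_zero, zero_add] at h1
  have hsumb : ∀ i, ∑ j, bh i j = t i * s := by
    intro i
    have h1 := congrArg (fun v : Fin n → ℝ => ∑ j, v j) (hbarA i)
    simp only [Finset.sum_apply, Pi.smul_apply, smul_eq_mul] at h1
    rw [Finset.sum_comm] at h1
    have h2 : ∀ γ ∈ orbitF ah, ∑ j, θf i γ * γ j = θf i γ * s := by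
      intro γ hγ
      rw [← Finset.mul_sum, sum_coords_of_mem_orbitF hγ]
    rw [Finset.sum_congr rfl h2, ← Finset.sum_mul, ← ht_eq i] at h1
    exact h1.symm
  have htlt : ∀ i, 0 < t i ∧ t i < 1 := by
    intro i
    have h1 := sum_lt_of_interior hn0 (hint' i) hup
    have h2 := lt_sum_of_interior hn0 (hint' i) hlo
    rw [hsumb i] at h1 h2
    rcases lt_or_gt_of_ne hs with hneg | hpos
    · rw [max_eq_right hneg.le] at h1
      rw [min_eq_left hneg.le] at h2
      constructor
      · nlinarith
      · nlinarith
    · rw [max_eq_left hpos.le] at h1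
      rw [min_eq_right hpos.le] at h2
      constructor
      · nlinarith
      · nlinarith
  have ht0 : ∀ i, 0 < t i := fun i => (htlt i).1
  have ht1 : ∀ i, t i < 1 := fun i => (htlt i).2
  have hAcard : 0 < (orbitF ah).card := Finset.card_pos.2 ⟨ah, self_mem_orbitF ah⟩
  have hBcard : ∀ i, 0 < (orbitF (bh i)).card :=
    fun i => Finset.card_pos.2 ⟨bh i, self_mem_orbitF (bh i)⟩
  obtain ⟨q, hq0⟩ := exists_crit hm (c * ((orbitF ah).card : ℝ))
    (by positivity) (fun i => d i * ((orbitF (bh i)).card : ℝ)) t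
    (fun i => by have := hd i; have := hBcard i; positivity) ht0 ht1
  have hq : c * ((orbitF ah).card : ℝ) * Real.exp q
      = ∑ i, d i * ((orbitF (bh i)).card : ℝ) * t i * Real.exp (t i * q) := hq0
  clear hq0
  have hsumB : ∀ i, ∀ β ∈ orbitF (bh i), ∑ j, β j = t i * s :=
    fun i β hβ => by rw [sum_coords_of_mem_orbitF hβ, hsumb i]
  have h0B : ∀ i, (0 : Fin n → ℝ) ∉ orbitF (bh i) := by
    intro i h
    have h1 := hsumB i 0 h
    simp only [Pi.zero_apply, Finset.sum_const_zero] at h1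
    have h2 : t i * s ≠ 0 := mul_ne_zero (ht0 i).ne' hs
    exact h2 h1.symm
  have hAB : ∀ i, ∀ γ ∈ orbitF ah, γ ∉ orbitF (bh i) := by
    intro i γ hγ hb
    have h1 := hsumB i γ hb
    rw [sum_coords_of_mem_orbitF hγ] at h1
    have h2 : (1 - t i) * s = 0 := by linarith
    rcases mul_eq_zero.1 h2 with h3 | h3
    · have := ht1 i; linarith
    · exact hs h3
  have hBB : ∀ i j, i ≠ j → Disjoint (orbitF (bh i)) (orbitF (bh j)) := by
    intro i j hij
    rw [Finset.disjoint_left]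
    intro γ h1 h2
    refine hdist i j hij ?_
    rw [← orbitF_eq_of_mem h2, orbitF_eq_of_mem h1]
    exact self_mem_orbitF (bh i)
  have h0T : (0:Fin n → ℝ) ∉ orbitF ah ∪ Finset.univ.biUnion (fun i => orbitF (bh i)) := by
    rw [Finset.mem_union]
    push_neg
    constructor
    · exact h0A
    · rw [Finset.mem_biUnion]; push_neg; intro i _; exact h0B i
  -- evaluation on the diagonal
  set pt : Fin n → ℝ := fun _ => q / s with hpt
  have hdotA : ∀ α ∈ orbitF ah, dotp α pt = q := by
    intro α hα
    rw [hpt, dotp_const, sum_coords_of_mem_orbitF hα]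
    field_simp
    rw [hs_def]; ring
  have hdotB : ∀ i, ∀ β ∈ orbitF (bh i), dotp β pt = t i * q := by
    intro i β hβ
    rw [hpt, dotp_const, hsumB i β hβ]
    field_simp
  have hfpt : f pt = c * ((orbitF ah).card : ℝ) * Real.exp q
      - (∑ i, d i * ((orbitF (bh i)).card : ℝ) * Real.exp (t i * q)) + w := by
    rw [hf pt]
    have e1 : ∑ α ∈ orbitF ah, Real.exp (dotp α pt) = ((orbitF ah).card : ℝ) * Real.exp q := by
      rw [Finset.sum_congr rfl (fun α hα => by rw [hdotA α hα]), Finset.sum_const, nsmul_eq_mul]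
    have e2 : ∀ i, d i * ∑ β ∈ orbitF (bh i), Real.exp (dotp β pt)
        = d i * ((orbitF (bh i)).card : ℝ) * Real.exp (t i * q) := by
      intro i
      rw [Finset.sum_congr rfl (fun β hβ => by rw [hdotB i β hβ]), Finset.sum_const, nsmul_eq_mul]
      ring
    rw [e1, Finset.sum_congr rfl (fun i _ => e2 i)]
    ring
  have hgz : 0 < f pt - l := sub_pos.2 (hl pt)
  -- the pieces
  set Φ : Fin m → (Fin n → ℝ) → (Fin n → ℝ) → ℝ := fun i β x =>
    d i * ((∑ α ∈ orbitF ah, Theta (θf i) (bh i) β α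
        * (Real.exp (t i * q - q) * Real.exp (dotp α x)))
      + (1 - t i) * Real.exp (t i * q) - Real.exp (dotp β x)) with hΦ
  have hΦ_eq : ∀ i β x, Φ i β x = d i * ((∑ α ∈ orbitF ah, Theta (θf i) (bh i) β α
        * (Real.exp (t i * q - q) * Real.exp (dotp α x)))
      + (1 - t i) * Real.exp (t i * q) - Real.exp (dotp β x)) := fun i β x => rfl
  set gfun : (Fin n → ℝ) → (Fin n → ℝ) → ℝ := fun β x =>
    if β = 0 then f pt - l else ∑ i, if β ∈ orbitF (bh i) then Φ i β x else 0 with hgfun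
  have hg0 : ∀ x, gfun 0 x = f pt - l := fun x => by simp [hgfun]
  have hgne : ∀ β, β ≠ 0 → ∀ x, gfun β x
      = ∑ i, if β ∈ orbitF (bh i) then Φ i β x else 0 := fun β hβ x => by
    simp only [hgfun, if_neg hβ]
  have hTnn : ∀ i β, ∀ α ∈ orbitF ah, 0 ≤ Theta (θf i) (bh i) β α :=
    fun i β α hα => Theta_nonneg (hθnnA i) hα
  have hTsum : ∀ i β, β ∈ orbitF (bh i) → ∑ α ∈ orbitF ah, Theta (θf i) (bh i) β α = t i := by
    intro i β hβ
    rw [ht_eq i]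
    exact Theta_sum hβ
  have hTbar : ∀ i β, β ∈ orbitF (bh i) →
      ∑ α ∈ orbitF ah, Theta (θf i) (bh i) β α • α = β :=
    fun i β hβ => Theta_bar hβ (hbarA i)
  have hΦnn : ∀ i β, β ∈ orbitF (bh i) → ∀ x, 0 ≤ Φ i β x := by
    intro i β hβ x
    have hcore := age_core h0A (fun α hα => hTnn i β α hα) q (hTsum i β hβ)
      (ht_le1 i) (hTbar i β hβ) x
    rw [hΦ_eq]
    apply mul_nonneg (hd i).le
    linarith
  have hgB : ∀ i β, β ∈ orbitF (bh i) → ∀ x, gfun β x = Φ i β x := by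
    intro i β hβ x
    have hβ0 : β ≠ 0 := fun h => h0B i (h ▸ hβ)
    rw [hgne β hβ0 x]
    rw [Finset.sum_eq_single_of_mem i (Finset.mem_univ i) ?_]
    · rw [if_pos hβ]
    · intro j _ hji
      rw [if_neg]
      intro hbj
      exact (Finset.disjoint_left.1 (hBB j i hji)) hbj hβ
  -- AGE certificates for the orbit pieces
  have hageB : ∀ i β, β ∈ orbitF (bh i) →
      IsAGE ((insert 0 (orbitF ah ∪ Finset.univ.biUnion (fun i => orbitF (bh i)))).erase β)
        β (gfun β) := by
    intro i β hβ
    have hβ0 : β ≠ 0 := fun h => h0B i (h ▸ hβ)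
    have hβA : β ∉ orbitF ah := fun h => hAB i β h hβ
    set cf : (Fin n → ℝ) → ℝ := fun γ =>
      if γ ∈ orbitF ah then d i * (Theta (θf i) (bh i) β γ * Real.exp (t i * q - q))
      else if γ = 0 then d i * ((1 - t i) * Real.exp (t i * q))
      else if γ = β then -(d i) else 0 with hcf
    have hcfA : ∀ γ ∈ orbitF ah, cf γ
        = d i * (Theta (θf i) (bh i) β γ * Real.exp (t i * q - q)) :=
      fun γ hγ => by simp only [hcf]; beta_reduce; rw [if_pos hγ]
    have hcf0 : cf 0 = d i * ((1 - t i) * Real.exp (t i * q)) := by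
      simp [hcf, h0A]
    have hcfβ : cf β = -(d i) := by
      simp [hcf, hβA, hβ0]
    have hcfother : ∀ γ, γ ∉ orbitF ah → γ ≠ 0 → γ ≠ β → cf γ = 0 := by
      intro γ h1 h2 h3
      simp [hcf, h1, h2, h3]
    refine ⟨cf, ?_, ?_, fun x => by rw [hgB i β hβ x]; exact hΦnn i β hβ x⟩
    · intro γ hγ
      by_cases hγA : γ ∈ orbitF ah
      · rw [hcfA γ hγA]
        have h1 := hTnn i β γ hγA
        have h2 := (hd i).le
        positivity
      · by_cases hγ0 : γ = 0
        · subst hγ0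
          rw [hcf0]
          have h1 := ht_le1 i
          exact mul_nonneg (hd i).le (mul_nonneg (by linarith) (Real.exp_pos _).le)
        · rw [hcfother γ hγA hγ0 (Finset.ne_of_mem_erase hγ)]
    · intro x
      rw [hgB i β hβ x, hcfβ]
      have hsub : insert (0:Fin n → ℝ) (orbitF ah)
          ⊆ (insert 0 (orbitF ah ∪ Finset.univ.biUnion (fun i => orbitF (bh i)))).erase β := by
        intro γ hγ
        rcases Finset.mem_insert.1 hγ with rfl | hγA
        · exact Finset.mem_erase.2 ⟨Ne.symm hβ0, Finset.mem_insert_self _ _⟩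
        · exact Finset.mem_erase.2 ⟨fun h => hβA (h ▸ hγA),
            Finset.mem_insert_of_mem (Finset.mem_union_left _ hγA)⟩
      have hzero : ∀ γ ∈ (insert 0 (orbitF ah
            ∪ Finset.univ.biUnion (fun i => orbitF (bh i)))).erase β,
          γ ∉ insert (0:Fin n → ℝ) (orbitF ah) → cf γ * Real.exp (dotp γ x) = 0 := by
        intro γ hγ hγn
        have h1 : γ ∉ orbitF ah := fun h => hγn (Finset.mem_insert_of_mem h)
        have h2 : γ ≠ 0 := fun h => hγn (h ▸ Finset.mem_insert_self _ _)
        rw [hcfother γ h1 h2 (Finset.ne_of_mem_erase hγ), zero_mul]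
      rw [← Finset.sum_subset hsub hzero]
      rw [Finset.sum_insert h0A, hcf0]
      have hd0 : dotp (0:Fin n → ℝ) x = 0 := by simp [dotp]
      rw [hd0, Real.exp_zero, mul_one]
      rw [Finset.sum_congr rfl (fun γ hγ => by rw [hcfA γ hγ])]
      rw [hΦ_eq]
      have hS : ∑ γ ∈ orbitF ah,
          d i * (Theta (θf i) (bh i) β γ * Real.exp (t i * q - q)) * Real.exp (dotp γ x)
          = d i * ∑ γ ∈ orbitF ah,
            Theta (θf i) (bh i) β γ * (Real.exp (t i * q - q) * Real.exp (dotp γ x)) := by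
        rw [Finset.mul_sum]
        exact Finset.sum_congr rfl fun γ _ => by ring
      rw [hS]
      ring
  -- the 0 piece
  have hage0 : IsAGE ((insert 0 (orbitF ah
        ∪ Finset.univ.biUnion (fun i => orbitF (bh i)))).erase 0) 0 (gfun 0) := by
    set cf0 : (Fin n → ℝ) → ℝ := fun γ => if γ = 0 then f pt - l else 0 with hcf0'
    have hcf0A : ∀ γ, γ ≠ 0 → cf0 γ = 0 := fun γ hγ => by simp [hcf0', hγ]
    have hcf00 : cf0 0 = f pt - l := by simp [hcf0']
    refine ⟨cf0, fun γ hγ => ?_, fun x => ?_, fun x => by rw [hg0]; linarith⟩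
    · rw [hcf0A γ (Finset.ne_of_mem_erase hγ)]
    · rw [hg0, hcf00, Finset.sum_eq_zero (fun γ hγ => by
        rw [hcf0A γ (Finset.ne_of_mem_erase hγ), zero_mul])]
      have hd0 : dotp (0:Fin n → ℝ) x = 0 := by simp [dotp]
      rw [hd0, Real.exp_zero]
      ring
  -- the A pieces are zero
  have hgA : ∀ β ∈ orbitF ah, ∀ x, gfun β x = 0 := by
    intro β hβA x
    have hβ0 : β ≠ 0 := fun h => h0A (h ▸ hβA)
    rw [hgne β hβ0 x]
    apply Finset.sum_eq_zero
    intro i _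
    rw [if_neg (hAB i β hβA)]
  have hageA : ∀ β ∈ orbitF ah,
      IsAGE ((insert 0 (orbitF ah ∪ Finset.univ.biUnion (fun i => orbitF (bh i)))).erase β)
        β (gfun β) := by
    intro β hβA
    refine ⟨fun _ => 0, fun _ _ => le_refl 0, fun x => ?_, fun x => by rw [hgA β hβA x]⟩
    rw [hgA β hβA x]
    simp
  -- sum over one orbit
  have hcard : ∀ i, ((orbitF ah).card : ℝ) * (Nst ah : ℝ)
      = ((orbitF (bh i)).card : ℝ) * (Nst (bh i) : ℝ) := by
    intro i
    have h1 := (orbit_stab ah).trans (orbit_stab (bh i)).symm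
    exact_mod_cast h1
  have hΦsum : ∀ i x, ∑ β ∈ orbitF (bh i), Φ i β x
      = (∑ α ∈ orbitF ah, d i * ((Nst ah : ℝ) / (Nst (bh i) : ℝ) * t i)
          * (Real.exp (t i * q - q) * Real.exp (dotp α x)))
        + ((orbitF (bh i)).card : ℝ) * (d i * ((1 - t i) * Real.exp (t i * q)))
        - d i * ∑ β ∈ orbitF (bh i), Real.exp (dotp β x) := by
    intro i x
    have hswap : ∑ β ∈ orbitF (bh i), ∑ α ∈ orbitF ah, Theta (θf i) (bh i) β α
          * (Real.exp (t i * q - q) * Real.exp (dotp α x))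
        = ∑ α ∈ orbitF ah, (Nst ah : ℝ) / (Nst (bh i) : ℝ) * t i
          * (Real.exp (t i * q - q) * Real.exp (dotp α x)) := by
      rw [Finset.sum_comm]
      apply Finset.sum_congr rfl
      intro α hα
      rw [← Finset.sum_mul, Theta_colsum hα, ← ht_eq i]
    calc ∑ β ∈ orbitF (bh i), Φ i β x
        = d i * ((∑ α ∈ orbitF ah, (Nst ah : ℝ) / (Nst (bh i) : ℝ) * t i
            * (Real.exp (t i * q - q) * Real.exp (dotp α x)))
          + ((orbitF (bh i)).card : ℝ) * ((1 - t i) * Real.exp (t i * q))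
          - ∑ β ∈ orbitF (bh i), Real.exp (dotp β x)) := by
          rw [Finset.sum_congr rfl (fun β _ => hΦ_eq i β x), ← Finset.mul_sum]
          congr 1
          rw [Finset.sum_sub_distrib, Finset.sum_add_distrib, Finset.sum_const,
            nsmul_eq_mul, hswap]
      _ = _ := by
          rw [mul_sub, mul_add, Finset.mul_sum]
          have e1 : ∀ α ∈ orbitF ah, d i * ((Nst ah : ℝ) / (Nst (bh i) : ℝ) * t i
              * (Real.exp (t i * q - q) * Real.exp (dotp α x)))
              = d i * ((Nst ah : ℝ) / (Nst (bh i) : ℝ) * t i)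
              * (Real.exp (t i * q - q) * Real.exp (dotp α x)) := fun α _ => by ring
          rw [Finset.sum_congr rfl e1]
          ring_nf
  -- the two budget identities
  have hNr : ∀ i, (Nst ah : ℝ) / (Nst (bh i) : ℝ)
      = ((orbitF (bh i)).card : ℝ) / ((orbitF ah).card : ℝ) := by
    intro i
    rw [div_eq_div_iff (by exact_mod_cast (Nst_pos (bh i)).ne')
      (by exact_mod_cast hAcard.ne')]
    linear_combination hcard i
  have hCA : ∑ i, d i * ((Nst ah : ℝ) / (Nst (bh i) : ℝ) * t i) * Real.exp (t i * q - q)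
      = c := by
    have hstep : ∀ (a B A tt E F : ℝ), A ≠ 0 → F ≠ 0 →
        a * (B / A * tt) * (E / F) * (A * F) = a * B * tt * E := by
      intro a B A tt E F hA hF
      have h1 : B / A * A = B := div_mul_cancel₀ B hA
      have h2 : E / F * F = E := div_mul_cancel₀ E hF
      calc a * (B / A * tt) * (E / F) * (A * F)
          = a * tt * (B / A * A) * (E / F * F) := by ring
        _ = a * B * tt * E := by rw [h1, h2]; ring
    have hA0 : ((orbitF ah).card : ℝ) ≠ 0 := by exact_mod_cast hAcard.ne'
    have hne : ((orbitF ah).card : ℝ) * Real.exp q ≠ 0 :=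
      mul_ne_zero hA0 (Real.exp_ne_zero q)
    apply mul_right_cancel₀ hne
    rw [Finset.sum_mul]
    have e1 : ∀ i, d i * ((Nst ah : ℝ) / (Nst (bh i) : ℝ) * t i) * Real.exp (t i * q - q)
        * (((orbitF ah).card : ℝ) * Real.exp q)
        = d i * ((orbitF (bh i)).card : ℝ) * t i * Real.exp (t i * q) := by
      intro i
      rw [hNr i, Real.exp_sub]
      exact hstep _ _ _ _ _ _ hA0 (Real.exp_ne_zero q)
    rw [Finset.sum_congr rfl (fun i _ => e1 i), ← hq]
    ring
  have hCB : (f pt - l) + ∑ i, ((orbitF (bh i)).card : ℝ)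
      * (d i * ((1 - t i) * Real.exp (t i * q))) = w - l := by
    rw [hfpt]
    have e2 : ∀ i, ((orbitF (bh i)).card : ℝ) * (d i * ((1 - t i) * Real.exp (t i * q)))
        = d i * ((orbitF (bh i)).card : ℝ) * Real.exp (t i * q)
          - d i * ((orbitF (bh i)).card : ℝ) * t i * Real.exp (t i * q) := fun i => by ring
    rw [Finset.sum_congr rfl (fun i _ => e2 i), Finset.sum_sub_distrib]
    linarith [hq]
  -- assemble
  refine ⟨gfun, ?_, ?_⟩
  · intro β hβ
    by_cases hβ0 : β = 0
    · subst hβ0; exact hage0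
    · rcases Finset.mem_insert.1 hβ with h | h
      · exact absurd h hβ0
      · rcases Finset.mem_union.1 h with hβA | hβB
        · exact hageA β hβA
        · obtain ⟨i, _, hβi⟩ := Finset.mem_biUnion.1 hβB
          exact hageB i β hβi
  · intro x
    rw [Finset.sum_insert h0T, hg0]
    have hdisjAB : Disjoint (orbitF ah)
        (Finset.univ.biUnion (fun i => orbitF (bh i))) := by
      rw [Finset.disjoint_left]
      intro γ h1 h2
      obtain ⟨i, _, h3⟩ := Finset.mem_biUnion.1 h2
      exact hAB i γ h1 h3
    have hpw : (↑(Finset.univ : Finset (Fin m)) : Set (Fin m)).PairwiseDisjoint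
        (fun i => orbitF (bh i)) := fun i _ j _ hij => hBB i j hij
    rw [Finset.sum_union hdisjAB, Finset.sum_eq_zero (fun β hβ => hgA β hβ x),
      Finset.sum_biUnion hpw, zero_add]
    rw [Finset.sum_congr rfl (fun i _ =>
      (Finset.sum_congr rfl (fun β hβ => hgB i β hβ x)).trans (hΦsum i x))]
    rw [Finset.sum_sub_distrib, Finset.sum_add_distrib]
    have hXA : ∑ i, ∑ α ∈ orbitF ah, d i * ((Nst ah : ℝ) / (Nst (bh i) : ℝ) * t i)
          * (Real.exp (t i * q - q) * Real.exp (dotp α x))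
        = c * ∑ α ∈ orbitF ah, Real.exp (dotp α x) := by
      rw [Finset.sum_comm, Finset.mul_sum]
      apply Finset.sum_congr rfl
      intro α _
      have e3 : ∀ i, d i * ((Nst ah : ℝ) / (Nst (bh i) : ℝ) * t i)
          * (Real.exp (t i * q - q) * Real.exp (dotp α x))
          = d i * ((Nst ah : ℝ) / (Nst (bh i) : ℝ) * t i) * Real.exp (t i * q - q)
            * Real.exp (dotp α x) := fun i => by ring
      rw [Finset.sum_congr rfl (fun i _ => e3 i), ← Finset.sum_mul, hCA]
    rw [hXA]
    beta_reduce
    rw [hf x]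
    linarith [hCB]

end keylemma

theorem stmt9' {n m : ℕ} (ah : Fin n → ℝ) (bh : Fin m → (Fin n → ℝ))
    (hint : ∀ i, bh i ∈ interior (convexHull ℝ
      ((↑(orbitF ah) : Set (Fin n → ℝ)) ∪ {0})))
    (hdist : ∀ i j, i ≠ j → bh i ∉ orbitF (bh j))
    (c : ℝ) (hc : 0 < c) (d : Fin m → ℝ) (hd : ∀ i, 0 < d i) (w : ℝ)
    (f : (Fin n → ℝ) → ℝ)
    (hf : ∀ x, f x = c * (∑ α ∈ orbitF ah, Real.exp (dotp α x))
      - (∑ i, d i * ∑ β ∈ orbitF (bh i), Real.exp (dotp β x)) + w) :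
    infStar f
      = sageBound (orbitF ah ∪ Finset.univ.biUnion (fun i => orbitF (bh i))) f := by
  apply le_antisymm
  · by_contra hcon
    rw [not_le] at hcon
    obtain ⟨l, hl1, hl2⟩ := EReal.lt_iff_exists_real_btwn.1 hcon
    have hlx : ∀ x, l < f x := by
      intro x
      have h2 : (l : EReal) < ((f x : ℝ) : EReal) := by
        refine lt_of_lt_of_le hl2 ?_
        unfold infStar
        exact iInf_le _ x
      exact_mod_cast h2
    have hsage := key ah bh hint hdist c hc d hd w f hf l hlx
    have hmem : (l : EReal) ∈ (fun l : ℝ => (l : EReal)) ''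
        {l : ℝ | IsSAGE (insert 0 (orbitF ah ∪ Finset.univ.biUnion (fun i => orbitF (bh i))))
          (fun x => f x - l)} := ⟨l, hsage, rfl⟩
    have h3 : (l : EReal) ≤ sageBound (orbitF ah
        ∪ Finset.univ.biUnion (fun i => orbitF (bh i))) f := by
      unfold sageBound
      exact le_sSup hmem
    exact absurd h3 (not_le.2 hl1)
  · unfold sageBound
    apply sSup_le
    rintro e ⟨l, hlmem, rfl⟩
    unfold infStar
    apply le_iInf
    intro x
    obtain ⟨g, hg1, hg2⟩ := hlmem
    have h1 : 0 ≤ f x - l := by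
      have h2 := hg2 x
      beta_reduce at h2
      rw [h2]
      apply Finset.sum_nonneg
      intro β hβ
      obtain ⟨cc, _, _, hnn⟩ := hg1 β hβ
      exact hnn x
    show ((l : ℝ) : EReal) ≤ ((f x : ℝ) : EReal)
    exact_mod_cast (show l ≤ f x by linarith)


/-- Theorem (exactness for one orbit of positive support points): for
`f = c Σ_{α ∈ S_n·α̂} e^{⟨α,x⟩} - Σᵢ dᵢ Σ_{β ∈ S_n·β̂ᵢ} e^{⟨β,x⟩} + w` with `c, dᵢ > 0`,
`β̂ᵢ` in the interior of `conv(S_n·α̂ ∪ {0})` and in pairwise distinct orbits,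
we have `f* = f^SAGE`. -/
theorem stmt9 {n m : ℕ} (ah : Fin n → ℝ) (bh : Fin m → (Fin n → ℝ))
    (hint : ∀ i, bh i ∈ interior (convexHull ℝ
      ((↑(orbitF ah) : Set (Fin n → ℝ)) ∪ {0})))
    (hdist : ∀ i j, i ≠ j → bh i ∉ orbitF (bh j))
    (c : ℝ) (hc : 0 < c) (d : Fin m → ℝ) (hd : ∀ i, 0 < d i) (w : ℝ)
    (f : (Fin n → ℝ) → ℝ)
    (hf : ∀ x, f x = c * (∑ α ∈ orbitF ah, Real.exp (dotp α x))
      - (∑ i, d i * ∑ β ∈ orbitF (bh i), Real.exp (dotp β x)) + w) :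
    infStar f
      = sageBound (orbitF ah ∪ Finset.univ.biUnion (fun i => orbitF (bh i))) f :=
  stmt9' ah bh hint hdist c hc d hd w f hf
end

section
/- Let d ∈ ℕ and let λ, μ ∈ ℕ^n be partitions of d (padded with zeros to length n, with n ≥ the number of nonzero parts of μ) such that λ dominates μ in the dominance order (λ ⪰ μ). Then the symmetric signomial g(y) = Σ_{σ∈S_n} exp(⟨σ(λ), y⟩) − Σ_{σ∈S_n} exp(⟨σ(μ), y⟩) belongs to the SAGE cone C_SAGE(S_n·λ ∪ S_n·μ). In particular, m_λ^{(n)}(x) ≥ m_μ^{(n)}(x) for all x ∈ ℝ_{>0}^n (Muirhead's inequality admits a SAGE certificate). -/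
open Finset

-- Auxiliary lemmas
private lemma trivTheta {n : ℕ} (lam mu : Fin n → ℕ) (h : ∀ i, lam i = mu i) :
    ∃ θ : Equiv.Perm (Fin n) → ℝ, (∀ σ, 0 ≤ θ σ) ∧ (∑ σ, θ σ = 1) ∧
      ∀ i, (mu i : ℝ) = ∑ σ, θ σ * (lam (σ⁻¹ i) : ℝ) := by
  refine ⟨fun σ => if σ = 1 then 1 else 0,
    fun σ => by by_cases hσ : σ = 1 <;> simp [hσ], by simp, fun i => ?_⟩
  simp [ite_mul, h i, Equiv.Perm.one_symm]

private lemma expJensen {ι : Type*} [Fintype ι] (θ : ι → ℝ) (hθ : ∀ τ, 0 ≤ θ τ)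
    (hs : ∑ τ, θ τ = 1) (a : ι → ℝ) :
    Real.exp (∑ τ, θ τ * a τ) ≤ ∑ τ, θ τ * Real.exp (a τ) := by
  have h := convexOn_exp.map_sum_le (t := Finset.univ) (w := θ) (p := a)
    (fun i _ => hθ i) hs (fun i _ => Set.mem_univ _)
  simpa [smul_eq_mul] using h

private lemma weightsLemma {n : ℕ} (mu : Fin n → ℕ) (hmu : Antitone mu) :
    ∀ m : ℕ, ∀ lam : Fin n → ℕ, Antitone lam →
    (∑ i, lam i = ∑ i, mu i) →
    (∀ k : ℕ, ∑ i ∈ univ.filter (fun i : Fin n => (i : ℕ) < k), mu i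
        ≤ ∑ i ∈ univ.filter (fun i : Fin n => (i : ℕ) < k), lam i) →
    (∑ i, ((lam i - mu i) + (mu i - lam i))) ≤ m →
    ∃ θ : Equiv.Perm (Fin n) → ℝ, (∀ σ, 0 ≤ θ σ) ∧ (∑ σ, θ σ = 1) ∧
      ∀ i, (mu i : ℝ) = ∑ σ, θ σ * (lam (σ⁻¹ i) : ℝ) := by
  intro m
  induction m with
  | zero =>
    intro lam hlam hsum hdom hms
    refine trivTheta lam mu (fun i => ?_)
    have h0 : ∀ i ∈ (univ : Finset (Fin n)), ((lam i - mu i) + (mu i - lam i)) = 0 := by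
      intro i _
      have := Finset.sum_eq_zero_iff.1 (Nat.le_zero.1 hms) i (mem_univ i)
      omega
    have := h0 i (mem_univ i); omega
  | succ m ih =>
    intro lam hlam hsum hdom hms
    by_cases heq : ∀ i, lam i = mu i
    · exact trivTheta lam mu heq
    push_neg at heq
    obtain ⟨k0, hk0⟩ := heq
    -- j0 : smallest index where lam < mu
    have hSne : (univ.filter (fun j : Fin n => lam j < mu j)).Nonempty := by
      by_contra h
      rw [Finset.not_nonempty_iff_eq_empty, Finset.filter_eq_empty_iff] at h
      have hge : ∀ j : Fin n, mu j ≤ lam j := fun j => by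
        have := h (mem_univ j); omega
      have hlt : mu k0 < lam k0 := lt_of_le_of_ne (hge k0) (Ne.symm hk0)
      have : ∑ i, mu i < ∑ i, lam i :=
        Finset.sum_lt_sum (fun i _ => hge i) ⟨k0, mem_univ k0, hlt⟩
      omega
    set j0 := (univ.filter (fun j : Fin n => lam j < mu j)).min' hSne with hj0def
    have hj0mem : lam j0 < mu j0 := by
      have := Finset.min'_mem _ hSne
      exact (Finset.mem_filter.1 this).2
    have hkltj : ∀ k : Fin n, k < j0 → mu k ≤ lam k := by
      intro k hk
      by_contra h
      have : j0 ≤ k := Finset.min'_le _ k (by simp; omega)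
      exact absurd hk (not_lt.2 this)
    -- i0 : largest index below j0 with mu < lam
    have hS'ne : (univ.filter (fun k : Fin n => k < j0 ∧ mu k < lam k)).Nonempty := by
      by_contra h
      rw [Finset.not_nonempty_iff_eq_empty, Finset.filter_eq_empty_iff] at h
      have hEq : ∀ k : Fin n, k < j0 → lam k = mu k := by
        intro k hk
        have h1 := hkltj k hk
        have h2 := h (mem_univ k)
        simp at h2
        have := h2 hk
        omega
      have hfil : univ.filter (fun i : Fin n => (i : ℕ) < (j0 : ℕ) + 1)
          = insert j0 (univ.filter (fun i : Fin n => (i : ℕ) < (j0 : ℕ))) := by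
        ext i
        simp [Fin.ext_iff]
        omega
      have hnm : j0 ∉ univ.filter (fun i : Fin n => (i : ℕ) < (j0 : ℕ)) := by simp
      have hdd := hdom ((j0 : ℕ) + 1)
      rw [hfil, Finset.sum_insert hnm, Finset.sum_insert hnm] at hdd
      have hEqSum : ∑ i ∈ univ.filter (fun i : Fin n => (i : ℕ) < (j0 : ℕ)), lam i
          = ∑ i ∈ univ.filter (fun i : Fin n => (i : ℕ) < (j0 : ℕ)), mu i := by
        refine Finset.sum_congr rfl (fun i hi => ?_)
        have : (i : ℕ) < (j0 : ℕ) := (Finset.mem_filter.1 hi).2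
        exact hEq i (Fin.lt_def.2 this)
      omega
    set i0 := (univ.filter (fun k : Fin n => k < j0 ∧ mu k < lam k)).max' hS'ne with hi0def
    have hi0mem : i0 < j0 ∧ mu i0 < lam i0 := by
      have := Finset.max'_mem _ hS'ne
      exact (Finset.mem_filter.1 this).2
    have hi0max : ∀ k : Fin n, k < j0 → mu k < lam k → k ≤ i0 := by
      intro k h1 h2
      exact Finset.le_max' _ k (by simp [h1, h2])
    have hbetween : ∀ k : Fin n, i0 < k → k < j0 → lam k = mu k := by
      intro k h1 h2
      have h3 := hkltj k h2
      by_contra h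
      have : mu k < lam k := by omega
      exact absurd h1 (not_lt.2 (hi0max k h2 this))
    obtain ⟨hij, h1⟩ := hi0mem
    have h2 : lam j0 < mu j0 := hj0mem
    have h5 : mu j0 ≤ mu i0 := hmu (le_of_lt hij)
    obtain ⟨c, hc1, h3, h4⟩ : ∃ c : ℕ, 1 ≤ c ∧ c ≤ lam i0 - mu i0 ∧ c ≤ mu j0 - lam j0 :=
      ⟨min (lam i0 - mu i0) (mu j0 - lam j0), le_min (by omega) (by omega),
        min_le_left _ _, min_le_right _ _⟩
    have hij' : i0 ≠ j0 := ne_of_lt hij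
    obtain ⟨lam', hl'i0, hl'j0, hl'other⟩ :
        ∃ lam' : Fin n → ℕ, lam' i0 = lam i0 - c ∧ lam' j0 = lam j0 + c ∧
          ∀ k, k ≠ i0 → k ≠ j0 → lam' k = lam k :=
      ⟨fun k => if k = i0 then lam i0 - c else if k = j0 then lam j0 + c else lam k,
        by simp, by simp [Ne.symm hij'], fun k hk1 hk2 => by simp [hk1, hk2]⟩
    -- Antitone lam'
    have hlam' : Antitone lam' := by
      intro k l hkl
      rcases eq_or_ne k l with rfl | hne
      · exact le_refl _
      have hkl' : k < l := lt_of_le_of_ne hkl hne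
      by_cases hki : k = i0
      · subst hki
        by_cases hlj : l = j0
        · subst hlj
          rw [hl'i0, hl'j0]; omega
        · have hli : l ≠ i0 := (ne_of_gt hkl')
          rw [hl'i0, hl'other l hli hlj]
          rcases lt_or_gt_of_ne hlj with hl1 | hl2
          · have := hbetween l hkl' hl1
            have := hmu (le_of_lt hkl')
            omega
          · have := hlam (le_of_lt hl2)
            omega
      by_cases hkj : k = j0
      · subst hkj
        have hli : l ≠ i0 := ne_of_gt (lt_trans hij hkl')
        have hlj : l ≠ j0 := ne_of_gt hkl'
        rw [hl'j0, hl'other l hli hlj]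
        have := hlam hkl'.le
        omega
      by_cases hli : l = i0
      · subst hli
        rw [hl'i0, hl'other k hki hkj]
        have := hlam hkl'.le
        omega
      by_cases hlj : l = j0
      · subst hlj
        rw [hl'j0, hl'other k hki hkj]
        rcases lt_or_gt_of_ne hki with hk1 | hk2
        · have := hlam hk1.le
          omega
        · have := hbetween k hk2 hkl'
          have : mu j0 ≤ mu k := hmu hkl'.le
          omega
      · rw [hl'other k hki hkj, hl'other l hli hlj]
        exact hlam hkl
    -- pointwise sum identity
    have hc_le_lam : c ≤ lam i0 := by omega
    have hpt : ∀ i, lam' i + (if i = i0 then c else 0) = lam i + (if i = j0 then c else 0) := by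
      intro i
      by_cases hi : i = i0
      · subst hi
        rw [hl'i0, if_pos rfl, if_neg hij']
        omega
      by_cases hj : i = j0
      · subst hj
        rw [hl'j0, if_neg hij'.symm, if_pos rfl]
        omega
      · rw [hl'other i hi hj, if_neg hi, if_neg hj]
    have hsums : ∀ s : Finset (Fin n),
        (∑ i ∈ s, lam' i) + (if i0 ∈ s then c else 0)
          = (∑ i ∈ s, lam i) + (if j0 ∈ s then c else 0) := by
      intro s
      have h1 : ∑ i ∈ s, (lam' i + (if i = i0 then c else 0))
          = ∑ i ∈ s, (lam i + (if i = j0 then c else 0)) :=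
        Finset.sum_congr rfl (fun i _ => hpt i)
      rw [Finset.sum_add_distrib, Finset.sum_add_distrib,
        Finset.sum_ite_eq' s i0 (fun _ => c), Finset.sum_ite_eq' s j0 (fun _ => c)] at h1
      exact h1
    have hsum' : ∑ i, lam' i = ∑ i, mu i := by
      have := hsums univ
      simp at this
      omega
    -- dominance for lam'
    have hdom' : ∀ k : ℕ, ∑ i ∈ univ.filter (fun i : Fin n => (i : ℕ) < k), mu i
        ≤ ∑ i ∈ univ.filter (fun i : Fin n => (i : ℕ) < k), lam' i := by
      intro k
      have hmi : i0 ∈ univ.filter (fun i : Fin n => (i : ℕ) < k) ↔ (i0 : ℕ) < k := by simp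
      have hmj : j0 ∈ univ.filter (fun i : Fin n => (i : ℕ) < k) ↔ (j0 : ℕ) < k := by simp
      have hs := hsums (univ.filter (fun i : Fin n => (i : ℕ) < k))
      have hd := hdom k
      by_cases hik : (i0 : ℕ) < k
      · by_cases hjk : (j0 : ℕ) < k
        · rw [if_pos (hmi.2 hik), if_pos (hmj.2 hjk)] at hs
          omega
        · rw [if_pos (hmi.2 hik), if_neg (fun h => hjk (hmj.1 h))] at hs
          have hkj0 : k ≤ (j0 : ℕ) := not_lt.1 hjk
          have key : ∀ i ∈ univ.filter (fun i : Fin n => (i : ℕ) < k), mu i ≤ lam i := by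
            intro i hi
            have : (i : ℕ) < k := by simpa using hi
            exact hkltj i (Fin.lt_def.2 (by omega))
          have hsplit : ∑ i ∈ univ.filter (fun i : Fin n => (i : ℕ) < k), lam i
              = ∑ i ∈ univ.filter (fun i : Fin n => (i : ℕ) < k), mu i
                + ∑ i ∈ univ.filter (fun i : Fin n => (i : ℕ) < k), (lam i - mu i) := by
            rw [← Finset.sum_add_distrib]
            exact Finset.sum_congr rfl (fun i hi => by have := key i hi; omega)
          have hsingle : lam i0 - mu i0
              ≤ ∑ i ∈ univ.filter (fun i : Fin n => (i : ℕ) < k), (lam i - mu i) :=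
            Finset.single_le_sum (f := fun i => lam i - mu i) (fun i _ => Nat.zero_le _)
              (hmi.2 hik)
          omega
      · have hijn : (i0 : ℕ) < (j0 : ℕ) := Fin.lt_def.1 hij
        have hjk : ¬ (j0 : ℕ) < k := fun h => hik (by omega)
        rw [if_neg (fun h => hik (hmi.1 h)), if_neg (fun h => hjk (hmj.1 h))] at hs
        omega
    -- measure decreases
    have hptm : ∀ i, ((lam' i - mu i) + (mu i - lam' i)) + (if i = i0 then c else 0)
        + (if i = j0 then c else 0) = (lam i - mu i) + (mu i - lam i) := by
      intro i
      by_cases hi : i = i0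
      · subst hi
        rw [hl'i0, if_pos rfl, if_neg hij']
        omega
      by_cases hj : i = j0
      · subst hj
        rw [hl'j0, if_neg hij'.symm, if_pos rfl]
        omega
      · rw [hl'other i hi hj, if_neg hi, if_neg hj]
        omega
    have hmeas' : (∑ i, ((lam' i - mu i) + (mu i - lam' i))) ≤ m := by
      have h1 : ∑ i, (((lam' i - mu i) + (mu i - lam' i)) + (if i = i0 then c else 0)
          + (if i = j0 then c else 0)) = ∑ i, ((lam i - mu i) + (mu i - lam i)) :=
        Finset.sum_congr rfl (fun i _ => hptm i)
      rw [Finset.sum_add_distrib, Finset.sum_add_distrib,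
        Finset.sum_ite_eq' univ i0 (fun _ => c), Finset.sum_ite_eq' univ j0 (fun _ => c)] at h1
      simp at h1
      omega
    obtain ⟨θ', hθ'0, hθ'1, hθ'rep⟩ := ih lam' hlam' hsum' hdom' hmeas'
    -- convex combination step
    have hltR : (lam j0 : ℝ) < (lam i0 : ℝ) := by
      have : lam j0 < lam i0 := by omega
      exact_mod_cast this
    set t : ℝ := (c : ℝ) / ((lam i0 : ℝ) - (lam j0 : ℝ)) with htdef
    have hden : (0:ℝ) < (lam i0 : ℝ) - (lam j0 : ℝ) := by linarith
    have ht0 : 0 ≤ t := div_nonneg (Nat.cast_nonneg c) hden.le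
    have ht1 : t ≤ 1 := by
      rw [div_le_one hden]
      have : c ≤ lam i0 - lam j0 := by omega
      have h' : (c : ℝ) ≤ ((lam i0 - lam j0 : ℕ) : ℝ) := Nat.cast_le.2 this
      rw [Nat.cast_sub (by omega)] at h'
      exact h'
    have htc : t * ((lam i0 : ℝ) - (lam j0 : ℝ)) = (c : ℝ) :=
      div_mul_cancel₀ _ (ne_of_gt hden)
    set τ := Equiv.swap i0 j0 with hτdef
    have hkey : ∀ k, (lam' k : ℝ) = (1 - t) * (lam k : ℝ) + t * (lam (τ k) : ℝ) := by
      intro k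
      by_cases hi : k = i0
      · subst hi
        rw [hl'i0, hτdef, Equiv.swap_apply_left, Nat.cast_sub hc_le_lam]
        have hr : (1 - t) * (lam i0 : ℝ) + t * (lam j0 : ℝ)
            = (lam i0 : ℝ) - t * ((lam i0 : ℝ) - (lam j0 : ℝ)) := by ring
        rw [hr, htc]
      by_cases hj : k = j0
      · subst hj
        rw [hl'j0, hτdef, Equiv.swap_apply_right, Nat.cast_add]
        have hr : (1 - t) * (lam j0 : ℝ) + t * (lam i0 : ℝ)
            = (lam j0 : ℝ) + t * ((lam i0 : ℝ) - (lam j0 : ℝ)) := by ring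
        rw [hr, htc]
      · rw [hl'other k hi hj, hτdef, Equiv.swap_apply_of_ne_of_ne hi hj]
        ring
    refine ⟨fun ρ => (1 - t) * θ' ρ + t * θ' (ρ * τ), fun ρ => ?_, ?_, fun i => ?_⟩
    · show 0 ≤ (1 - t) * θ' ρ + t * θ' (ρ * τ)
      have ha := mul_nonneg (by linarith : (0:ℝ) ≤ 1 - t) (hθ'0 ρ)
      have hb := mul_nonneg ht0 (hθ'0 (ρ * τ))
      linarith
    · rw [Finset.sum_add_distrib, ← Finset.mul_sum, ← Finset.mul_sum]
      have hre : ∑ ρ : Equiv.Perm (Fin n), θ' (ρ * τ) = ∑ ρ : Equiv.Perm (Fin n), θ' ρ :=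
        Fintype.sum_equiv (Equiv.mulRight τ) _ _ (fun ρ => rfl)
      rw [hre, hθ'1]
      ring
    · rw [hθ'rep i]
      have step : ∀ σ : Equiv.Perm (Fin n), θ' σ * (lam' (σ⁻¹ i) : ℝ)
          = (1 - t) * θ' σ * (lam (σ⁻¹ i) : ℝ) + t * θ' σ * (lam (τ (σ⁻¹ i)) : ℝ) := by
        intro σ
        rw [hkey (σ⁻¹ i)]
        ring
      rw [Finset.sum_congr rfl (fun σ _ => step σ), Finset.sum_add_distrib]
      have hre2 : ∑ σ : Equiv.Perm (Fin n), t * θ' σ * (lam (τ (σ⁻¹ i)) : ℝ)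
          = ∑ ρ : Equiv.Perm (Fin n), t * θ' (ρ * τ) * (lam (ρ⁻¹ i) : ℝ) := by
        refine Fintype.sum_equiv (Equiv.mulRight τ⁻¹) _ _ (fun σ => ?_)
        have h1 : (Equiv.mulRight τ⁻¹ σ) * τ = σ := by
          simp [Equiv.mulRight]
        have h2 : ((Equiv.mulRight τ⁻¹ σ)⁻¹ : Equiv.Perm (Fin n)) i = τ (σ⁻¹ i) := by
          simp [Equiv.mulRight, mul_inv_rev]
        rw [h1, h2]
      rw [hre2, ← Finset.sum_add_distrib]
      refine Finset.sum_congr rfl (fun ρ _ => ?_)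
      ring

/-- Muirhead's inequality as a SAGE certificate: if the partitions `lam ⪰ mu` of `d`
(in the dominance order), then the symmetric signomial
`g(y) = Σ_σ e^{⟨σ(lam),y⟩} - Σ_σ e^{⟨σ(mu),y⟩}` is SAGE; in particular
`m_mu^{(n)}(x) ≤ m_lam^{(n)}(x)` for all `x` in the open positive orthant. -/
theorem stmt14 {n d : ℕ} (lam mu : Fin n → ℕ)
    (hlam : Antitone lam) (hmu : Antitone mu)
    (hld : ∑ i, lam i = d) (hmd : ∑ i, mu i = d)
    (hdom : ∀ k : ℕ,
      ∑ i ∈ Finset.univ.filter (fun i : Fin n => (i : ℕ) < k), mu i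
        ≤ ∑ i ∈ Finset.univ.filter (fun i : Fin n => (i : ℕ) < k), lam i)
    (g : (Fin n → ℝ) → ℝ)
    (hg : ∀ y, g y =
      (∑ σ : Equiv.Perm (Fin n),
        Real.exp (dotp (fun i => ((permActN σ lam) i : ℝ)) y))
      - ∑ σ : Equiv.Perm (Fin n),
        Real.exp (dotp (fun i => ((permActN σ mu) i : ℝ)) y)) :
    IsSAGE
      ((Finset.univ.image
          (fun σ : Equiv.Perm (Fin n) => fun i => ((permActN σ lam) i : ℝ)))
       ∪ (Finset.univ.image
          (fun σ : Equiv.Perm (Fin n) => fun i => ((permActN σ mu) i : ℝ)))) g ∧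
    (∀ x : Fin n → ℝ, (∀ i, 0 < x i) → mmean mu x ≤ mmean lam x) := by
  classical
  have hsum0 : ∑ i, lam i = ∑ i, mu i := by rw [hld, hmd]
  obtain ⟨θ, hθ0, hθ1, hθrep⟩ :=
    weightsLemma mu hmu (∑ i, ((lam i - mu i) + (mu i - lam i))) lam hlam hsum0 hdom (le_refl _)
  -- key convexity inequality
  have hdotp : ∀ (σ : Equiv.Perm (Fin n)) (y : Fin n → ℝ),
      dotp (fun i => ((permActN σ mu) i : ℝ)) y
        = ∑ τ : Equiv.Perm (Fin n), θ τ * dotp (fun i => ((permActN (σ * τ) lam) i : ℝ)) y := by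
    intro σ y
    simp only [dotp, permActN]
    calc ∑ i, (mu (σ⁻¹ i) : ℝ) * y i
        = ∑ i, (∑ τ : Equiv.Perm (Fin n), θ τ * (lam (τ⁻¹ (σ⁻¹ i)) : ℝ)) * y i := by
          refine Finset.sum_congr rfl fun i _ => ?_
          rw [← hθrep (σ⁻¹ i)]
      _ = ∑ i, ∑ τ : Equiv.Perm (Fin n), θ τ * (lam (τ⁻¹ (σ⁻¹ i)) : ℝ) * y i := by
          refine Finset.sum_congr rfl fun i _ => ?_
          rw [Finset.sum_mul]
      _ = ∑ τ : Equiv.Perm (Fin n), ∑ i, θ τ * (lam (τ⁻¹ (σ⁻¹ i)) : ℝ) * y i :=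
          Finset.sum_comm
      _ = ∑ τ : Equiv.Perm (Fin n), θ τ * ∑ i, (lam ((σ * τ)⁻¹ i) : ℝ) * y i := by
          refine Finset.sum_congr rfl fun τ _ => ?_
          rw [Finset.mul_sum]
          refine Finset.sum_congr rfl fun i _ => ?_
          rw [mul_inv_rev, Equiv.Perm.mul_apply, mul_assoc]
  have hconv : ∀ (σ : Equiv.Perm (Fin n)) (y : Fin n → ℝ),
      Real.exp (dotp (fun i => ((permActN σ mu) i : ℝ)) y)
        ≤ ∑ τ : Equiv.Perm (Fin n),
            θ τ * Real.exp (dotp (fun i => ((permActN (σ * τ) lam) i : ℝ)) y) := by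
    intro σ y
    rw [hdotp σ y]
    exact expJensen θ hθ0 hθ1 _
  set T := ((Finset.univ.image
          (fun σ : Equiv.Perm (Fin n) => fun i => ((permActN σ lam) i : ℝ)))
       ∪ (Finset.univ.image
          (fun σ : Equiv.Perm (Fin n) => fun i => ((permActN σ mu) i : ℝ)))) with hT
  have hmemL : ∀ ρ : Equiv.Perm (Fin n), (fun i => ((permActN ρ lam) i : ℝ)) ∈ T := fun ρ =>
    Finset.mem_union_left _ (Finset.mem_image_of_mem _ (mem_univ ρ))
  have hmemM : ∀ ρ : Equiv.Perm (Fin n), (fun i => ((permActN ρ mu) i : ℝ)) ∈ T := fun ρ =>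
    Finset.mem_union_right _ (Finset.mem_image_of_mem _ (mem_univ ρ))
  set gf : (Fin n → ℝ) → ((Fin n → ℝ) → ℝ) := fun β y =>
    ∑ σ ∈ univ.filter
        (fun σ : Equiv.Perm (Fin n) => (fun i => ((permActN σ mu) i : ℝ)) = β),
      ((∑ τ : Equiv.Perm (Fin n),
          θ τ * Real.exp (dotp (fun i => ((permActN (σ * τ) lam) i : ℝ)) y))
        - Real.exp (dotp β y)) with hgf
  have hgfnn : ∀ β y, 0 ≤ gf β y := by
    intro β y
    rw [hgf]
    refine Finset.sum_nonneg fun σ hσ => ?_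
    have hβ : (fun i => ((permActN σ mu) i : ℝ)) = β := (Finset.mem_filter.1 hσ).2
    have h := hconv σ y
    rw [hβ] at h
    exact sub_nonneg.2 h
  have hAGE : ∀ β ∈ T, IsAGE (T.erase β) β (gf β) := by
    intro β hβ
    set Sb := univ.filter
      (fun σ : Equiv.Perm (Fin n) => (fun i => ((permActN σ mu) i : ℝ)) = β) with hSb
    set C : (Fin n → ℝ) → ℝ := fun α =>
      (∑ p ∈ (Sb ×ˢ (univ : Finset (Equiv.Perm (Fin n)))).filter
          (fun p => (fun i => ((permActN (p.1 * p.2) lam) i : ℝ)) = α), θ p.2)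
        + (if α = β then -(Sb.card : ℝ) else 0) with hC
    refine ⟨C, ?_, ?_, fun x => hgfnn β x⟩
    · intro α hα
      have hne : α ≠ β := (Finset.mem_erase.1 hα).1
      rw [hC]
      simp only
      rw [if_neg hne, add_zero]
      exact Finset.sum_nonneg fun p _ => hθ0 p.2
    · intro x
      have e1 : ∑ α ∈ T, ((∑ p ∈ (Sb ×ˢ (univ : Finset (Equiv.Perm (Fin n)))).filter
            (fun p => (fun i => ((permActN (p.1 * p.2) lam) i : ℝ)) = α), θ p.2)
              * Real.exp (dotp α x))
          = ∑ σ ∈ Sb, ∑ τ : Equiv.Perm (Fin n),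
              θ τ * Real.exp (dotp (fun i => ((permActN (σ * τ) lam) i : ℝ)) x) := by
        calc ∑ α ∈ T, ((∑ p ∈ (Sb ×ˢ (univ : Finset (Equiv.Perm (Fin n)))).filter
              (fun p => (fun i => ((permActN (p.1 * p.2) lam) i : ℝ)) = α), θ p.2)
                * Real.exp (dotp α x))
            = ∑ α ∈ T, ∑ p ∈ (Sb ×ˢ (univ : Finset (Equiv.Perm (Fin n)))).filter
              (fun p => (fun i => ((permActN (p.1 * p.2) lam) i : ℝ)) = α),
                θ p.2 * Real.exp (dotp (fun i => ((permActN (p.1 * p.2) lam) i : ℝ)) x) := by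
              refine Finset.sum_congr rfl fun α _ => ?_
              rw [Finset.sum_mul]
              exact Finset.sum_congr rfl fun p hp => by rw [(Finset.mem_filter.1 hp).2]
          _ = ∑ p ∈ Sb ×ˢ (univ : Finset (Equiv.Perm (Fin n))),
                θ p.2 * Real.exp (dotp (fun i => ((permActN (p.1 * p.2) lam) i : ℝ)) x) :=
              Finset.sum_fiberwise_of_maps_to (fun p _ => hmemL (p.1 * p.2)) _
          _ = ∑ σ ∈ Sb, ∑ τ : Equiv.Perm (Fin n),
                θ τ * Real.exp (dotp (fun i => ((permActN (σ * τ) lam) i : ℝ)) x) :=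
              Finset.sum_product _ _ _
      have e2 : ∑ α ∈ T, ((if α = β then -(Sb.card : ℝ) else 0) * Real.exp (dotp α x))
          = -(Sb.card : ℝ) * Real.exp (dotp β x) := by
        have h : ∀ α, (if α = β then -(Sb.card : ℝ) else 0) * Real.exp (dotp α x)
            = if α = β then -(Sb.card : ℝ) * Real.exp (dotp α x) else 0 := fun α => by
          split <;> simp
        rw [Finset.sum_congr rfl fun α _ => h α, Finset.sum_ite_eq' T β
          (fun α => -(Sb.card : ℝ) * Real.exp (dotp α x)), if_pos hβ]
      have hLHS : gf β x = (∑ σ ∈ Sb, ∑ τ : Equiv.Perm (Fin n),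
            θ τ * Real.exp (dotp (fun i => ((permActN (σ * τ) lam) i : ℝ)) x))
          - (Sb.card : ℝ) * Real.exp (dotp β x) := by
        rw [hgf]
        simp only
        rw [Finset.sum_sub_distrib, Finset.sum_const, nsmul_eq_mul]
      have hRHS : (∑ α ∈ T.erase β, C α * Real.exp (dotp α x))
            + C β * Real.exp (dotp β x) = ∑ α ∈ T, C α * Real.exp (dotp α x) :=
        Finset.sum_erase_add T _ hβ
      rw [hRHS, hLHS]
      have expand : ∀ α ∈ T, C α * Real.exp (dotp α x)
          = (∑ p ∈ (Sb ×ˢ (univ : Finset (Equiv.Perm (Fin n)))).filter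
              (fun p => (fun i => ((permActN (p.1 * p.2) lam) i : ℝ)) = α), θ p.2)
                * Real.exp (dotp α x)
            + (if α = β then -(Sb.card : ℝ) else 0) * Real.exp (dotp α x) := by
        intro α _
        rw [hC]
        simp only
        rw [add_mul]
      rw [Finset.sum_congr rfl expand, Finset.sum_add_distrib, e1, e2]
      ring
  have hdecomp : ∀ y, g y = ∑ β ∈ T, gf β y := by
    intro y
    have h1 : ∑ β ∈ T, gf β y
        = ∑ β ∈ T, ∑ σ ∈ univ.filter
            (fun σ : Equiv.Perm (Fin n) => (fun i => ((permActN σ mu) i : ℝ)) = β),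
          ((∑ τ : Equiv.Perm (Fin n),
              θ τ * Real.exp (dotp (fun i => ((permActN (σ * τ) lam) i : ℝ)) y))
            - Real.exp (dotp (fun i => ((permActN σ mu) i : ℝ)) y)) := by
      refine Finset.sum_congr rfl fun β hβ => ?_
      rw [hgf]
      refine Finset.sum_congr rfl fun σ hσ => ?_
      rw [(Finset.mem_filter.1 hσ).2]
    rw [h1, Finset.sum_fiberwise_of_maps_to (fun σ _ => hmemM σ), Finset.sum_sub_distrib]
    have h2 : ∑ σ : Equiv.Perm (Fin n), ∑ τ : Equiv.Perm (Fin n),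
        θ τ * Real.exp (dotp (fun i => ((permActN (σ * τ) lam) i : ℝ)) y)
        = ∑ σ : Equiv.Perm (Fin n),
            Real.exp (dotp (fun i => ((permActN σ lam) i : ℝ)) y) := by
      rw [Finset.sum_comm]
      have h3 : ∀ τ : Equiv.Perm (Fin n), ∑ σ : Equiv.Perm (Fin n),
          Real.exp (dotp (fun i => ((permActN (σ * τ) lam) i : ℝ)) y)
          = ∑ ρ : Equiv.Perm (Fin n),
              Real.exp (dotp (fun i => ((permActN ρ lam) i : ℝ)) y) := fun τ =>
        Fintype.sum_equiv (Equiv.mulRight τ) _ _ (fun σ => rfl)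
      calc ∑ τ : Equiv.Perm (Fin n), ∑ σ : Equiv.Perm (Fin n),
            θ τ * Real.exp (dotp (fun i => ((permActN (σ * τ) lam) i : ℝ)) y)
          = ∑ τ : Equiv.Perm (Fin n), θ τ * ∑ σ : Equiv.Perm (Fin n),
              Real.exp (dotp (fun i => ((permActN (σ * τ) lam) i : ℝ)) y) := by
            refine Finset.sum_congr rfl fun τ _ => ?_
            rw [Finset.mul_sum]
        _ = ∑ τ : Equiv.Perm (Fin n), θ τ * ∑ ρ : Equiv.Perm (Fin n),
              Real.exp (dotp (fun i => ((permActN ρ lam) i : ℝ)) y) := by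
            refine Finset.sum_congr rfl fun τ _ => ?_
            rw [h3 τ]
        _ = (∑ τ : Equiv.Perm (Fin n), θ τ) * ∑ ρ : Equiv.Perm (Fin n),
              Real.exp (dotp (fun i => ((permActN ρ lam) i : ℝ)) y) := by
            rw [← Finset.sum_mul]
        _ = ∑ ρ : Equiv.Perm (Fin n),
              Real.exp (dotp (fun i => ((permActN ρ lam) i : ℝ)) y) := by
            rw [hθ1, one_mul]
    rw [h2, hg y]
  constructor
  · exact ⟨gf, hAGE, fun y => hdecomp y⟩
  · intro x hx
    have gnonneg : ∀ y, 0 ≤ g y := fun y => by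
      rw [hdecomp y]
      exact Finset.sum_nonneg fun β _ => hgfnn β y
    set y := fun i => Real.log (x i) with hy
    have hmon : ∀ v : Fin n → ℕ, monom v x = Real.exp (dotp (fun i => (v i : ℝ)) y) := by
      intro v
      rw [monom, dotp, Real.exp_sum]
      refine Finset.prod_congr rfl fun i _ => ?_
      calc x i ^ v i = Real.exp (Real.log (x i)) ^ v i := by rw [Real.exp_log (hx i)]
        _ = Real.exp ((v i : ℝ) * Real.log (x i)) := (Real.exp_nat_mul _ _).symm
    have hsumle : ∑ σ : Equiv.Perm (Fin n),
        Real.exp (dotp (fun i => ((permActN σ mu) i : ℝ)) y)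
        ≤ ∑ σ : Equiv.Perm (Fin n),
            Real.exp (dotp (fun i => ((permActN σ lam) i : ℝ)) y) := by
      have h := gnonneg y
      rw [hg y] at h
      linarith
    rw [mmean, mmean]
    have hfac : (0:ℝ) ≤ 1 / (n.factorial : ℝ) := by positivity
    refine mul_le_mul_of_nonneg_left ?_ hfac
    calc ∑ σ : Equiv.Perm (Fin n), monom (permActN σ mu) x
        = ∑ σ : Equiv.Perm (Fin n),
            Real.exp (dotp (fun i => ((permActN σ mu) i : ℝ)) y) :=
          Finset.sum_congr rfl fun σ _ => hmon _
      _ ≤ ∑ σ : Equiv.Perm (Fin n),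
            Real.exp (dotp (fun i => ((permActN σ lam) i : ℝ)) y) := hsumle
      _ = ∑ σ : Equiv.Perm (Fin n), monom (permActN σ lam) x :=
          (Finset.sum_congr rfl fun σ _ => (hmon _).symm)
end

section
/- Let λ, μ ∈ ℕ^n be integer partitions (padded with zeros) with λ ⪰* μ, i.e., μ ∈ conv({0} ∪ S_n·λ), and let c > 0. Write |λ| = Σ_i λ_i, |μ| = Σ_i μ_i. (1) If |λ| > |μ|, then for any n ≥ |λ| and any c > 0, the inequality m_λ^{(n)}(x) − c·m_μ^{(n)}(x) ≥ δ holds for all x ∈ ℝ_{>0}^n, where δ = −c·((|λ|−|μ|)/|λ|)·(c|μ|/|λ|)^{|μ|/(|λ|−|μ|)}; equality holds if and only if x₁ = ⋯ = xₙ = (c|μ|/|λ|)^{1/(|λ|−|μ|)}. (2) If |λ| = |μ| and 0 < c ≤ 1, then m_λ^{(n)}(x) − c·m_μ^{(n)}(x) ≥ 0 for all x ∈ ℝ_{>0}^n; the inequality is strict everywhere unless c = 1, and for c = 1 equality holds on all of ℝ_{>0}^n if λ = μ, and exactly on the diagonal {(t,…,t) : t > 0} otherwise. -/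
open Finset

set_option maxHeartbeats 1000000

lemma jensen_exp_s15 {ι : Type*} [Fintype ι] (p a : ι → ℝ) (hp : ∀ i, 0 ≤ p i)
    (h1 : ∑ i, p i = 1) :
    Real.exp (∑ i, p i * a i) ≤ ∑ i, p i * Real.exp (a i) ∧
    (∑ i, p i * Real.exp (a i) ≤ Real.exp (∑ i, p i * a i) →
      ∀ i, p i ≠ 0 → a i = ∑ j, p j * a j) := by
  set s := ∑ j, p j * a j with hs
  have key : ∀ i, p i * Real.exp s * (1 + (a i - s)) ≤ p i * Real.exp (a i) := by
    intro i
    have h2 : Real.exp s * (1 + (a i - s)) ≤ Real.exp (a i) := by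
      have := Real.add_one_le_exp (a i - s)
      calc Real.exp s * (1 + (a i - s)) ≤ Real.exp s * Real.exp (a i - s) := by
            nlinarith [Real.exp_pos s]
        _ = Real.exp (a i) := by rw [← Real.exp_add]; ring_nf
    nlinarith [hp i, Real.exp_pos s, Real.exp_pos (a i)]
  have hL : ∑ i, p i * Real.exp s * (1 + (a i - s)) = Real.exp s := by
    have e1 : ∀ i : ι, p i * Real.exp s * (1 + (a i - s))
        = Real.exp s * p i + Real.exp s * (p i * a i) - (Real.exp s * s) * p i := by
      intro i; ring
    rw [Finset.sum_congr rfl (fun i _ => e1 i), Finset.sum_sub_distrib,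
      Finset.sum_add_distrib, ← Finset.mul_sum, ← Finset.mul_sum, ← Finset.mul_sum, h1, ← hs]
    ring
  constructor
  · calc Real.exp s = ∑ i, p i * Real.exp s * (1 + (a i - s)) := hL.symm
      _ ≤ ∑ i, p i * Real.exp (a i) := Finset.sum_le_sum (fun i _ => key i)
  · intro heq i hpi
    by_contra hne
    have hstrict : p i * Real.exp s * (1 + (a i - s)) < p i * Real.exp (a i) := by
      have hpi' : 0 < p i := lt_of_le_of_ne (hp i) (Ne.symm hpi)
      have h2 : Real.exp s * (1 + (a i - s)) < Real.exp (a i) := by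
        have := Real.add_one_lt_exp (x := a i - s) (by intro h; apply hne; linarith [sub_eq_zero.mp h])
        calc Real.exp s * (1 + (a i - s)) < Real.exp s * Real.exp (a i - s) := by
              nlinarith [Real.exp_pos s]
          _ = Real.exp (a i) := by rw [← Real.exp_add]; ring_nf
      nlinarith
    have : Real.exp s < ∑ j, p j * Real.exp (a j) := by
      rw [← hL]
      exact Finset.sum_lt_sum (fun j _ => key j) ⟨i, Finset.mem_univ i, hstrict⟩
    linarith [heq]

lemma monom_eq_exp {n : ℕ} (α : Fin n → ℕ) (x : Fin n → ℝ) (hx : ∀ i, 0 < x i) :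
    monom α x = Real.exp (∑ i, (α i : ℝ) * Real.log (x i)) := by
  rw [monom, Real.exp_sum]
  congr 1; ext i
  rw [Real.exp_nat_mul, Real.exp_log (hx i)]

lemma mmean_eq {n : ℕ} (α : Fin n → ℕ) (x : Fin n → ℝ) (hx : ∀ i, 0 < x i) :
    mmean α x = (1/(n.factorial : ℝ)) *
      ∑ σ : Equiv.Perm (Fin n), Real.exp (∑ k, (α k : ℝ) * Real.log (x (σ k))) := by
  rw [mmean]
  congr 1
  apply Finset.sum_congr rfl
  intro σ _
  rw [monom_eq_exp _ _ hx]
  congr 1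
  rw [← Equiv.sum_comp σ (fun i => ((permActN σ α) i : ℝ) * Real.log (x i))]
  apply Finset.sum_congr rfl
  intro k _
  simp [permActN]

lemma mmean_pos {n : ℕ} (α : Fin n → ℕ) (x : Fin n → ℝ) (hx : ∀ i, 0 < x i) :
    0 < mmean α x := by
  rw [mmean_eq _ _ hx]
  apply mul_pos
  · positivity
  · apply Finset.sum_pos (fun σ _ => Real.exp_pos _) ⟨1, Finset.mem_univ 1⟩

lemma mmean_const {n : ℕ} (α : Fin n → ℕ) (t : ℝ) :
    mmean α (fun _ => t) = t ^ (∑ i, α i) := by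
  have h : ∀ σ : Equiv.Perm (Fin n), monom (permActN σ α) (fun _ => t) = t ^ (∑ i, α i) := by
    intro σ
    rw [monom]
    rw [Finset.prod_pow_eq_pow_sum]
    congr 1
    exact Equiv.sum_comp σ⁻¹ α
  rw [mmean]
  rw [Finset.sum_congr rfl (fun σ _ => h σ), Finset.sum_const]
  simp [Finset.card_univ, Fintype.card_perm]
  rw [← mul_assoc, inv_mul_cancel₀ (by exact_mod_cast Nat.factorial_ne_zero n), one_mul]

lemma exists_perm_pair {n : ℕ} {a b i j : Fin n} (hab : a ≠ b) (hij : i ≠ j) :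
    ∃ ρ : Equiv.Perm (Fin n), ρ a = i ∧ ρ b = j := by
  classical
  set σ := Equiv.swap a i with hσ
  have hσa : σ a = i := Equiv.swap_apply_left a i
  set b' := σ b with hb'
  have hb'i : b' ≠ i := by
    rw [hb', ← hσa]
    intro h
    exact hab (σ.injective h).symm
  refine ⟨σ.trans (Equiv.swap b' j), ?_, ?_⟩
  · simp only [Equiv.trans_apply, hσa]
    rw [Equiv.swap_apply_of_ne_of_ne hb'i.symm hij]
  · simp only [Equiv.trans_apply, ← hb']
    exact Equiv.swap_apply_left b' j

lemma const_of_sums {n : ℕ} (u y : Fin n → ℝ) (hu : ∃ a b, u a ≠ u b)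
    (h : ∀ ρ ρ' : Equiv.Perm (Fin n), ∑ k, u k * y (ρ k) = ∑ k, u k * y (ρ' k)) :
    ∀ i j, y i = y j := by
  classical
  obtain ⟨a, b, hab⟩ := hu
  have hab' : a ≠ b := fun h' => hab (by rw [h'])
  have key : ∀ ρ : Equiv.Perm (Fin n), y (ρ a) = y (ρ b) := by
    intro ρ
    have h0 := h (ρ.trans (Equiv.refl _)) ((Equiv.swap a b).trans ρ)
    simp only [Equiv.trans_apply, Equiv.refl_apply] at h0
    have h1 : ∑ k, u k * y (ρ (Equiv.swap a b k)) = ∑ k, u (Equiv.swap a b k) * y (ρ k) := by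
      rw [← Equiv.sum_comp (Equiv.swap a b) (fun k => u (Equiv.swap a b k) * y (ρ k))]
      apply Finset.sum_congr rfl
      intro k _
      rw [Equiv.swap_apply_self]
    rw [h1] at h0
    have h2 : ∑ k, (u k * y (ρ k) - u (Equiv.swap a b k) * y (ρ k)) = 0 := by
      rw [Finset.sum_sub_distrib, h0, sub_self]
    have h3 : ∑ k ∈ ({a, b} : Finset (Fin n)), (u k * y (ρ k) - u (Equiv.swap a b k) * y (ρ k)) = 0 := by
      rw [← h2]
      apply Finset.sum_subset (Finset.subset_univ _)
      intro k _ hk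
      simp only [Finset.mem_insert, Finset.mem_singleton, not_or] at hk
      rw [Equiv.swap_apply_of_ne_of_ne hk.1 hk.2, sub_self]
    rw [Finset.sum_pair hab'] at h3
    rw [Equiv.swap_apply_left, Equiv.swap_apply_right] at h3
    have h4 : (u a - u b) * (y (ρ a) - y (ρ b)) = 0 := by linarith
    rcases mul_eq_zero.mp h4 with h5 | h5
    · exact absurd (by linarith : u a = u b) hab
    · linarith
  intro i j
  rcases eq_or_ne i j with rfl | hij
  · rfl
  · obtain ⟨ρ, hρ1, hρ2⟩ := exists_perm_pair hab' hij
    rw [← hρ1, ← hρ2]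
    exact key ρ

lemma antitone_le_of_perm' {n : ℕ} {f g : Fin n → ℕ} (hf : Antitone f) (hg : Antitone g)
    (π : Equiv.Perm (Fin n)) (h : ∀ i, f i = g (π i)) : ∀ i, f i ≤ g i := by
  intro i
  by_contra hlt
  push_neg at hlt
  have hmap : ∀ j ∈ Finset.Iic i, π j ∈ Finset.Iio i := by
    intro j hj
    rw [Finset.mem_Iic] at hj
    rw [Finset.mem_Iio]
    have h1 : g i < f j := lt_of_lt_of_le hlt (hf hj)
    have h2 : g i < g (π j) := by rw [← h j]; exact h1
    by_contra hge
    push_neg at hge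
    exact absurd (hg hge) (not_le_of_gt h2)
  have hcard := Finset.card_le_card_of_injOn π hmap (π.injective.injOn)
  rw [Fin.card_Iic, Fin.card_Iio] at hcard
  omega

example : True := trivial

lemma antitone_eq_of_perm {n : ℕ} {f g : Fin n → ℕ} (hf : Antitone f) (hg : Antitone g)
    (π : Equiv.Perm (Fin n)) (h : ∀ i, f i = g (π i)) : f = g := by
  funext i
  refine le_antisymm (antitone_le_of_perm' hf hg π h i) (antitone_le_of_perm' hg hf π⁻¹ ?_ i)
  intro j
  rw [h (π⁻¹ j)]; simp

lemma core {n : ℕ} (lam mu : Fin n → ℕ) (q : Equiv.Perm (Fin n) → ℝ)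
    (hq : ∀ σ, 0 ≤ q σ) (hθ : ∑ σ, q σ ≤ 1)
    (hrep : ∀ i, (mu i : ℝ) = ∑ τ, q τ * (lam (τ⁻¹ i) : ℝ))
    (k₀ : ℝ) (x : Fin n → ℝ) (hx : ∀ i, 0 < x i) :
    mmean mu x ≤ Real.exp (((∑ σ, q σ) - 1) * k₀) *
      ((∑ σ, q σ) * mmean lam x + (1 - ∑ σ, q σ) * Real.exp k₀) ∧
    (mmean mu x = Real.exp (((∑ σ, q σ) - 1) * k₀) *
      ((∑ σ, q σ) * mmean lam x + (1 - ∑ σ, q σ) * Real.exp k₀) →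
      ∀ σ τ : Equiv.Perm (Fin n), q τ ≠ 0 →
        (∀ τ' : Equiv.Perm (Fin n), q τ' ≠ 0 →
          (∑ k, (lam k : ℝ) * Real.log (x ((σ * τ) k)))
            = ∑ k, (lam k : ℝ) * Real.log (x ((σ * τ') k))) ∧
        ((∑ σ, q σ) ≠ 1 → (∑ k, (lam k : ℝ) * Real.log (x ((σ * τ) k))) = k₀)) := by
  classical
  set θ := ∑ σ : Equiv.Perm (Fin n), q σ with hθdef
  set A : Equiv.Perm (Fin n) → ℝ := fun ρ => ∑ k, (lam k : ℝ) * Real.log (x (ρ k)) with hA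
  have hmuA : ∀ σ : Equiv.Perm (Fin n),
      (∑ k, (mu k : ℝ) * Real.log (x (σ k))) = ∑ τ, q τ * A (σ * τ) := by
    intro σ
    have e1 : ∀ k, (mu k : ℝ) * Real.log (x (σ k))
        = ∑ τ, q τ * (lam (τ⁻¹ k) : ℝ) * Real.log (x (σ k)) := by
      intro k
      rw [hrep k, Finset.sum_mul]
    rw [Finset.sum_congr rfl (fun k _ => e1 k), Finset.sum_comm]
    apply Finset.sum_congr rfl
    intro τ _
    have e2 : A (σ * τ) = ∑ k, (lam (τ⁻¹ k) : ℝ) * Real.log (x (σ k)) := by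
      rw [hA]
      rw [← Equiv.sum_comp τ (fun k => (lam (τ⁻¹ k) : ℝ) * Real.log (x (σ k)))]
      apply Finset.sum_congr rfl
      intro k _
      simp [Equiv.Perm.mul_apply]
    rw [e2, Finset.mul_sum]
    apply Finset.sum_congr rfl
    intro k _
    ring
  -- Jensen data per σ
  set p : Option (Equiv.Perm (Fin n)) → ℝ := fun o => o.elim (1 - θ) q with hp_def
  have hp : ∀ o, 0 ≤ p o := by
    rintro (_ | τ)
    · simpa [hp_def] using sub_nonneg.mpr hθ
    · simpa [hp_def] using hq τ
  have hp1 : ∑ o : Option (Equiv.Perm (Fin n)), p o = 1 := by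
    rw [Fintype.sum_option]
    simp [hp_def, ← hθdef]
  set aσ : Equiv.Perm (Fin n) → Option (Equiv.Perm (Fin n)) → ℝ :=
    fun σ o => o.elim k₀ (fun τ => A (σ * τ)) with haσ
  have hpa : ∀ σ, ∑ o : Option (Equiv.Perm (Fin n)), p o * aσ σ o
      = (1 - θ) * k₀ + ∑ τ, q τ * A (σ * τ) := by
    intro σ
    rw [Fintype.sum_option]
    simp [hp_def, haσ]
  have hpe : ∀ σ, ∑ o : Option (Equiv.Perm (Fin n)), p o * Real.exp (aσ σ o)
      = (1 - θ) * Real.exp k₀ + ∑ τ, q τ * Real.exp (A (σ * τ)) := by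
    intro σ
    rw [Fintype.sum_option]
    simp [hp_def, haσ]
  set U : Equiv.Perm (Fin n) → ℝ := fun σ => Real.exp ((θ - 1) * k₀) *
      ((1 - θ) * Real.exp k₀ + ∑ τ, q τ * Real.exp (A (σ * τ))) with hU
  have hUσ : ∀ σ, Real.exp (∑ τ, q τ * A (σ * τ)) ≤ U σ := by
    intro σ
    have hJ := (jensen_exp_s15 (p := p) (a := aσ σ) hp hp1).1
    rw [hpa, hpe] at hJ
    have : Real.exp (∑ τ, q τ * A (σ * τ))
        = Real.exp ((θ - 1) * k₀) * Real.exp ((1 - θ) * k₀ + ∑ τ, q τ * A (σ * τ)) := by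
      rw [← Real.exp_add]; ring_nf
    rw [this, hU]
    exact mul_le_mul_of_nonneg_left hJ (Real.exp_pos _).le
  have hmm' : mmean mu x = (1/(n.factorial : ℝ)) *
      ∑ σ : Equiv.Perm (Fin n), Real.exp (∑ τ, q τ * A (σ * τ)) := by
    rw [mmean_eq _ _ hx]
    congr 1
    exact Finset.sum_congr rfl (fun σ _ => by rw [hmuA σ])
  have hElam : ∀ τ : Equiv.Perm (Fin n),
      ∑ σ : Equiv.Perm (Fin n), Real.exp (A (σ * τ))
        = ∑ σ : Equiv.Perm (Fin n), Real.exp (A σ) := by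
    intro τ
    exact Equiv.sum_comp (Equiv.mulRight τ) (fun ρ => Real.exp (A ρ))
  have hsumU : (1/(n.factorial : ℝ)) * ∑ σ : Equiv.Perm (Fin n), U σ
      = Real.exp ((θ - 1) * k₀) * (θ * mmean lam x + (1 - θ) * Real.exp k₀) := by
    have hG : mmean lam x = (1/(n.factorial : ℝ)) *
        ∑ σ : Equiv.Perm (Fin n), Real.exp (A σ) := mmean_eq _ _ hx
    rw [hU]
    have e3 : ∑ σ : Equiv.Perm (Fin n), Real.exp ((θ - 1) * k₀) *
        ((1 - θ) * Real.exp k₀ + ∑ τ, q τ * Real.exp (A (σ * τ)))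
        = Real.exp ((θ - 1) * k₀) * ((Fintype.card (Equiv.Perm (Fin n)) : ℝ) *
            ((1 - θ) * Real.exp k₀)
          + ∑ τ, q τ * ∑ σ : Equiv.Perm (Fin n), Real.exp (A σ)) := by
      rw [← Finset.mul_sum, Finset.sum_add_distrib, Finset.sum_const, Finset.card_univ]
      congr 2
      · simp [nsmul_eq_mul]
      · rw [Finset.sum_comm]
        apply Finset.sum_congr rfl
        intro τ _
        rw [← Finset.mul_sum, hElam τ]
    rw [e3]
    rw [Fintype.card_perm, Fintype.card_fin]
    have hfac : (1/(n.factorial : ℝ)) * (n.factorial : ℝ) = 1 := by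
      rw [one_div, inv_mul_cancel₀ (by exact_mod_cast Nat.factorial_ne_zero n)]
    have hG' : ∑ σ : Equiv.Perm (Fin n), Real.exp (A σ)
        = (n.factorial : ℝ) * mmean lam x := by
      rw [hG]
      field_simp
    rw [hG']
    calc (1/(n.factorial : ℝ)) * (Real.exp ((θ - 1) * k₀) *
          ((n.factorial : ℝ) * ((1 - θ) * Real.exp k₀)
            + ∑ τ, q τ * ((n.factorial : ℝ) * mmean lam x)))
        = (1/(n.factorial : ℝ)) * (Real.exp ((θ - 1) * k₀) *
          ((n.factorial : ℝ) * ((1 - θ) * Real.exp k₀)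
            + (∑ τ : Equiv.Perm (Fin n), q τ) * ((n.factorial : ℝ) * mmean lam x))) := by
          rw [Finset.sum_mul]
      _ = ((1/(n.factorial : ℝ)) * (n.factorial : ℝ)) *
            (Real.exp ((θ - 1) * k₀) * (θ * mmean lam x + (1 - θ) * Real.exp k₀)) := by
          rw [← hθdef]; ring
      _ = Real.exp ((θ - 1) * k₀) * (θ * mmean lam x + (1 - θ) * Real.exp k₀) := by
          rw [hfac, one_mul]
  constructor
  · rw [hmm', ← hsumU]
    apply mul_le_mul_of_nonneg_left _ (by positivity)
    exact Finset.sum_le_sum (fun σ _ => hUσ σ)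
  · intro heq
    have hsums : ∑ σ : Equiv.Perm (Fin n), Real.exp (∑ τ, q τ * A (σ * τ))
        = ∑ σ : Equiv.Perm (Fin n), U σ := by
      have h5 : (1/(n.factorial : ℝ)) * ∑ σ : Equiv.Perm (Fin n),
          Real.exp (∑ τ, q τ * A (σ * τ))
          = (1/(n.factorial : ℝ)) * ∑ σ : Equiv.Perm (Fin n), U σ := by
        rw [← hmm', heq, hsumU]
      have hfacpos : (0 : ℝ) < 1/(n.factorial : ℝ) := by positivity
      exact mul_left_cancel₀ (ne_of_gt hfacpos) h5
    have hall : ∀ σ : Equiv.Perm (Fin n),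
        Real.exp (∑ τ, q τ * A (σ * τ)) = U σ := by
      by_contra hcon
      push_neg at hcon
      obtain ⟨σ₀, hσ₀⟩ := hcon
      have : ∑ σ : Equiv.Perm (Fin n), Real.exp (∑ τ, q τ * A (σ * τ))
          < ∑ σ : Equiv.Perm (Fin n), U σ :=
        Finset.sum_lt_sum (fun σ _ => hUσ σ)
          ⟨σ₀, Finset.mem_univ σ₀, lt_of_le_of_ne (hUσ σ₀) hσ₀⟩
      linarith [hsums]
    intro σ τ hqτ
    -- per σ Jensen equality
    have hJeq := (jensen_exp_s15 (p := p) (a := aσ σ) hp hp1).2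
    have hflip : ∑ o : Option (Equiv.Perm (Fin n)), p o * Real.exp (aσ σ o)
        ≤ Real.exp (∑ o : Option (Equiv.Perm (Fin n)), p o * aσ σ o) := by
      rw [hpa, hpe]
      have : Real.exp ((1 - θ) * k₀ + ∑ τ, q τ * A (σ * τ))
          = Real.exp ((1 - θ) * k₀) * Real.exp (∑ τ, q τ * A (σ * τ)) := by
        rw [← Real.exp_add]
      rw [this, hall σ, hU]
      rw [← mul_assoc, ← Real.exp_add]
      have : (1 - θ) * k₀ + (θ - 1) * k₀ = 0 := by ring
      rw [this, Real.exp_zero, one_mul]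
    have hcond := hJeq hflip
    have hs := hcond (some τ) (by simpa [hp_def] using hqτ)
    constructor
    · intro τ' hqτ'
      have hs'' := hcond (some τ') (by simpa [hp_def] using hqτ')
      simp only [haσ, Option.elim_some] at hs hs''
      show A (σ * τ) = A (σ * τ')
      rw [hs, hs'']
    · intro hθ1
      have hn := hcond none (by simpa [hp_def, sub_eq_zero] using fun h => hθ1 h.symm)
      simp only [haσ, Option.elim_some, Option.elim_none] at hs hn
      show A (σ * τ) = k₀
      rw [hs, ← hn]

lemma extract_rep {n : ℕ} (lam mu : Fin n → ℕ)
    (hdom : (fun i => (mu i : ℝ)) ∈ convexHull ℝ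
      (insert (0 : Fin n → ℝ)
        {v | ∃ σ : Equiv.Perm (Fin n), v = fun i => ((permActN σ lam) i : ℝ)})) :
    ∃ q : Equiv.Perm (Fin n) → ℝ, (∀ σ, 0 ≤ q σ) ∧
      (∑ σ : Equiv.Perm (Fin n), q σ ≤ 1) ∧
      (∀ i, (mu i : ℝ) = ∑ τ : Equiv.Perm (Fin n), q τ * (lam (τ⁻¹ i) : ℝ)) := by
  classical
  rw [_root_.convexHull_eq] at hdom
  obtain ⟨ι, t, w, z, hw0, hw1, hz, hcm⟩ := hdom
  set P : Equiv.Perm (Fin n) → (Fin n → ℝ) := fun σ => fun i => ((permActN σ lam) i : ℝ)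
    with hP
  set F : ι → Option (Equiv.Perm (Fin n)) :=
    fun i => if h : ∃ σ : Equiv.Perm (Fin n), z i = P σ then some h.choose else none with hF
  set q : Equiv.Perm (Fin n) → ℝ :=
    fun σ => ∑ i ∈ t.filter (fun i => F i = some σ), w i with hq_def
  have hfib : ∀ (f : ι → Fin n → ℝ),
      ∑ o : Option (Equiv.Perm (Fin n)), ∑ i ∈ t.filter (fun i => F i = o), f i
        = ∑ i ∈ t, f i :=
    fun f => Finset.sum_fiberwise_of_maps_to (fun i _ => Finset.mem_univ (F i)) f
  have hfibR : ∀ (f : ι → ℝ),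
      ∑ o : Option (Equiv.Perm (Fin n)), ∑ i ∈ t.filter (fun i => F i = o), f i
        = ∑ i ∈ t, f i :=
    fun f => Finset.sum_fiberwise_of_maps_to (fun i _ => Finset.mem_univ (F i)) f
  have hzn : ∀ i ∈ t.filter (fun i => F i = none), z i = 0 := by
    intro i hi
    rw [Finset.mem_filter] at hi
    have hzi := hz i hi.1
    rcases Set.mem_insert_iff.mp hzi with h0 | hS
    · exact h0
    · exfalso
      obtain ⟨σ, hσ⟩ := hS
      have : F i = some (Exists.choose (⟨σ, hσ⟩ : ∃ σ, z i = P σ)) := by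
        rw [hF]; simp only []
        rw [dif_pos ⟨σ, hσ⟩]
      rw [this] at hi
      exact absurd hi.2 (by simp)
  have hzs : ∀ σ : Equiv.Perm (Fin n), ∀ i ∈ t.filter (fun i => F i = some σ), z i = P σ := by
    intro σ i hi
    rw [Finset.mem_filter] at hi
    by_cases h : ∃ σ' : Equiv.Perm (Fin n), z i = P σ'
    · have hFi : F i = some h.choose := by rw [hF]; simp only []; rw [dif_pos h]
      have := hi.2
      rw [hFi] at this
      have hcc : h.choose = σ := Option.some_injective _ this
      rw [← hcc]
      exact h.choose_spec
    · exfalso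
      have hFi : F i = none := by rw [hF]; simp only []; rw [dif_neg h]
      rw [hFi] at hi
      exact absurd hi.2 (by simp)
  have hcm' : ∑ i ∈ t, w i • z i = fun i => (mu i : ℝ) := by
    rw [← Finset.centerMass_eq_of_sum_1 t z hw1]
    exact hcm
  have hmain : (fun i => (mu i : ℝ)) = ∑ σ : Equiv.Perm (Fin n), q σ • P σ := by
    rw [← hcm', ← hfib (fun i => w i • z i), Fintype.sum_option]
    have h0 : ∑ i ∈ t.filter (fun i => F i = none), w i • z i = 0 := by
      apply Finset.sum_eq_zero
      intro i hi
      rw [hzn i hi, smul_zero]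
    rw [h0, zero_add]
    apply Finset.sum_congr rfl
    intro σ _
    rw [Finset.sum_congr rfl (fun i hi => by rw [hzs σ i hi]), ← Finset.sum_smul]
  refine ⟨q, ?_, ?_, ?_⟩
  · intro σ
    apply Finset.sum_nonneg
    intro i hi
    exact hw0 i (Finset.mem_filter.mp hi).1
  · have := hfibR w
    rw [Fintype.sum_option] at this
    have hnn : 0 ≤ ∑ i ∈ t.filter (fun i => F i = none), w i :=
      Finset.sum_nonneg (fun i hi => hw0 i (Finset.mem_filter.mp hi).1)
    rw [hw1] at this
    calc ∑ σ : Equiv.Perm (Fin n), q σ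
        = 1 - ∑ i ∈ t.filter (fun i => F i = none), w i := by rw [← this]; ring
      _ ≤ 1 := by linarith
  · intro j
    have := congrFun hmain j
    rw [this, Finset.sum_apply]
    apply Finset.sum_congr rfl
    intro σ _
    simp [hP, permActN]

lemma mmean_of_zero {n : ℕ} (mu : Fin n → ℕ) (hmu : ∀ i, mu i = 0) (x : Fin n → ℝ) :
    mmean mu x = 1 := by
  have h : ∀ σ : Equiv.Perm (Fin n), monom (permActN σ mu) x = 1 := by
    intro σ
    simp [monom, permActN, hmu]
  rw [mmean, Finset.sum_congr rfl (fun σ _ => h σ), Finset.sum_const]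
  simp [Finset.card_univ, Fintype.card_perm, Fintype.card_fin]
  rw [inv_mul_cancel₀ (by exact_mod_cast Nat.factorial_ne_zero n)]

lemma part_one {n : ℕ} (lam mu : Fin n → ℕ) (q : Equiv.Perm (Fin n) → ℝ)
    (hq0 : ∀ σ, 0 ≤ q σ) (hq1 : ∑ σ : Equiv.Perm (Fin n), q σ ≤ 1)
    (hrep : ∀ i, (mu i : ℝ) = ∑ τ : Equiv.Perm (Fin n), q τ * (lam (τ⁻¹ i) : ℝ))
    (c : ℝ) (hc : 0 < c) (L M : ℝ) (hL : L = ∑ i, (lam i : ℝ)) (hM : M = ∑ i, (mu i : ℝ))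
    (δ t₀ : ℝ) (hδ : δ = -c * ((L - M)/L) * (c * M / L) ^ (M/(L - M)))
    (ht₀ : t₀ = (c * M / L) ^ ((1 : ℝ)/(L - M)))
    (hlt : ∑ i, mu i < ∑ i, lam i) (hn : ∑ i, lam i ≤ n) :
    (∀ x : Fin n → ℝ, (∀ i, 0 < x i) → δ ≤ mmean lam x - c * mmean mu x) ∧
    (∀ x : Fin n → ℝ, (∀ i, 0 < x i) →
      (mmean lam x - c * mmean mu x = δ ↔ ∀ i, x i = t₀)) := by
  classical
  have hLnat : ((∑ i, lam i : ℕ) : ℝ) = L := by rw [hL, Nat.cast_sum]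
  have hMnat : ((∑ i, mu i : ℕ) : ℝ) = M := by rw [hM, Nat.cast_sum]
  have hSL1 : 1 ≤ ∑ i, lam i := Nat.one_le_iff_ne_zero.mpr (by omega)
  have hnpos : 0 < n := lt_of_lt_of_le hSL1 hn
  have hLpos : 0 < L := by rw [← hLnat]; exact_mod_cast hSL1
  have hMlt : M < L := by rw [← hLnat, ← hMnat]; exact_mod_cast hlt
  have hL0 : L ≠ 0 := ne_of_gt hLpos
  have hLM0 : L - M ≠ 0 := ne_of_gt (by linarith)
  -- relation: M = (∑ q) * L
  have hML : M = (∑ σ : Equiv.Perm (Fin n), q σ) * L := by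
    have e1 : ∀ τ : Equiv.Perm (Fin n), ∑ j, (lam (τ⁻¹ j) : ℝ) = L := by
      intro τ
      rw [hL]
      exact Equiv.sum_comp τ⁻¹ (fun j => (lam j : ℝ))
    calc M = ∑ j, (mu j : ℝ) := hM
      _ = ∑ j, ∑ τ : Equiv.Perm (Fin n), q τ * (lam (τ⁻¹ j) : ℝ) :=
          Finset.sum_congr rfl (fun j _ => hrep j)
      _ = ∑ τ : Equiv.Perm (Fin n), ∑ j, q τ * (lam (τ⁻¹ j) : ℝ) := Finset.sum_comm
      _ = ∑ τ : Equiv.Perm (Fin n), q τ * L := by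
          apply Finset.sum_congr rfl
          intro τ _
          rw [← Finset.mul_sum, e1 τ]
      _ = (∑ σ : Equiv.Perm (Fin n), q σ) * L := by rw [Finset.sum_mul]
  set θq := ∑ σ : Equiv.Perm (Fin n), q σ with hθqdef
  have hθq : θq = M / L := by rw [eq_div_iff hL0, ← hML]
  rcases Nat.eq_zero_or_pos (∑ i, mu i) with hSM0 | hSMpos
  · -- M = 0 case
    have hmu0 : ∀ i, mu i = 0 := by
      intro i
      have := Finset.sum_eq_zero_iff.mp hSM0
      exact this i (Finset.mem_univ i)
    have hM0 : M = 0 := by rw [← hMnat, hSM0]; simp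
    have hδc : δ = -c := by
      rw [hδ, hM0]
      simp [hL0, div_self hL0]
    have ht₀0 : t₀ = 0 := by
      rw [ht₀, hM0]
      rw [show c * 0 / L = 0 by ring]
      exact Real.zero_rpow (by simp [hL0, sub_zero])
    constructor
    · intro x hx
      rw [mmean_of_zero mu hmu0 x, hδc]
      have := mmean_pos lam x hx
      linarith
    · intro x hx
      rw [mmean_of_zero mu hmu0 x, hδc, ht₀0]
      constructor
      · intro h
        exfalso
        have := mmean_pos lam x hx
        linarith
      · intro h
        exfalso
        have := hx ⟨0, hnpos⟩
        rw [h ⟨0, hnpos⟩] at this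
        exact lt_irrefl 0 this
  · -- M > 0 case
    have hMpos : 0 < M := by rw [← hMnat]; exact_mod_cast hSMpos
    have hθpos : 0 < θq := by rw [hθq]; positivity
    have hθlt1 : θq < 1 := by rw [hθq]; rw [div_lt_one hLpos]; exact hMlt
    have hθne1 : θq ≠ 1 := ne_of_lt hθlt1
    set β := c * M / L with hβdef
    have hβpos : 0 < β := by positivity
    set K := β ^ (L / (L - M)) with hKdef
    have hKpos : 0 < K := Real.rpow_pos_of_pos hβpos _
    have hKr : ∀ r : ℝ, K ^ r = β ^ ((L / (L - M)) * r) := by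
      intro r
      rw [hKdef, ← Real.rpow_mul hβpos.le]
    have hK1 : c * θq * K ^ (θq - 1) = 1 := by
      rw [hKr, show (L / (L - M)) * (θq - 1) = -1 by rw [hθq]; field_simp; ring,
        Real.rpow_neg_one]
      rw [hθq, hβdef]
      field_simp
    have hK2 : K ^ θq = β ^ (M / (L - M)) := by
      rw [hKr, hθq]
      congr 1
      field_simp
    have hK3 : K ^ (θq - 1) * K = K ^ θq := by
      rw [← Real.rpow_add_one (ne_of_gt hKpos) (θq - 1), sub_add_cancel]
    have hδ' : δ = -(c * (1 - θq) * K ^ θq) := by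
      rw [hδ, hK2, hθq]
      have e : (L - M) / L = 1 - M / L := by field_simp
      rw [e]
      ring
    have hGB : ∀ G' : ℝ, G' - c * (K ^ (θq - 1) * (θq * G' + (1 - θq) * K)) = δ := by
      intro G'
      rw [hδ']
      linear_combination (-G') * hK1 - (c * (1 - θq)) * hK3
    -- core bound with k₀ = log K
    have hcore := fun (x : Fin n → ℝ) (hx : ∀ i, 0 < x i) =>
      core lam mu q hq0 hq1 hrep (Real.log K) x hx
    have hexp1 : Real.exp (Real.log K) = K := Real.exp_log hKpos
    have hexp2 : Real.exp ((θq - 1) * Real.log K) = K ^ (θq - 1) := by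
      rw [Real.rpow_def_of_pos hKpos, mul_comm]
    have hineq : ∀ (x : Fin n → ℝ), (∀ i, 0 < x i) →
        mmean mu x ≤ K ^ (θq - 1) * (θq * mmean lam x + (1 - θq) * K) := by
      intro x hx
      have h1 := (hcore x hx).1
      rwa [hexp1, hexp2] at h1
    constructor
    · intro x hx
      have h1 := hineq x hx
      have h2 := mul_le_mul_of_nonneg_left h1 hc.le
      linarith [hGB (mmean lam x)]
    · intro x hx
      constructor
      · -- equality implies x = const t₀
        intro heq
        have h1 := hineq x hx
        have hGBx := hGB (mmean lam x)
        have hmB : mmean mu x = K ^ (θq - 1) * (θq * mmean lam x + (1 - θq) * K) := by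
          have h2 : c * mmean mu x
              = c * (K ^ (θq - 1) * (θq * mmean lam x + (1 - θq) * K)) := by linarith
          exact mul_left_cancel₀ (ne_of_gt hc) h2
        have hclause := (hcore x hx).2 (by rw [hexp1, hexp2]; exact hmB)
        have hτ₀ : ∃ τ₀ : Equiv.Perm (Fin n), q τ₀ ≠ 0 := by
          by_contra hcon
          push_neg at hcon
          have hz : θq = 0 := by
            rw [hθqdef]
            exact Finset.sum_eq_zero (fun τ _ => hcon τ)
          linarith
        obtain ⟨τ₀, hqτ₀⟩ := hτ₀
        have hALL : ∀ ρ : Equiv.Perm (Fin n),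
            (∑ k, (lam k : ℝ) * Real.log (x (ρ k))) = Real.log K := by
          intro ρ
          have h3 := (hclause (ρ * τ₀⁻¹) τ₀ hqτ₀).2 (by rw [← hθqdef]; exact hθne1)
          rwa [inv_mul_cancel_right] at h3
        by_cases hcst : ∀ k k' : Fin n, lam k = lam k'
        · exfalso
          set i0 : Fin n := ⟨0, hnpos⟩ with hi0
          have hSLn : ∑ i, lam i = n * lam i0 := by
            rw [Finset.sum_congr rfl (fun i _ => hcst i i0), Finset.sum_const,
              Finset.card_univ, Fintype.card_fin, smul_eq_mul]
          have h4 : n * lam i0 ≤ n := hSLn ▸ hn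
          have h5 : 1 ≤ n * lam i0 := hSLn ▸ hSL1
          have hk1 : lam i0 = 1 := by
            by_contra hne1
            rcases Nat.lt_or_ge (lam i0) 1 with h | h
            · have h0 : lam i0 = 0 := by omega
              rw [h0, Nat.mul_zero] at h5
              omega
            · have h2' : 2 ≤ lam i0 := by omega
              have h6 : n * 2 ≤ n * lam i0 := Nat.mul_le_mul_left n h2'
              omega
          have h7 := hrep i0
          have h8 : ∀ τ : Equiv.Perm (Fin n), (lam (τ⁻¹ i0) : ℝ) = 1 := by
            intro τ
            rw [hcst (τ⁻¹ i0) i0, hk1]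
            norm_num
          rw [Finset.sum_congr rfl (fun τ _ => by rw [h8 τ, mul_one])] at h7
          rw [← hθqdef] at h7
          rcases Nat.eq_zero_or_pos (mu i0) with h9 | h9
          · rw [h9] at h7
            simp at h7
            linarith
          · have h10 : (1 : ℝ) ≤ (mu i0 : ℝ) := by exact_mod_cast h9
            linarith
        · push_neg at hcst
          obtain ⟨k1, k2, hk12⟩ := hcst
          have hyc := const_of_sums (fun k => (lam k : ℝ)) (fun i => Real.log (x i))
            ⟨k1, k2, fun h => hk12 (Nat.cast_inj.mp h)⟩
            (fun ρ ρ' => by rw [hALL ρ, hALL ρ'])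
          have hyc' : ∀ i j : Fin n, Real.log (x i) = Real.log (x j) := fun i j => hyc i j
          have hxeq : ∀ i j : Fin n, x i = x j := by
            intro i j
            rw [← Real.exp_log (hx i), ← Real.exp_log (hx j), hyc' i j]
          have hi0 : (0 : ℕ) < n := hnpos
          set i0 : Fin n := ⟨0, hnpos⟩ with hi0def
          have htvpos : 0 < x i0 := hx i0
          have hLlog : L * Real.log (x i0) = Real.log K := by
            have h10 := hALL 1
            have h11 : ∀ k : Fin n, (lam k : ℝ) * Real.log (x ((1 : Equiv.Perm (Fin n)) k))
                = (lam k : ℝ) * Real.log (x i0) := by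
              intro k
              rw [show ((1 : Equiv.Perm (Fin n)) k) = k from rfl, hxeq k i0]
            rw [Finset.sum_congr rfl (fun k _ => h11 k), ← Finset.sum_mul, ← hL] at h10
            exact h10
          intro i
          rw [hxeq i i0]
          have h12 : Real.log (x i0) = Real.log K * (1 / L) := by
            field_simp
            linarith [hLlog]
          calc x i0 = Real.exp (Real.log (x i0)) := (Real.exp_log htvpos).symm
            _ = Real.exp (Real.log K * (1 / L)) := by rw [h12]
            _ = K ^ ((1 : ℝ) / L) := (Real.rpow_def_of_pos hKpos _).symm
            _ = β ^ ((L / (L - M)) * (1 / L)) := hKr _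
            _ = β ^ ((1 : ℝ) / (L - M)) := by congr 1; field_simp
            _ = t₀ := ht₀.symm
      · -- const t₀ implies equality
        intro hxt
        have hx0 : x = fun _ => t₀ := funext hxt
        rw [hx0, mmean_const, mmean_const]
        have e1 : t₀ ^ (∑ i, lam i) = β ^ (L / (L - M)) := by
          rw [← Real.rpow_natCast t₀ (∑ i, lam i), hLnat, ht₀, ← Real.rpow_mul hβpos.le]
          congr 1
          field_simp
        have e2 : t₀ ^ (∑ i, mu i) = β ^ (M / (L - M)) := by
          rw [← Real.rpow_natCast t₀ (∑ i, mu i), hMnat, ht₀, ← Real.rpow_mul hβpos.le]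
          congr 1
          field_simp
        rw [e1, e2, hδ]
        have e3 : (L / (L - M)) = M / (L - M) + 1 := by field_simp; ring
        rw [e3, Real.rpow_add hβpos, Real.rpow_one]
        have e5 : β - c = -(c * ((L - M) / L)) := by
          rw [hβdef]
          field_simp
          ring
        linear_combination (β ^ (M / (L - M))) * e5

lemma part_two {n : ℕ} (lam mu : Fin n → ℕ) (hlam : Antitone lam) (hmu : Antitone mu)
    (q : Equiv.Perm (Fin n) → ℝ)
    (hq0 : ∀ σ, 0 ≤ q σ) (hq1 : ∑ σ : Equiv.Perm (Fin n), q σ ≤ 1)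
    (hrep : ∀ i, (mu i : ℝ) = ∑ τ : Equiv.Perm (Fin n), q τ * (lam (τ⁻¹ i) : ℝ))
    (c : ℝ) (hc : 0 < c) (hc1 : c ≤ 1) (hEq : ∑ i, lam i = ∑ i, mu i) :
    (∀ x : Fin n → ℝ, (∀ i, 0 < x i) → 0 ≤ mmean lam x - c * mmean mu x) ∧
    (c < 1 → ∀ x : Fin n → ℝ, (∀ i, 0 < x i) →
      0 < mmean lam x - c * mmean mu x) ∧
    (c = 1 →
      (lam = mu → ∀ x : Fin n → ℝ, (∀ i, 0 < x i) →
        mmean lam x - mmean mu x = 0) ∧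
      (lam ≠ mu → ∀ x : Fin n → ℝ, (∀ i, 0 < x i) →
        (mmean lam x - mmean mu x = 0 ↔ ∃ t : ℝ, ∀ i, x i = t))) := by
  classical
  rcases Nat.eq_zero_or_pos (∑ i, lam i) with hS0 | hSpos
  · -- degenerate: lam = mu = 0
    have hlam0 : ∀ i, lam i = 0 :=
      fun i => Finset.sum_eq_zero_iff.mp hS0 i (Finset.mem_univ i)
    have hmu0 : ∀ i, mu i = 0 :=
      fun i => Finset.sum_eq_zero_iff.mp (hEq ▸ hS0) i (Finset.mem_univ i)
    have hlm : lam = mu := funext (fun i => by rw [hlam0 i, hmu0 i])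
    refine ⟨?_, ?_, ?_⟩
    · intro x hx
      rw [← hlm]
      nlinarith [mmean_pos lam x hx]
    · intro hclt x hx
      rw [← hlm]
      nlinarith [mmean_pos lam x hx]
    · intro hc1'
      refine ⟨fun h x hx => by rw [h]; ring, fun hne => absurd hlm hne⟩
  · -- nondegenerate
    have hLpos : (0 : ℝ) < ((∑ i, lam i : ℕ) : ℝ) := by exact_mod_cast hSpos
    have hML : ((∑ i, mu i : ℕ) : ℝ) = (∑ σ : Equiv.Perm (Fin n), q σ) *
        ((∑ i, lam i : ℕ) : ℝ) := by
      have e1 : ∀ τ : Equiv.Perm (Fin n), ∑ j, (lam (τ⁻¹ j) : ℝ)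
          = ((∑ i, lam i : ℕ) : ℝ) := by
        intro τ
        rw [Nat.cast_sum]
        exact Equiv.sum_comp τ⁻¹ (fun j => (lam j : ℝ))
      calc ((∑ i, mu i : ℕ) : ℝ) = ∑ j, (mu j : ℝ) := Nat.cast_sum _ _
        _ = ∑ j, ∑ τ : Equiv.Perm (Fin n), q τ * (lam (τ⁻¹ j) : ℝ) :=
            Finset.sum_congr rfl (fun j _ => hrep j)
        _ = ∑ τ : Equiv.Perm (Fin n), ∑ j, q τ * (lam (τ⁻¹ j) : ℝ) := Finset.sum_comm
        _ = ∑ τ : Equiv.Perm (Fin n), q τ * ((∑ i, lam i : ℕ) : ℝ) := by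
            apply Finset.sum_congr rfl
            intro τ _
            rw [← Finset.mul_sum, e1 τ]
        _ = (∑ σ : Equiv.Perm (Fin n), q σ) * ((∑ i, lam i : ℕ) : ℝ) := by
            rw [Finset.sum_mul]
    have hθq1 : ∑ σ : Equiv.Perm (Fin n), q σ = 1 := by
      have h2 : ((∑ i, mu i : ℕ) : ℝ) = ((∑ i, lam i : ℕ) : ℝ) := by rw [hEq]
      have h3 := hML
      rw [h2] at h3
      have h4 : (∑ σ : Equiv.Perm (Fin n), q σ) * ((∑ i, lam i : ℕ) : ℝ)
          = 1 * ((∑ i, lam i : ℕ) : ℝ) := by rw [one_mul]; linarith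
      exact mul_right_cancel₀ (ne_of_gt hLpos) h4
    have hbound : ∀ (x : Fin n → ℝ), (∀ i, 0 < x i) → mmean mu x ≤ mmean lam x := by
      intro x hx
      have h1 := (core lam mu q hq0 hq1 hrep 0 x hx).1
      rw [hθq1] at h1
      simpa using h1
    refine ⟨?_, ?_, ?_⟩
    · intro x hx
      nlinarith [mmean_pos mu x hx, hbound x hx]
    · intro hclt x hx
      nlinarith [mmean_pos mu x hx, hbound x hx]
    · intro hc1'
      constructor
      · intro h x hx
        rw [h]
        ring
      · intro hne x hx
        constructor
        · -- equality implies constant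
          intro heq
          have hmB : mmean mu x = mmean lam x := by linarith
          have hclause := (core lam mu q hq0 hq1 hrep 0 x hx).2 (by
            rw [hθq1]
            simpa using hmB)
          have hτ₀ : ∃ τ₀ : Equiv.Perm (Fin n), q τ₀ ≠ 0 := by
            by_contra hcon
            push_neg at hcon
            rw [Finset.sum_eq_zero (fun τ _ => hcon τ)] at hθq1
            norm_num at hθq1
          obtain ⟨τ₀, hqτ₀⟩ := hτ₀
          by_cases hall : ∀ τ' : Equiv.Perm (Fin n), q τ' ≠ 0 →
              ∀ i, lam (τ'⁻¹ i) = lam (τ₀⁻¹ i)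
          · exfalso
            have hmu_i : ∀ i, (mu i : ℝ) = (lam (τ₀⁻¹ i) : ℝ) := by
              intro i
              rw [hrep i]
              calc ∑ τ : Equiv.Perm (Fin n), q τ * (lam (τ⁻¹ i) : ℝ)
                  = ∑ τ : Equiv.Perm (Fin n), q τ * (lam (τ₀⁻¹ i) : ℝ) := by
                    apply Finset.sum_congr rfl
                    intro τ _
                    by_cases h : q τ = 0
                    · rw [h, zero_mul, zero_mul]
                    · rw [hall τ h i]
                _ = (∑ τ : Equiv.Perm (Fin n), q τ) * (lam (τ₀⁻¹ i) : ℝ) := by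
                    rw [Finset.sum_mul]
                _ = (lam (τ₀⁻¹ i) : ℝ) := by rw [hθq1, one_mul]
            have hmuN : ∀ i, mu i = lam (τ₀⁻¹ i) :=
              fun i => Nat.cast_inj.mp (hmu_i i)
            exact hne (antitone_eq_of_perm hmu hlam τ₀⁻¹ hmuN).symm
          · push_neg at hall
            obtain ⟨τ', hqτ', i1, hne2⟩ := hall
            set π := τ₀⁻¹ * τ' with hπ
            have hAρ : ∀ ρ : Equiv.Perm (Fin n),
                (∑ k, (lam k : ℝ) * Real.log (x (ρ k)))
                  = ∑ k, (lam k : ℝ) * Real.log (x ((ρ * π) k)) := by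
              intro ρ
              have h3 := (hclause (ρ * τ₀⁻¹) τ₀ hqτ₀).1 τ' hqτ'
              have e1 : (ρ * τ₀⁻¹) * τ₀ = ρ := inv_mul_cancel_right ρ τ₀
              have e2 : (ρ * τ₀⁻¹) * τ' = ρ * π := by rw [hπ, mul_assoc]
              rw [e1, e2] at h3
              exact h3
            have hreidx : ∀ ρ : Equiv.Perm (Fin n),
                (∑ k, (lam k : ℝ) * Real.log (x ((ρ * π) k)))
                  = ∑ m, (lam (π⁻¹ m) : ℝ) * Real.log (x (ρ m)) := by
              intro ρ
              rw [← Equiv.sum_comp π (fun m => (lam (π⁻¹ m) : ℝ) * Real.log (x (ρ m)))]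
              apply Finset.sum_congr rfl
              intro k _
              simp [Equiv.Perm.mul_apply]
            set u : Fin n → ℝ := fun m => (lam m : ℝ) - (lam (π⁻¹ m) : ℝ) with hu_def
            have huρ : ∀ ρ : Equiv.Perm (Fin n), ∑ m, u m * Real.log (x (ρ m)) = 0 := by
              intro ρ
              have h4 : ∑ m, u m * Real.log (x (ρ m))
                  = (∑ k, (lam k : ℝ) * Real.log (x (ρ k)))
                    - ∑ m, (lam (π⁻¹ m) : ℝ) * Real.log (x (ρ m)) := by
                rw [← Finset.sum_sub_distrib]
                apply Finset.sum_congr rfl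
                intro m _
                rw [hu_def]
                ring
              rw [h4, ← hreidx ρ, ← hAρ ρ, sub_self]
            have hπinv : π⁻¹ (τ₀⁻¹ i1) = τ'⁻¹ i1 := by
              rw [hπ, mul_inv_rev, inv_inv]
              simp [Equiv.Perm.mul_apply]
            have hu1 : u (τ₀⁻¹ i1) ≠ 0 := by
              rw [hu_def]
              simp only [hπinv]
              rw [sub_ne_zero]
              exact fun h => hne2.symm (Nat.cast_inj.mp h)
            have hsumu : ∑ m, u m = 0 := by
              rw [hu_def, Finset.sum_sub_distrib]
              rw [Equiv.sum_comp π⁻¹ (fun m => (lam m : ℝ))]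
              ring
            have hex : ∃ a b, u a ≠ u b := by
              by_contra hcon
              push_neg at hcon
              have hconst : ∀ m, u m = u (τ₀⁻¹ i1) := fun m => hcon m _
              rw [Finset.sum_congr rfl (fun m _ => hconst m), Finset.sum_const,
                Finset.card_univ, Fintype.card_fin, nsmul_eq_mul] at hsumu
              have hn0 : (0 : ℝ) < n := by exact_mod_cast (Fin.pos i1)
              have : u (τ₀⁻¹ i1) = 0 := by
                rcases mul_eq_zero.mp hsumu with h | h
                · exact absurd h (ne_of_gt hn0)
                · exact h
              exact hu1 this
            have hyc := const_of_sums u (fun i => Real.log (x i)) hex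
              (fun ρ ρ' => by rw [huρ ρ, huρ ρ'])
            have hyc' : ∀ i j : Fin n, Real.log (x i) = Real.log (x j) :=
              fun i j => hyc i j
            refine ⟨x i1, fun i => ?_⟩
            rw [← Real.exp_log (hx i), ← Real.exp_log (hx i1), hyc' i i1]
        · rintro ⟨t, ht⟩
          have hx0 : x = fun _ => t := funext ht
          rw [hx0, mmean_const, mmean_const, hEq]
          ring

/-- Generalized Muirhead inequality: for integer partitions `lam ⪰* mu`
(i.e. `mu ∈ conv({0} ∪ S_n·lam)`) and `c > 0`, with `L = |lam|`, `M = |mu|`: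
(1) if `M < L` and `L ≤ n`, then `m_lam - c·m_mu ≥ δ` on the open positive orthant
with `δ = -c((L-M)/L)(cM/L)^{M/(L-M)}`, with equality exactly at the diagonal point
`x₁ = ⋯ = xₙ = (cM/L)^{1/(L-M)}`;
(2) if `L = M` and `0 < c ≤ 1`, then `m_lam - c·m_mu ≥ 0` on the open positive
orthant, strictly if `c < 1`; for `c = 1` equality holds everywhere if `lam = mu`
and exactly on the diagonal otherwise. -/
theorem stmt15 {n : ℕ} (lam mu : Fin n → ℕ)
    (hlam : Antitone lam) (hmu : Antitone mu)
    (hdom : (fun i => (mu i : ℝ)) ∈ convexHull ℝ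
      (insert (0 : Fin n → ℝ)
        {v | ∃ σ : Equiv.Perm (Fin n), v = fun i => ((permActN σ lam) i : ℝ)}))
    (c : ℝ) (hc : 0 < c)
    (L M : ℝ) (hL : L = ∑ i, (lam i : ℝ)) (hM : M = ∑ i, (mu i : ℝ))
    (δ t₀ : ℝ) (hδ : δ = -c * ((L - M)/L) * (c * M / L) ^ (M/(L - M)))
    (ht₀ : t₀ = (c * M / L) ^ ((1 : ℝ)/(L - M))) :
    ((∑ i, mu i < ∑ i, lam i) → (∑ i, lam i ≤ n) →
      (∀ x : Fin n → ℝ, (∀ i, 0 < x i) → δ ≤ mmean lam x - c * mmean mu x) ∧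
      (∀ x : Fin n → ℝ, (∀ i, 0 < x i) →
        (mmean lam x - c * mmean mu x = δ ↔ ∀ i, x i = t₀))) ∧
    ((∑ i, lam i = ∑ i, mu i) → c ≤ 1 →
      (∀ x : Fin n → ℝ, (∀ i, 0 < x i) → 0 ≤ mmean lam x - c * mmean mu x) ∧
      (c < 1 → ∀ x : Fin n → ℝ, (∀ i, 0 < x i) →
        0 < mmean lam x - c * mmean mu x) ∧
      (c = 1 →
        (lam = mu → ∀ x : Fin n → ℝ, (∀ i, 0 < x i) →
          mmean lam x - mmean mu x = 0) ∧
        (lam ≠ mu → ∀ x : Fin n → ℝ, (∀ i, 0 < x i) →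
          (mmean lam x - mmean mu x = 0 ↔ ∃ t : ℝ, ∀ i, x i = t)))) := by
  obtain ⟨q, hq0, hq1, hrep⟩ := extract_rep lam mu hdom
  exact ⟨fun hlt hn => part_one lam mu q hq0 hq1 hrep c hc L M hL hM δ t₀ hδ ht₀ hlt hn,
    fun hEq hc1 => part_two lam mu hlam hmu q hq0 hq1 hrep c hc hc1 hEq⟩
end

section
/- For k ≥ 2, let M₆^{(k)}(x) = Σ_{i=1}^k x_i⁶ and M₃₃^{(k)}(x) = Σ_{1≤i<j≤k} x_i³x_j³, with support T_k = {6e_i : 1 ≤ i ≤ k} ∪ {3e_i + 3e_j : 1 ≤ i < j ≤ k} ⊂ ℕ^k. Then for α, β ∈ ℝ: the polynomial α·M₆^{(k)} + β·M₃₃^{(k)} belongs to C_SONC(T_k) for every k ≥ 2 if and only if α ≥ 0 and β = 0. In contrast, since (Σ_{i=1}^k x_i³)² = M₆^{(k)} + 2·M₃₃^{(k)}, the polynomial M₆^{(k)} + 2·M₃₃^{(k)} is nonnegative on ℝ^k for every k ≥ 2; hence the limit SONC cone {(α,β) : α·M₆^{(k)} + β·M₃₃^{(k)} ∈ C_SONC(T_k)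 for all k ≥ 2} = ℝ₊ × {0} has strictly smaller dimension than the corresponding limit cone of nonnegative polynomials. -/
open Finset

def uu {k : ℕ} (i : Fin k) : Fin k → ℕ := fun j => if j = i then 6 else 0
def vv {k : ℕ} (p : Fin k × Fin k) : Fin k → ℕ := fun j => if j = p.1 ∨ j = p.2 then 3 else 0

lemma uu_even {k : ℕ} (i : Fin k) : ∀ m, Even (uu i m) := by
  intro m; unfold uu; split
  · exact ⟨3, rfl⟩
  · exact ⟨0, rfl⟩

lemma vv_not_even {k : ℕ} {p : Fin k × Fin k} : ¬ ∀ m, Even (vv p m) := by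
  intro h; have := h p.1; simp [vv] at this
  exact absurd (Nat.even_iff.mp this) (by norm_num)

lemma uu_ne_vv {k : ℕ} (i : Fin k) (p : Fin k × Fin k) : uu i ≠ vv p := by
  intro h
  have := congrFun h p.1
  simp [uu, vv] at this
  split at this <;> omega

lemma uu_inj {k : ℕ} : Function.Injective (uu (k := k)) := by
  intro i i' h
  have := congrFun h i
  simp [uu] at this
  by_contra hne
  exact absurd this hne

lemma monom_uu {k : ℕ} (i : Fin k) (x : Fin k → ℝ) : monom (uu i) x = x i ^ 6 := by
  unfold monom
  rw [← Finset.prod_subset (Finset.subset_univ {i})]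
  · simp [uu]
  · intro m _ hm; simp at hm; simp [uu, hm]

lemma monom_vv {k : ℕ} {p : Fin k × Fin k} (hp : p.1 ≠ p.2) (x : Fin k → ℝ) :
    monom (vv p) x = x p.1 ^ 3 * x p.2 ^ 3 := by
  unfold monom
  rw [← Finset.prod_subset (Finset.subset_univ {p.1, p.2})]
  · rw [Finset.prod_pair hp]; simp [vv]
  · intro m _ hm; simp at hm; simp [vv, hm.1, hm.2]

def UU (k : ℕ) : Finset (Fin k → ℕ) := Finset.univ.image uu
def SS (k : ℕ) : Finset (Fin k × Fin k) := Finset.univ.filter (fun p => p.1 < p.2)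
def VV (k : ℕ) : Finset (Fin k → ℕ) := Finset.univ.offDiag.image vv

-- membership of vv's index set
lemma vv_eq_vv {k : ℕ} {p q : Fin k × Fin k} (hp : p.1 < p.2) (hq : q.1 < q.2)
    (h : vv p = vv q) : p = q := by
  have key : ∀ m : Fin k, (m = p.1 ∨ m = p.2) ↔ (m = q.1 ∨ m = q.2) := by
    intro m
    have := congrFun h m
    simp only [vv] at this
    constructor <;> intro hm
    · by_contra hc; push_neg at hc
      rw [if_pos hm, if_neg (by tauto)] at this; omega
    · by_contra hc; push_neg at hc
      rw [if_neg (by tauto), if_pos hm] at this; omega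
  have h1 := (key p.1).mp (Or.inl rfl)
  have h2 := (key p.2).mp (Or.inr rfl)
  have h3 := (key q.1).mpr (Or.inl rfl)
  have h4 := (key q.2).mpr (Or.inr rfl)
  have e1 : p.1 = q.1 := by
    rcases h1 with h|h
    · exact h
    · rcases h3 with h'|h'
      · exact h'.symm
      · exact absurd (hq.trans_eq h.symm) (lt_asymm (hp.trans_eq h'.symm))
  have e2 : p.2 = q.2 := by
    rcases h2 with h|h
    · exact absurd (hp.trans_eq (h.trans e1.symm)) (lt_irrefl _)
    · exact h
  exact Prod.ext_iff.mpr ⟨e1, e2⟩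
lemma VV_eq {k : ℕ} : VV k = (SS k).image vv := by
  unfold VV SS
  apply Finset.Subset.antisymm
  · intro a ha
    simp only [Finset.mem_image, Finset.mem_offDiag, Finset.mem_filter, Finset.mem_univ,
      true_and] at ha ⊢
    obtain ⟨p, hp, rfl⟩ := ha
    rcases lt_or_gt_of_ne hp with h|h
    · exact ⟨p, h, rfl⟩
    · refine ⟨(p.2, p.1), h, ?_⟩
      funext m; simp [vv, or_comm]
  · intro a ha
    simp only [Finset.mem_image, Finset.mem_offDiag, Finset.mem_filter, Finset.mem_univ,
      true_and] at ha ⊢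
    obtain ⟨p, hp, rfl⟩ := ha
    exact ⟨p, ne_of_lt hp, rfl⟩

lemma VV_card {k : ℕ} : (VV k).card = (SS k).card := by
  rw [VV_eq]
  apply Finset.card_image_of_injOn
  intro p hp q hq h
  simp only [SS, Finset.coe_filter, Set.mem_setOf_eq, Finset.mem_univ, true_and] at hp hq
  exact vv_eq_vv hp hq h

lemma SS_card_sum {k : ℕ} :
    ((SS k).card : ℝ) = ∑ i : Fin k, ((Finset.univ.filter (fun j => i < j)).card : ℝ) := by
  unfold SS
  rw [Finset.card_filter]
  push_cast
  rw [Fintype.sum_prod_type]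
  apply Finset.sum_congr rfl
  intro i _
  rw [Finset.card_filter]
  push_cast
  rfl

lemma SS_card2 {k : ℕ} : 2 * (SS k).card = k * k - k := by
  have hswap : ((Finset.univ.filter (fun p : Fin k × Fin k => p.2 < p.1)).card) = (SS k).card := by
    apply Finset.card_bij (fun p _ => p.swap)
    · intro p hp; simp only [SS, Finset.mem_filter, Finset.mem_univ, true_and] at *
      exact hp
    · intro p hp q hq h
      exact Prod.swap_injective h
    · intro q hq
      refine ⟨q.swap, ?_, by simp⟩
      simp only [SS, Finset.mem_filter, Finset.mem_univ, true_and] at *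
      exact hq
  have hsplit : (Finset.univ : Finset (Fin k)).offDiag
      = SS k ∪ (Finset.univ.filter (fun p : Fin k × Fin k => p.2 < p.1)) := by
    ext p
    simp only [Finset.mem_offDiag, Finset.mem_union, SS, Finset.mem_filter, Finset.mem_univ,
      true_and]
    constructor
    · intro h; exact lt_or_gt_of_ne h
    · rintro (h|h)
      · exact h.ne
      · exact h.ne'
  have hd : Disjoint (SS k) (Finset.univ.filter (fun p : Fin k × Fin k => p.2 < p.1)) := by
    rw [Finset.disjoint_left]
    intro p hp hq
    simp only [SS, Finset.mem_filter] at hp hq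
    exact absurd hq.2 (not_lt.mpr hp.2.le)
  have := Finset.offDiag_card (Finset.univ : Finset (Fin k))
  rw [hsplit, Finset.card_union_of_disjoint hd, hswap] at this
  simp only [Finset.card_univ, Fintype.card_fin] at this
  omega

def Sgn {k : ℕ} (x : Fin k → ℝ) : Prop := ∀ m, x m = 1 ∨ x m = -1

lemma pow_even_sgn {x : ℝ} (hx : x = 1 ∨ x = -1) {n : ℕ} (hn : Even n) : x ^ n = 1 := by
  rcases hx with rfl|rfl
  · simp
  · exact hn.neg_one_pow

lemma monom_even_sgn {k : ℕ} {α : Fin k → ℕ} (hα : ∀ m, Even (α m)) {x : Fin k → ℝ}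
    (hx : Sgn x) : monom α x = 1 := by
  unfold monom
  apply Finset.prod_eq_one
  intro m _
  exact pow_even_sgn (hx m) (hα m)

lemma cube_sgn {x : ℝ} (hx : x = 1 ∨ x = -1) : x ^ 3 = x := by
  rcases hx with rfl|rfl <;> norm_num

/-- key: for a coefficient function vanishing on non-even points, the A-part of an AG
polynomial is constant on sign vectors -/
lemma sum_even_part {k : ℕ} {A : Finset (Fin k → ℕ)} (c : (Fin k → ℕ) → ℝ)
    (hz : ∀ γ ∈ A, (¬ ∀ m, Even (γ m)) → c γ = 0) {x : Fin k → ℝ} (hx : Sgn x) :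
    ∑ α ∈ A, c α * monom α x = ∑ α ∈ A, c α := by
  apply Finset.sum_congr rfl
  intro γ hγ
  by_cases h : ∀ m, Even (γ m)
  · rw [monom_even_sgn h hx, mul_one]
  · rw [hz γ hγ h]; ring

def sg {k : ℕ} (i j : Fin k) (u v : ℝ) : Fin k → ℝ := fun m => if m = i then u else if m = j then v else 1

lemma sg_sgn {k : ℕ} (i j : Fin k) {u v : ℝ} (hu : u = 1 ∨ u = -1) (hv : v = 1 ∨ v = -1) :
    Sgn (sg i j u v) := by
  intro m; unfold sg
  split
  · exact hu
  · split
    · exact hv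
    · left; rfl

noncomputable def alt {k : ℕ} (i j : Fin k) (h : (Fin k → ℝ) → ℝ) : ℝ :=
  h (sg i j 1 1) - h (sg i j 1 (-1)) - h (sg i j (-1) 1) + h (sg i j (-1) (-1))

lemma alt_pair {k : ℕ} {i j p q : Fin k} (hij : i ≠ j) (hpq : p ≠ q) :
    alt i j (fun x => x p ^ 3 * x q ^ 3)
      = if (p = i ∧ q = j) ∨ (p = j ∧ q = i) then 4 else 0 := by
  by_cases hpi : p = i <;> by_cases hpj : p = j <;> by_cases hqi : q = i <;>
    by_cases hqj : q = j <;> simp_all [alt, sg] <;> norm_num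

lemma vv_swap {k : ℕ} (p : Fin k × Fin k) : vv p.swap = vv p := by
  funext m; simp [vv, or_comm]

lemma alt_pow6 {k : ℕ} (i j l : Fin k) : alt i j (fun x => x l ^ 6) = 0 := by
  by_cases hli : l = i <;> by_cases hlj : l = j <;> simp_all [alt, sg] <;> norm_num

lemma mem_UU {k : ℕ} {a : Fin k → ℕ} : a ∈ UU k ↔ ∃ i, a = uu i := by
  simp [UU, eq_comm]

lemma mem_VV {k : ℕ} {a : Fin k → ℕ} : a ∈ VV k ↔ ∃ p ∈ SS k, a = vv p := by
  rw [VV_eq]; simp [eq_comm]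

lemma disjoint_UU_VV {k : ℕ} : Disjoint (UU k) (VV k) := by
  rw [Finset.disjoint_left]
  intro a ha hb
  obtain ⟨i, rfl⟩ := mem_UU.mp ha
  obtain ⟨p, -, hv⟩ := mem_VV.mp hb
  exact uu_ne_vv i p hv

lemma alt_monom {k : ℕ} {p : Fin k × Fin k} (hp : p.1 < p.2) {a : Fin k → ℕ}
    (ha : a ∈ UU k ∪ VV k) :
    alt p.1 p.2 (fun x => monom a x) = if a = vv p then 4 else 0 := by
  rcases Finset.mem_union.mp ha with h|h
  · obtain ⟨l, rfl⟩ := mem_UU.mp h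
    rw [if_neg (uu_ne_vv l p)]
    have : (fun x : Fin k → ℝ => monom (uu l) x) = fun x => x l ^ 6 := by
      funext x; exact monom_uu l x
    rw [this, alt_pow6]
  · obtain ⟨q, hq, rfl⟩ := mem_VV.mp h
    simp only [SS, Finset.mem_filter, Finset.mem_univ, true_and] at hq
    have : (fun x : Fin k → ℝ => monom (vv q) x) = fun x => x q.1 ^ 3 * x q.2 ^ 3 := by
      funext x; exact monom_vv (ne_of_lt hq) x
    rw [this, alt_pair (ne_of_lt hp) (ne_of_lt hq)]
    congr 1
    simp only [eq_iff_iff]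
    constructor
    · rintro (⟨h1, h2⟩|⟨h1, h2⟩)
      · rw [show q = p from Prod.ext_iff.mpr ⟨h1, h2⟩]
      · exfalso; rw [h1, h2] at hq; exact absurd hq (not_lt.mpr hp.le)
    · intro h
      left
      have := vv_eq_vv hq hp h
      exact ⟨congrArg Prod.fst this, congrArg Prod.snd this⟩

lemma alt_sum' {k : ℕ} {γ : Type*} (i j : Fin k) (s : Finset γ) (F : γ → (Fin k → ℝ) → ℝ) :
    alt i j (fun x => ∑ b ∈ s, F b x) = ∑ b ∈ s, alt i j (F b) := by
  simp [alt, Finset.sum_sub_distrib, Finset.sum_add_distrib]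

lemma alt_AG {k : ℕ} (i j : Fin k) {A : Finset (Fin k → ℕ)} {b : Fin k → ℕ}
    {c : (Fin k → ℕ) → ℝ} {h : (Fin k → ℝ) → ℝ}
    (hrep : ∀ x, h x = (∑ α ∈ A, c α * monom α x) + c b * monom b x) :
    alt i j h = (∑ α ∈ A, c α * alt i j (fun x => monom α x))
      + c b * alt i j (fun x => monom b x) := by
  simp only [alt, hrep, mul_sub, mul_add, Finset.sum_sub_distrib, Finset.sum_add_distrib]
  ring

lemma monom_ones {k : ℕ} (a : Fin k → ℕ) : monom a (fun _ => 1) = 1 := by simp [monom]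

lemma ones_sgn {k : ℕ} : Sgn (fun _ : Fin k => (1:ℝ)) := fun m => Or.inl rfl

lemma negat_sgn {k : ℕ} (q : Fin k) : Sgn (fun m => if m = q then (-1:ℝ) else 1) := by
  intro m; dsimp only; split
  · right; rfl
  · left; rfl

lemma key_bound {k : ℕ} (hk : 2 ≤ k) {A B : ℝ}
    (h : IsSONC (UU k ∪ VV k)
      (fun x => A * (∑ i, x i ^ 6)
        + B * ∑ i, ∑ j ∈ Finset.univ.filter (fun j => i < j), x i ^ 3 * x j ^ 3)) :
    ((SS k).card : ℝ) * |B| ≤ k * A := by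
  classical
  obtain ⟨g, hg, hsum⟩ := h
  set TT := UU k ∪ VV k with hTTdef
  have hchoice : ∀ β0 : Fin k → ℕ, ∃ c : (Fin k → ℕ) → ℝ, β0 ∈ TT →
      ((∀ α ∈ TT.erase β0, 0 ≤ c α) ∧
       (∀ γ ∈ TT.erase β0, (¬ ∀ i, Even (γ i)) → c γ = 0) ∧
       (∀ x, g β0 x = (∑ α ∈ TT.erase β0, c α * monom α x) + c β0 * monom β0 x) ∧
       (∀ x, 0 ≤ g β0 x)) := by
    intro β0
    by_cases hb : β0 ∈ TT
    · obtain ⟨c, hc⟩ := hg β0 hb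
      exact ⟨c, fun _ => hc⟩
    · exact ⟨0, fun hb' => absurd hb' hb⟩
  choose c hc using hchoice
  -- membership facts
  have hvvTT : ∀ p ∈ SS k, vv p ∈ TT := by
    intro p hp
    exact Finset.mem_union_right _ (mem_VV.mpr ⟨p, hp, rfl⟩)
  -- Step 1: the cross coefficient of each g (vv p) equals B
  have hcoef : ∀ p ∈ SS k, c (vv p) (vv p) = B := by
    intro p hpS
    have hp : p.1 < p.2 := by
      simpa [SS] using hpS
    have hvp := hvvTT p hpS
    -- alt of f
    have hf_eq : (fun x : Fin k → ℝ => A * (∑ i, x i ^ 6)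
        + B * ∑ i, ∑ j ∈ Finset.univ.filter (fun j => i < j), x i ^ 3 * x j ^ 3)
        = fun x => ∑ β0 ∈ TT, g β0 x := funext hsum
    have haltf : alt p.1 p.2 (fun x : Fin k → ℝ => A * (∑ i, x i ^ 6)
        + B * ∑ i, ∑ j ∈ Finset.univ.filter (fun j => i < j), x i ^ 3 * x j ^ 3)
        = 4 * B := by
      have h6 : alt p.1 p.2 (fun x : Fin k → ℝ => ∑ i, x i ^ 6) = 0 := by
        rw [alt_sum' p.1 p.2 Finset.univ (fun l x => x l ^ 6)]
        simp [alt_pow6]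
      have h33 : alt p.1 p.2 (fun x : Fin k → ℝ =>
          ∑ i, ∑ j ∈ Finset.univ.filter (fun j => i < j), x i ^ 3 * x j ^ 3) = 4 := by
        rw [alt_sum' p.1 p.2 Finset.univ
          (fun i x => ∑ j ∈ Finset.univ.filter (fun j => i < j), x i ^ 3 * x j ^ 3)]
        have : ∀ i : Fin k, alt p.1 p.2 (fun x =>
            ∑ j ∈ Finset.univ.filter (fun j => i < j), x i ^ 3 * x j ^ 3)
            = if i = p.1 then 4 else 0 := by
          intro i
          rw [alt_sum' p.1 p.2 _ (fun j x => x i ^ 3 * x j ^ 3)]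
          by_cases hi : i = p.1
          · rw [if_pos hi]
            have hterm : ∀ j ∈ Finset.univ.filter (fun j => i < j),
                alt p.1 p.2 (fun x => x i ^ 3 * x j ^ 3) = if j = p.2 then 4 else 0 := by
              intro j hj
              simp only [Finset.mem_filter, Finset.mem_univ, true_and] at hj
              rw [alt_pair (ne_of_lt hp) (ne_of_lt hj)]
              congr 1
              simp only [eq_iff_iff]
              constructor
              · rintro (⟨-, h2⟩|⟨h1, -⟩)
                · exact h2
                · exact absurd (hi.symm.trans h1) (ne_of_lt hp)
              · intro hj2; exact Or.inl ⟨hi, hj2⟩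
            rw [Finset.sum_congr rfl hterm, Finset.sum_ite_eq' _ p.2 (fun _ => (4:ℝ))]
            rw [if_pos (by simp [hi ▸ hp])]
          · rw [if_neg hi]
            apply Finset.sum_eq_zero
            intro j hj
            simp only [Finset.mem_filter, Finset.mem_univ, true_and] at hj
            rw [alt_pair (ne_of_lt hp) (ne_of_lt hj)]
            rw [if_neg]
            rintro (⟨h1, -⟩|⟨h1, h2⟩)
            · exact hi h1
            · subst h1; subst h2
              exact absurd (hj.trans hp) (lt_irrefl _)
        rw [Finset.sum_congr rfl (fun i _ => this i),
          Finset.sum_ite_eq' _ p.1 (fun _ => (4:ℝ)), if_pos (Finset.mem_univ _)]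
      have hlin : alt p.1 p.2 (fun x : Fin k → ℝ => A * (∑ i, x i ^ 6)
          + B * ∑ i, ∑ j ∈ Finset.univ.filter (fun j => i < j), x i ^ 3 * x j ^ 3)
          = A * alt p.1 p.2 (fun x : Fin k → ℝ => ∑ i, x i ^ 6)
            + B * alt p.1 p.2 (fun x : Fin k → ℝ =>
              ∑ i, ∑ j ∈ Finset.univ.filter (fun j => i < j), x i ^ 3 * x j ^ 3) := by
        simp only [alt]; ring
      rw [hlin, h6, h33]; ring
    -- alt of the sum of g's
    have haltg : ∀ β0 ∈ TT, alt p.1 p.2 (g β0)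
        = if β0 = vv p then 4 * c β0 β0 else 0 := by
      intro β0 hb
      obtain ⟨hc1, hc2, hc3, hc4⟩ := hc β0 hb
      rw [alt_AG p.1 p.2 hc3]
      have hterm : ∀ a ∈ TT.erase β0, c β0 a * alt p.1 p.2 (fun x => monom a x)
          = if a = vv p then c β0 a * 4 else 0 := by
        intro a ha
        rw [alt_monom hp (Finset.mem_of_mem_erase ha)]
        split <;> ring
      rw [Finset.sum_congr rfl hterm]
      by_cases hb0 : β0 = vv p
      · rw [if_pos hb0]
        have hzero : ∀ a ∈ TT.erase β0, (if a = vv p then c β0 a * 4 else 0) = 0 := by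
          intro a ha
          rw [if_neg]
          intro hvp2
          exact (Finset.ne_of_mem_erase ha) (hvp2.trans hb0.symm)
        rw [Finset.sum_eq_zero hzero, alt_monom hp (by rw [hb0]; exact hvp)]
        rw [if_pos hb0]
        ring
      · rw [if_neg hb0]
        have hmem : vv p ∈ TT.erase β0 := Finset.mem_erase.mpr ⟨fun h => hb0 h.symm, hvp⟩
        rw [Finset.sum_eq_single_of_mem (vv p) hmem]
        · rw [if_pos rfl, hc2 (vv p) hmem vv_not_even, alt_monom hp hb, if_neg hb0]
          ring
        · intro a ha hne
          rw [if_neg hne]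
    have : (4:ℝ) * B = 4 * c (vv p) (vv p) := by
      rw [← haltf, hf_eq, alt_sum' p.1 p.2 TT g,
        Finset.sum_congr rfl haltg, Finset.sum_ite_eq' TT (vv p) (fun b => 4 * c b b),
        if_pos hvp]
    linarith
  -- Step 2: bounds from nonnegativity at sign vectors
  have hSb : ∀ p ∈ SS k, |B| ≤ ∑ a ∈ TT.erase (vv p), c (vv p) a := by
    intro p hpS
    have hp : p.1 < p.2 := by simpa [SS] using hpS
    have hvp := hvvTT p hpS
    obtain ⟨hc1, hc2, hc3, hc4⟩ := hc (vv p) hvp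
    have hg1 : g (vv p) (fun _ => 1) = (∑ a ∈ TT.erase (vv p), c (vv p) a) + B := by
      rw [hc3 (fun _ => 1), sum_even_part _ hc2 ones_sgn, monom_ones, hcoef p hpS, mul_one]
    have hg2 : g (vv p) (fun m => if m = p.2 then (-1:ℝ) else 1)
        = (∑ a ∈ TT.erase (vv p), c (vv p) a) - B := by
      rw [hc3 _, sum_even_part _ hc2 (negat_sgn p.2), monom_vv (ne_of_lt hp),
        hcoef p hpS]
      rw [if_neg (ne_of_lt hp), if_pos rfl]
      ring
    have h1 := hc4 (fun _ => 1)
    have h2 := hc4 (fun m => if m = p.2 then (-1:ℝ) else 1)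
    rw [hg1] at h1
    rw [hg2] at h2
    rw [abs_le]
    constructor <;> linarith
  -- evaluate the decomposition at the all-ones vector
  have hone : A * (∑ i : Fin k, (1:ℝ) ^ 6)
      + B * ∑ i : Fin k, ∑ j ∈ Finset.univ.filter (fun j => i < j), (1:ℝ) ^ 3 * (1:ℝ) ^ 3
      = ∑ β0 ∈ TT, g β0 (fun _ => 1) := hsum (fun _ => 1)
  have hfone : A * (∑ i : Fin k, (1:ℝ) ^ 6)
      + B * ∑ i : Fin k, ∑ j ∈ Finset.univ.filter (fun j => i < j), (1:ℝ) ^ 3 * (1:ℝ) ^ 3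
      = A * k + B * ((SS k).card : ℝ) := by
    congr 1
    · congr 1; simp
    · congr 1
      rw [SS_card_sum]
      apply Finset.sum_congr rfl
      intro i _
      simp
  rw [hfone] at hone
  have hsplit : ∑ β0 ∈ TT, g β0 (fun _ => (1:ℝ))
      = (∑ β0 ∈ UU k, g β0 (fun _ => 1)) + ∑ p ∈ SS k, g (vv p) (fun _ => 1) := by
    rw [hTTdef, Finset.sum_union disjoint_UU_VV]
    congr 1
    rw [VV_eq, Finset.sum_image]
    intro p hp q hq hpq
    simp only [SS, Finset.coe_filter, Set.mem_setOf_eq, Finset.mem_univ, true_and,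
      Finset.mem_filter] at hp hq
    exact vv_eq_vv hp hq hpq
  have hgv : ∀ p ∈ SS k, g (vv p) (fun _ => (1:ℝ))
      = (∑ a ∈ TT.erase (vv p), c (vv p) a) + B := by
    intro p hpS
    have hvp := hvvTT p hpS
    obtain ⟨hc1, hc2, hc3, hc4⟩ := hc (vv p) hvp
    rw [hc3 (fun _ => 1), sum_even_part _ hc2 ones_sgn, monom_ones, hcoef p hpS, mul_one]
  rw [hsplit, Finset.sum_congr rfl hgv, Finset.sum_add_distrib, Finset.sum_const,
    nsmul_eq_mul] at hone
  have hUUnn : 0 ≤ ∑ β0 ∈ UU k, g β0 (fun _ => (1:ℝ)) := by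
    apply Finset.sum_nonneg
    intro β0 hb
    have hbT : β0 ∈ TT := Finset.mem_union_left _ hb
    exact (hc β0 hbT).2.2.2 _
  have hSbsum : ((SS k).card : ℝ) * |B| ≤ ∑ p ∈ SS k, ∑ a ∈ TT.erase (vv p), c (vv p) a := by
    calc ((SS k).card : ℝ) * |B| = ∑ _p ∈ SS k, |B| := by
          rw [Finset.sum_const, nsmul_eq_mul]
      _ ≤ _ := Finset.sum_le_sum hSb
  have hfinal : ∑ p ∈ SS k, ∑ a ∈ TT.erase (vv p), c (vv p) a ≤ k * A := by
    nlinarith [hone, hUUnn]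
  linarith

lemma sonc_nonneg {n : ℕ} {T : Finset (Fin n → ℕ)} {f : (Fin n → ℝ) → ℝ}
    (h : IsSONC T f) : ∀ x, 0 ≤ f x := by
  obtain ⟨g, hg, hsum⟩ := h
  intro x
  rw [hsum x]
  apply Finset.sum_nonneg
  intro β hb
  obtain ⟨c, -, -, -, h4⟩ := hg β hb
  exact h4 x

lemma sonc_construct {k : ℕ} (hk : 2 ≤ k) {A : ℝ} (hA : 0 ≤ A) :
    IsSONC (UU k ∪ VV k) (fun x => A * ∑ i, x i ^ 6) := by
  classical
  have hk0 : 0 < k := by omega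
  set i0 : Fin k := ⟨0, hk0⟩ with hi0
  have hmemU : uu i0 ∈ UU k := mem_UU.mpr ⟨i0, rfl⟩
  have hmem : uu i0 ∈ UU k ∪ VV k := Finset.mem_union_left _ hmemU
  refine ⟨fun β0 => if β0 = uu i0 then (fun x => A * ∑ i, x i ^ 6) else 0, ?_, ?_⟩
  · intro β0 hb
    dsimp only
    by_cases hb0 : β0 = uu i0
    · subst hb0
      rw [if_pos rfl]
      refine ⟨fun γ => if γ ∈ UU k then A else 0, ?_, ?_, ?_, ?_⟩
      · intro a _; dsimp only; split
        · exact hA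
        · exact le_refl 0
      · intro γ _ hγ
        dsimp only
        rw [if_neg]
        intro hγU
        obtain ⟨i, rfl⟩ := mem_UU.mp hγU
        exact hγ (uu_even i)
      · intro x
        dsimp only
        rw [if_pos hmemU]
        have hstep := Finset.sum_erase_add ((UU k ∪ VV k)) 
          (fun a => (if a ∈ UU k then A else 0) * monom a x) hmem
        have : (∑ a ∈ (UU k ∪ VV k).erase (uu i0),
            (if a ∈ UU k then A else 0) * monom a x) + A * monom (uu i0) x
            = ∑ a ∈ (UU k ∪ VV k), (if a ∈ UU k then A else 0) * monom a x := by
          rw [← hstep, if_pos hmemU]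
        rw [this]
        rw [Finset.sum_union disjoint_UU_VV]
        have hU : ∑ a ∈ UU k, (if a ∈ UU k then A else 0) * monom a x
            = ∑ i : Fin k, A * x i ^ 6 := by
          rw [Finset.sum_congr rfl (fun a ha => by rw [if_pos ha])]
          unfold UU
          rw [Finset.sum_image (fun i _ j _ h => uu_inj h)]
          exact Finset.sum_congr rfl fun i _ => by rw [monom_uu]
        have hV : ∑ a ∈ VV k, (if a ∈ UU k then A else 0) * monom a x = 0 := by
          apply Finset.sum_eq_zero
          intro a ha
          rw [if_neg, zero_mul]
          exact fun hU => Finset.disjoint_left.mp disjoint_UU_VV hU ha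
        rw [hU, hV, Finset.mul_sum]
        ring
      · intro x
        have : 0 ≤ ∑ i, x i ^ 6 := Finset.sum_nonneg fun i _ => by positivity
        positivity
    · rw [if_neg hb0]
      refine ⟨0, fun a _ => le_refl 0, fun γ _ _ => rfl, fun x => ?_, fun x => le_refl 0⟩
      simp
  · intro x
    dsimp only
    rw [Finset.sum_eq_single_of_mem (uu i0) hmem]
    · rw [if_pos rfl]
    · intro b _ hne
      rw [if_neg hne]
      rfl

lemma sq_sum_aux {k : ℕ} (a : Fin k → ℝ) :
    (∑ i, a i) ^ 2 = (∑ i, a i ^ 2)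
      + 2 * ∑ i, ∑ j ∈ Finset.univ.filter (fun j => i < j), a i * a j := by
  have h1 : (∑ i, a i) ^ 2 = ∑ i, ∑ j, a i * a j := by
    rw [sq, Finset.sum_mul_sum]
  have h2 : ∀ i : Fin k, (∑ j, a i * a j)
      = a i ^ 2 + (∑ j ∈ Finset.univ.filter (fun j => i < j), a i * a j)
        + (∑ j ∈ Finset.univ.filter (fun j => j < i), a i * a j) := by
    intro i
    have : (Finset.univ : Finset (Fin k)) =
        insert i ((Finset.univ.filter (fun j => i < j)) ∪ (Finset.univ.filter (fun j => j < i))) := by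
      ext m; simp; omega
    nth_rewrite 1 [this]
    rw [Finset.sum_insert, Finset.sum_union]
    · ring_nf
    · rw [Finset.disjoint_left]; intro m hm hm'; simp at hm hm'; omega
    · simp
  have h3 : (∑ i, ∑ j ∈ Finset.univ.filter (fun j => j < i), a i * a j)
      = ∑ i, ∑ j ∈ Finset.univ.filter (fun j => i < j), a i * a j := by
    rw [Finset.sum_comm' (t' := Finset.univ) (s' := fun y => Finset.univ.filter (fun x => y < x))]
    · apply Finset.sum_congr rfl; intro i _; apply Finset.sum_congr rfl; intro j _; ring
    · intro x y; simp
  simp_rw [h1, h2, Finset.sum_add_distrib, h3]; ring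

lemma eval_basis6 {k : ℕ} (i0 : Fin k) :
    (∑ i, (if i = i0 then (1:ℝ) else 0) ^ 6) = 1 := by
  rw [Finset.sum_eq_single_of_mem i0 (Finset.mem_univ _)]
  · rw [if_pos rfl]; norm_num
  · intro b _ hb; rw [if_neg hb]; norm_num

lemma eval_basis33 {k : ℕ} (hk0 : 0 < k) :
    (∑ i : Fin k, ∑ j ∈ Finset.univ.filter (fun j => i < j),
      (if i = (⟨0, hk0⟩ : Fin k) then (1:ℝ) else 0) ^ 3
        * (if j = (⟨0, hk0⟩ : Fin k) then (1:ℝ) else 0) ^ 3) = 0 := by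
  apply Finset.sum_eq_zero
  intro i _
  apply Finset.sum_eq_zero
  intro j hj
  simp only [Finset.mem_filter, Finset.mem_univ, true_and] at hj
  have : j ≠ (⟨0, hk0⟩ : Fin k) := by
    intro h
    rw [h] at hj
    exact absurd hj (by simp [Fin.lt_def])
  rw [if_neg this]
  norm_num


/-- The limit SONC cone for the support of `M₆` and `M₃₃` degenerates:
`α M₆^{(k)} + β M₃₃^{(k)}` is SONC for all `k ≥ 2` iff `α ≥ 0` and `β = 0`,
while `M₆^{(k)} + 2 M₃₃^{(k)} = (Σ xᵢ³)²` is nonnegative for all `k ≥ 2`;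
hence the limit SONC cone is `ℝ₊ × {0}`, of strictly smaller dimension. -/
theorem stmt16
    (M6 : (k : ℕ) → (Fin k → ℝ) → ℝ) (hM6 : ∀ k x, M6 k x = ∑ i, x i ^ 6)
    (M33 : (k : ℕ) → (Fin k → ℝ) → ℝ)
    (hM33 : ∀ k x, M33 k x
      = ∑ i, ∑ j ∈ Finset.univ.filter (fun j => i < j), x i ^ 3 * x j ^ 3)
    (T : (k : ℕ) → Finset (Fin k → ℕ))
    (hT : ∀ k, T k =
      (Finset.univ.image (fun i (j : Fin k) => if j = i then 6 else 0))
      ∪ (Finset.univ.offDiag.image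
          (fun p (j : Fin k) => if j = p.1 ∨ j = p.2 then 3 else 0))) :
    (∀ α β : ℝ,
      (∀ k, 2 ≤ k → IsSONC (T k) (fun x => α * M6 k x + β * M33 k x))
        ↔ (0 ≤ α ∧ β = 0)) ∧
    (∀ k, 2 ≤ k → ∀ x : Fin k → ℝ,
      (∑ i, x i ^ 3) ^ 2 = M6 k x + 2 * M33 k x ∧ 0 ≤ M6 k x + 2 * M33 k x) ∧
    {pr : ℝ × ℝ | ∀ k, 2 ≤ k →
        IsSONC (T k) (fun x => pr.1 * M6 k x + pr.2 * M33 k x)}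
      = {pr : ℝ × ℝ | 0 ≤ pr.1 ∧ pr.2 = 0} := by
  have hTk : ∀ k, T k = UU k ∪ VV k := fun k => hT k
  have main : ∀ A B : ℝ,
      (∀ k, 2 ≤ k → IsSONC (T k) (fun x => A * M6 k x + B * M33 k x))
        ↔ (0 ≤ A ∧ B = 0) := by
    intro A B
    constructor
    · intro h
      have h' : ∀ k, 2 ≤ k → IsSONC (UU k ∪ VV k)
          (fun x : Fin k → ℝ => A * (∑ i, x i ^ 6)
            + B * ∑ i, ∑ j ∈ Finset.univ.filter (fun j => i < j), x i ^ 3 * x j ^ 3) := by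
        intro k hk
        have hthis := h k hk
        rw [hTk k] at hthis
        have heq : (fun x : Fin k → ℝ => A * M6 k x + B * M33 k x)
            = (fun x : Fin k → ℝ => A * (∑ i, x i ^ 6)
              + B * ∑ i, ∑ j ∈ Finset.univ.filter (fun j => i < j), x i ^ 3 * x j ^ 3) :=
          funext fun x => by rw [hM6, hM33]
        rw [heq] at hthis
        exact hthis
      have hA : 0 ≤ A := by
        have h2 := h' 2 (le_refl 2)
        have hnn := sonc_nonneg h2 (fun m => if m = (⟨0, by omega⟩ : Fin 2) then 1 else 0)
        rw [eval_basis6, eval_basis33 (by omega : 0 < 2)] at hnn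
        linarith
      refine ⟨hA, ?_⟩
      by_contra hB
      have habs : 0 < |B| := abs_pos.mpr hB
      obtain ⟨n, hn⟩ := exists_nat_gt (2 * A / |B|)
      have hn' : 2 * A < n * |B| := by
        rwa [div_lt_iff₀ habs] at hn
      set k := n + 2 with hkdef
      have h1 : ((SS k).card : ℝ) * |B| ≤ k * A := key_bound (by omega) (h' k (by omega))
      have h2 : 2 * ((SS k).card : ℝ) = (k : ℝ) * k - k := by
        have h2n := SS_card2 (k := k)
        have hle : k ≤ k * k := Nat.le_mul_of_pos_left k (by omega)
        have : ((2 * (SS k).card : ℕ) : ℝ) = ((k * k - k : ℕ) : ℝ) := by rw [h2n]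
        rwa [Nat.cast_mul, Nat.cast_sub hle, Nat.cast_mul, Nat.cast_ofNat] at this
      have hkr : (k : ℝ) = (n : ℝ) + 2 := by
        rw [hkdef]; push_cast; ring
      rw [hkr] at h1 h2
      nlinarith [h1, h2, hn', habs, Nat.cast_nonneg (α := ℝ) n]
    · rintro ⟨hA, rfl⟩ k hk
      rw [hTk k]
      have heq : (fun x : Fin k → ℝ => A * M6 k x + 0 * M33 k x)
          = (fun x : Fin k → ℝ => A * ∑ i, x i ^ 6) :=
        funext fun x => by rw [hM6]; ring
      rw [heq]
      exact sonc_construct hk hA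
  refine ⟨main, ?_, ?_⟩
  · intro k hk x
    have hsq : (∑ i, x i ^ 3) ^ 2 = M6 k x + 2 * M33 k x := by
      rw [hM6, hM33, sq_sum_aux (fun i => x i ^ 3)]
      congr 1
      · apply Finset.sum_congr rfl
        intro i _
        rw [← pow_mul]
    refine ⟨hsq, ?_⟩
    rw [← hsq]
    exact sq_nonneg _
  · ext pr
    simp only [Set.mem_setOf_eq]
    exact main pr.1 pr.2
end

section
/- Let T ⊂ ℕ^n be a finite S_n-invariant set with a set of orbit representatives T̂, let k ≥ n, and pad each λ ∈ T̂ with zeros to length k+1. If c = (c_λ)_{λ∈T̂} are real coefficients such that p_k = Σ_{λ∈T̂} c_λ·m_λ^{(k)} is a SONC polynomial in k variables, then p_{k+1} = Σ_{λ∈T̂} c_λ·m_λ^{(k+1)} is a SONC polynomial in k+1 variables; likewise, if p_k is nonnegative on ℝ^k then p_{k+1} is nonnegative on ℝ^{k+1}. (In particular, under the normalized monomial-mean identification, the sequence of cones C^{m,k}_SONC(T) is increasing in k.) -/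
open Finset

section AuxStmt17

lemma permActN_mul {m : ℕ} (σ τ : Equiv.Perm (Fin m)) (v : Fin m → ℕ) :
    permActN σ (permActN τ v) = permActN (σ * τ) v := by
  funext i
  simp [permActN, mul_inv_rev, Equiv.Perm.mul_apply]

lemma permActN_inv_cancel {m : ℕ} (ρ : Equiv.Perm (Fin m)) (v : Fin m → ℕ) :
    permActN ρ (permActN ρ⁻¹ v) = v := by
  funext i
  simp [permActN]

lemma monom_permActN {m : ℕ} (σ : Equiv.Perm (Fin m)) (v : Fin m → ℕ) (x : Fin m → ℝ) :
    monom (permActN σ v) x = monom v (fun i => x (σ i)) := by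
  unfold monom permActN
  rw [← Equiv.prod_comp σ (fun i => x i ^ v (σ⁻¹ i))]
  exact Finset.prod_congr rfl fun i _ => by rw [Equiv.Perm.inv_def, Equiv.symm_apply_apply]

lemma mmean_permActN {m : ℕ} (ρ : Equiv.Perm (Fin m)) (v : Fin m → ℕ) (x : Fin m → ℝ) :
    mmean (permActN ρ v) x = mmean v x := by
  unfold mmean
  congr 1
  refine Fintype.sum_equiv (Equiv.mulRight ρ) _ _ fun σ => ?_
  rw [permActN_mul]
  rfl

lemma monom_cons_zero {k : ℕ} (w : Fin k → ℕ) (y : Fin (k+1) → ℝ) :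
    monom (Fin.cons 0 w) y = monom w (fun j => y j.succ) := by
  unfold monom
  rw [Fin.prod_univ_succ]
  simp

/-- Dropping the coordinate `p` (after a swap with position 0). -/
def dropZ {k : ℕ} (p : Fin (k+1)) (x : Fin (k+1) → ℝ) : Fin k → ℝ :=
  fun j => x (Equiv.swap 0 p j.succ)

/-- Inserting a zero exponent at coordinate `p`. -/
def embE {k : ℕ} (p : Fin (k+1)) (β : Fin k → ℕ) : Fin (k+1) → ℕ :=
  fun i => (Fin.cons 0 β : Fin (k+1) → ℕ) (Equiv.swap 0 p i)

lemma embE_eq_permActN {k : ℕ} (p : Fin (k+1)) (β : Fin k → ℕ) :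
    embE p β = permActN (Equiv.swap 0 p) (Fin.cons 0 β) := by
  funext i
  simp [embE, permActN, Equiv.swap_inv]

lemma monom_embE {k : ℕ} (p : Fin (k+1)) (β : Fin k → ℕ) (x : Fin (k+1) → ℝ) :
    monom (embE p β) x = monom β (dropZ p x) := by
  rw [embE_eq_permActN, monom_permActN, monom_cons_zero]
  rfl

lemma embE_injective {k : ℕ} (p : Fin (k+1)) : Function.Injective (embE p) := by
  intro a b h
  funext j
  have h2 := congrFun h (Equiv.swap 0 p j.succ)
  simpa [embE, Equiv.swap_apply_self] using h2

lemma embE_even {k : ℕ} (p : Fin (k+1)) (β : Fin k → ℕ) (h : ∀ i, Even (β i)) :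
    ∀ i, Even (embE p β i) := by
  intro i
  rcases Fin.eq_zero_or_eq_succ (Equiv.swap 0 p i) with h0 | ⟨j, hj⟩
  · simp [embE, h0]
  · simpa [embE, hj] using h j

lemma permActN_cons_zero {k : ℕ} (σ : Equiv.Perm (Fin k)) (w : Fin k → ℕ) :
    Fin.cons 0 (permActN σ w)
      = permActN (Equiv.Perm.decomposeFin.symm (0, σ)) (Fin.cons 0 w) := by
  have h : ∀ i, (Fin.cons 0 (permActN σ w) : Fin (k+1) → ℕ)
        (Equiv.Perm.decomposeFin.symm (0, σ) i)
      = (Fin.cons 0 w : Fin (k+1) → ℕ) i := by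
    intro i
    induction i using Fin.cases with
    | zero => simp
    | succ j => simp [permActN, Equiv.swap_self]
  funext i
  have h2 := h ((Equiv.Perm.decomposeFin.symm (0, σ))⁻¹ i)
  rw [Equiv.Perm.inv_def, Equiv.apply_symm_apply] at h2
  exact h2

lemma mmean_cons_zero {k : ℕ} (w : Fin k → ℕ) (x : Fin (k+1) → ℝ) :
    mmean (Fin.cons 0 w) x
      = (1/((k:ℝ)+1)) * ∑ p : Fin (k+1), mmean w (dropZ p x) := by
  have key : ∑ σ : Equiv.Perm (Fin (k+1)), monom (permActN σ (Fin.cons 0 w)) x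
      = ∑ p : Fin (k+1), ∑ τ : Equiv.Perm (Fin k),
          monom (permActN τ w) (dropZ p x) := by
    rw [← Equiv.sum_comp Equiv.Perm.decomposeFin.symm
        (fun σ => monom (permActN σ (Fin.cons 0 w)) x), Fintype.sum_prod_type]
    refine Finset.sum_congr rfl fun p _ => Finset.sum_congr rfl fun τ _ => ?_
    rw [monom_permActN, monom_cons_zero, monom_permActN]
    congr 1
    funext j
    simp [dropZ, Equiv.Perm.decomposeFin_symm_apply_succ]
  unfold mmean
  rw [key, Finset.mul_sum, Finset.mul_sum]
  refine Finset.sum_congr rfl fun p _ => ?_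
  rw [← mul_assoc]
  congr 1
  rw [one_div_mul_one_div, Nat.factorial_succ]
  push_cast
  ring

end AuxStmt17
section AuxStmt17b

lemma IsAG_zero {m : ℕ} (A : Finset (Fin m → ℕ)) (β : Fin m → ℕ) :
    IsAG A β (fun _ => (0:ℝ)) :=
  ⟨fun _ => 0, fun _ _ => le_refl 0, fun _ _ _ => rfl, fun x => by simp, fun _ => le_refl 0⟩

lemma IsAG_add {m : ℕ} {A : Finset (Fin m → ℕ)} {β : Fin m → ℕ}
    {f₁ f₂ : (Fin m → ℝ) → ℝ} (h1 : IsAG A β f₁) (h2 : IsAG A β f₂) :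
    IsAG A β (fun x => f₁ x + f₂ x) := by
  obtain ⟨c1, hc1, he1, hr1, hn1⟩ := h1
  obtain ⟨c2, hc2, he2, hr2, hn2⟩ := h2
  refine ⟨fun α => c1 α + c2 α, fun α hα => add_nonneg (hc1 α hα) (hc2 α hα),
    fun γ hγ hne => by dsimp only; rw [he1 γ hγ hne, he2 γ hγ hne, add_zero],
    fun x => ?_, fun x => add_nonneg (hn1 x) (hn2 x)⟩
  dsimp only
  rw [hr1 x, hr2 x]
  simp only [add_mul, Finset.sum_add_distrib]
  ring

lemma IsAG_sum {m : ℕ} {ι : Type*} (A : Finset (Fin m → ℕ)) (β : Fin m → ℕ)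
    (Q : Finset ι) (F : ι → (Fin m → ℝ) → ℝ)
    (h : ∀ q ∈ Q, IsAG A β (F q)) : IsAG A β (fun x => ∑ q ∈ Q, F q x) := by
  classical
  have key : IsAG A β (∑ q ∈ Q, F q) :=
    Finset.sum_induction F (IsAG A β) (fun a b ha hb => IsAG_add ha hb) (IsAG_zero A β) h
  have heq : (fun x => ∑ q ∈ Q, F q x) = ∑ q ∈ Q, F q := by
    funext x; rw [Finset.sum_apply]
  rw [heq]
  exact key

lemma IsAG_comp {k : ℕ} (Sk : Finset (Fin k → ℕ)) (Sk1 : Finset (Fin (k+1) → ℕ))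
    (E : (Fin k → ℕ) → (Fin (k+1) → ℕ)) (z : (Fin (k+1) → ℝ) → (Fin k → ℝ))
    (hE : ∀ α ∈ Sk, E α ∈ Sk1)
    (hEinj : Function.Injective E)
    (hmon : ∀ (α : Fin k → ℕ) (x : Fin (k+1) → ℝ), monom (E α) x = monom α (z x))
    (heven : ∀ α : Fin k → ℕ, (∀ i, Even (α i)) → ∀ i, Even (E α i))
    (β : Fin k → ℕ) (hβ : β ∈ Sk) (f : (Fin k → ℝ) → ℝ)
    (hf : IsAG (Sk.erase β) β f) (t : ℝ) (ht : 0 ≤ t) :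
    IsAG (Sk1.erase (E β)) (E β) (fun x => t * f (z x)) := by
  classical
  obtain ⟨c, hc, hev, hrep, hnn⟩ := hf
  refine ⟨fun α' => (if α' = E β then t * c β else 0)
      + ∑ α ∈ Sk.erase β, if E α = α' then t * c α else 0, ?_, ?_, ?_,
      fun x => mul_nonneg ht (hnn (z x))⟩
  · intro α' hα'
    have hne : α' ≠ E β := (Finset.mem_erase.mp hα').1
    dsimp only
    rw [if_neg hne, zero_add]
    refine Finset.sum_nonneg fun α hα => ?_
    by_cases h : E α = α'
    · rw [if_pos h]; exact mul_nonneg ht (hc α hα)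
    · simp [h]
  · intro γ hγ hodd
    have hne : γ ≠ E β := (Finset.mem_erase.mp hγ).1
    dsimp only
    rw [if_neg hne, zero_add]
    refine Finset.sum_eq_zero fun α hα => ?_
    by_cases h : E α = γ
    · rw [if_pos h, hev α hα (fun hall => hodd (h ▸ heven α hall)), mul_zero]
    · rw [if_neg h]
  · intro x
    have hEβ : ∀ α ∈ Sk.erase β, E α ∈ Sk1.erase (E β) := by
      intro α hα
      rcases Finset.mem_erase.mp hα with ⟨hne, hmem⟩
      exact Finset.mem_erase.mpr ⟨fun h => hne (hEinj h), hE α hmem⟩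
    have h1 : ∑ α' ∈ Sk1.erase (E β),
        ((if α' = E β then t * c β else 0)
          + ∑ α ∈ Sk.erase β, if E α = α' then t * c α else 0) * monom α' x
        = ∑ α ∈ Sk.erase β, t * c α * monom (E α) x := by
      rw [Finset.sum_congr rfl (fun α' hα' => by
        rw [if_neg (Finset.mem_erase.mp hα').1, zero_add, Finset.sum_mul])]
      rw [Finset.sum_comm]
      refine Finset.sum_congr rfl fun α hα => ?_
      simp only [ite_mul, zero_mul]
      rw [Finset.sum_ite_eq, if_pos (hEβ α hα)]
    have h2 : ((if E β = E β then t * c β else 0)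
        + ∑ α ∈ Sk.erase β, if E α = E β then t * c α else 0) = t * c β := by
      rw [if_pos rfl, Finset.sum_eq_zero, add_zero]
      intro α hα
      exact if_neg fun h => (Finset.mem_erase.mp hα).1 (hEinj h)
    dsimp only
    rw [h1, h2, hrep (z x), mul_add, Finset.mul_sum]
    congr 1
    · exact Finset.sum_congr rfl fun α hα => by rw [hmon]; ring
    · rw [hmon]; ring

end AuxStmt17b

/-- Stability of normalized monomial-mean SONC certificates under adding a variable:
if `p_k = Σ_{λ ∈ Trep} c_λ m_λ^{(k)}` is SONC (on its exponent set), then so is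
`p_{k+1}`; likewise for nonnegativity. -/
theorem stmt17 {n : ℕ} (T : Finset (Fin n → ℕ))
    (hTinv : ∀ σ : Equiv.Perm (Fin n), ∀ α ∈ T, permActN σ α ∈ T)
    (Trep : Finset (Fin n → ℕ)) (hsub : Trep ⊆ T)
    (hreps : ∀ α ∈ T, ∃! r, r ∈ Trep ∧ ∃ σ : Equiv.Perm (Fin n), permActN σ r = α)
    (cc : (Fin n → ℕ) → ℝ) (k : ℕ) (hk : n ≤ k)
    (pad : (m : ℕ) → (Fin n → ℕ) → (Fin m → ℕ))
    (hpad : ∀ m (lam : Fin n → ℕ) (i : Fin m),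
      pad m lam i = if h : (i : ℕ) < n then lam ⟨i, h⟩ else 0)
    (p : (m : ℕ) → (Fin m → ℝ) → ℝ)
    (hp : ∀ m (x : Fin m → ℝ), p m x = ∑ lam ∈ Trep, cc lam * mmean (pad m lam) x)
    (S : (m : ℕ) → Finset (Fin m → ℕ))
    (hS : ∀ m, S m = Trep.biUnion (fun lam =>
      Finset.univ.image (fun σ : Equiv.Perm (Fin m) => permActN σ (pad m lam)))) :
    (IsSONC (S k) (p k) → IsSONC (S (k+1)) (p (k+1))) ∧
    ((∀ x, 0 ≤ p k x) → (∀ x, 0 ≤ p (k+1) x)) := by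
  classical
  have hsnoc : ∀ lam : Fin n → ℕ, pad (k+1) lam
      = permActN (finRotate (k+1))⁻¹ (Fin.cons 0 (pad k lam)) := by
    intro lam
    have h1 : pad (k+1) lam = Fin.snoc (pad k lam) 0 := by
      funext i
      induction i using Fin.lastCases with
      | last =>
          rw [hpad, Fin.snoc_last, dif_neg]
          rw [Fin.val_last]; omega
      | cast j =>
          rw [hpad, Fin.snoc_castSucc, hpad]
          simp [Fin.coe_castSucc]
    rw [h1, Fin.snoc_eq_cons_rotate]
    funext i
    simp [permActN, inv_inv]
  have hcons : ∀ lam : Fin n → ℕ,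
      (Fin.cons 0 (pad k lam) : Fin (k+1) → ℕ)
        = permActN (finRotate (k+1)) (pad (k+1) lam) := by
    intro lam
    rw [hsnoc lam, permActN_inv_cancel]
  have hSmem : ∀ (m : ℕ) (v : Fin m → ℕ), v ∈ S m ↔
      ∃ lam ∈ Trep, ∃ σ : Equiv.Perm (Fin m), permActN σ (pad m lam) = v := by
    intro m v
    rw [hS m]
    simp [Finset.mem_biUnion, Finset.mem_image]
  have hEmem : ∀ (p' : Fin (k+1)) (β : Fin k → ℕ), β ∈ S k → embE p' β ∈ S (k+1) := by
    intro p' β hβ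
    obtain ⟨lam, hlam, σ, rfl⟩ := (hSmem k β).mp hβ
    refine (hSmem (k+1) _).mpr ⟨lam, hlam,
      Equiv.swap 0 p' * Equiv.Perm.decomposeFin.symm (0, σ) * finRotate (k+1), ?_⟩
    rw [← permActN_mul, ← permActN_mul, ← hcons lam, ← permActN_cons_zero,
      ← embE_eq_permActN]
  have hstep : ∀ x : Fin (k+1) → ℝ, p (k+1) x
      = (1/((k:ℝ)+1)) * ∑ p' : Fin (k+1), p k (dropZ p' x) := by
    intro x
    rw [hp (k+1) x]
    have hlam : ∀ lam ∈ Trep, cc lam * mmean (pad (k+1) lam) x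
        = (1/((k:ℝ)+1)) * ∑ p' : Fin (k+1), cc lam * mmean (pad k lam) (dropZ p' x) := by
      intro lam _
      rw [hsnoc lam, mmean_permActN, mmean_cons_zero, ← Finset.mul_sum]
      ring
    rw [Finset.sum_congr rfl hlam, ← Finset.mul_sum]
    congr 1
    rw [Finset.sum_comm]
    exact Finset.sum_congr rfl fun p' _ => (hp k (dropZ p' x)).symm
  constructor
  · rintro ⟨g, hg, hgsum⟩
    refine ⟨fun β' => fun x => ∑ q ∈ (Finset.univ ×ˢ S k).filter
        (fun q => embE q.1 q.2 = β'), (1/((k:ℝ)+1)) * g q.2 (dropZ q.1 x), ?_, ?_⟩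
    · intro β' hβ'
      apply IsAG_sum
      intro q hq
      rw [Finset.mem_filter] at hq
      obtain ⟨hq1, hq2⟩ := hq
      have hβmem : q.2 ∈ S k := (Finset.mem_product.mp hq1).2
      subst hq2
      exact IsAG_comp (S k) (S (k+1)) (embE q.1) (dropZ q.1)
        (fun α hα => hEmem q.1 α hα) (embE_injective q.1)
        (fun α x => monom_embE q.1 α x) (fun α h => embE_even q.1 α h)
        q.2 hβmem (g q.2) (hg q.2 hβmem) _ (by positivity)
    · intro x
      rw [hstep x]
      have hmaps : ∀ q ∈ Finset.univ ×ˢ S k, embE q.1 q.2 ∈ S (k+1) := fun q hq =>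
        hEmem q.1 q.2 (Finset.mem_product.mp hq).2
      dsimp only
      rw [Finset.sum_fiberwise_of_maps_to hmaps
        (fun q => (1/((k:ℝ)+1)) * g q.2 (dropZ q.1 x)), Finset.sum_product,
        Finset.mul_sum]
      refine Finset.sum_congr rfl fun p' _ => ?_
      rw [← Finset.mul_sum, ← hgsum (dropZ p' x)]
  · intro hpk x
    rw [hstep x]
    have ht : (0:ℝ) ≤ 1/((k:ℝ)+1) := by positivity
    exact mul_nonneg ht (Finset.sum_nonneg fun p' _ => hpk (dropZ p' x))
end
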